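/- arXiv:1912.10524 — 6 statements merged into one kernel-verified Lean document; each statement's English description precedes it below -/
import Mathlib

section
/- Let G be a finitely generated group fitting in a short exact sequence 1 → K → G → Γ → 1 with K finitely generated, and suppose b₁(G) > b₁(Γ) > 0 (where b₁ denotes the first Betti number, i.e. the rank of the abelianization). Then G algebraically fibers: there exists a surjective group homomorphism φ: G → ℤ whose kernel is finitely generated. -/
universe u

noncomputable def b1 (G : Type*) [Group G] : Cardinal :=
  Module.rank ℤ (Additive (Abelianization G))

namespace Stmt0

open Subgroup

variable {G : Type u} [Group G]

/-- additive value of a character -/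
def cval (χ : G →* Multiplicative ℤ) (g : G) : ℤ := Multiplicative.toAdd (χ g)

lemma cval_mul (χ : G →* Multiplicative ℤ) (a b : G) :
    cval χ (a * b) = cval χ a + cval χ b := by
  simp [cval]

lemma cval_one (χ : G →* Multiplicative ℤ) : cval χ 1 = 0 := by simp [cval]

lemma cval_inv (χ : G →* Multiplicative ℤ) (a : G) : cval χ a⁻¹ = - cval χ a := by
  simp [cval]

lemma cval_zpow (χ : G →* Multiplicative ℤ) (g : G) (n : ℤ) :
    cval χ (g ^ n) = n * cval χ g := by
  simp [cval, toAdd_zpow, smul_eq_mul, mul_comm]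

lemma cval_conj (χ : G →* Multiplicative ℤ) (g x : G) :
    cval χ (g * x * g⁻¹) = cval χ x := by
  simp [cval_mul, cval_inv]

lemma mem_ker_iff_cval (χ : G →* Multiplicative ℤ) (g : G) :
    g ∈ χ.ker ↔ cval χ g = 0 := by
  rw [MonoidHom.mem_ker, cval]
  constructor
  · intro h; simp [h]
  · intro h
    have : Multiplicative.ofAdd (Multiplicative.toAdd (χ g)) = Multiplicative.ofAdd 0 := by
      rw [h]
    simpa using this

/-- build a character from an additive-valued function -/
def mkChar (h : G → ℤ) (hh : ∀ a b, h (a * b) = h a + h b) : G →* Multiplicative ℤ where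
  toFun g := Multiplicative.ofAdd (h g)
  map_one' := by
    have h1 : h 1 = h 1 + h 1 := by simpa using hh 1 1
    have : h 1 = 0 := by omega
    simp [this]
  map_mul' a b := by
    simp [hh a b]

lemma cval_mkChar (h : G → ℤ) (hh : ∀ a b, h (a * b) = h a + h b) (g : G) :
    cval (mkChar h hh) g = h g := rfl

/-- rescaling a nontrivial character to a surjective one with the same kernel -/
lemma rescale (χ : G →* Multiplicative ℤ) (g₁ : G) (h1 : cval χ g₁ ≠ 0) :
    ∃ φ : G →* Multiplicative ℤ, Function.Surjective φ ∧ φ.ker = χ.ker := by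
  -- the image of cval χ as an additive subgroup of ℤ
  let T : AddSubgroup ℤ :=
    { carrier := Set.range (cval χ)
      zero_mem' := ⟨1, cval_one χ⟩
      add_mem' := by
        rintro _ _ ⟨a, rfl⟩ ⟨b, rfl⟩
        exact ⟨a * b, cval_mul χ a b⟩
      neg_mem' := by
        rintro _ ⟨a, rfl⟩
        exact ⟨a⁻¹, cval_inv χ a⟩ }
  obtain ⟨c, hc⟩ := Int.subgroup_cyclic T
  have hmem : ∀ x, x ∈ T ↔ ∃ n : ℤ, n * c = x := by
    intro x
    rw [hc, AddSubgroup.mem_closure_singleton]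
    simp [mul_comm]
  have hdvd : ∀ g : G, ∃ n : ℤ, n * c = cval χ g := fun g => (hmem _).mp ⟨g, rfl⟩
  have hc0 : c ≠ 0 := by
    rintro rfl
    obtain ⟨n, hn⟩ := hdvd g₁
    simp at hn
    exact h1 hn.symm
  have hadd : ∀ a b : G, cval χ (a * b) / c = cval χ a / c + cval χ b / c := by
    intro a b
    obtain ⟨n, hn⟩ := hdvd a
    obtain ⟨m, hm⟩ := hdvd b
    rw [cval_mul, ← hn, ← hm, ← add_mul]
    rw [Int.mul_ediv_cancel _ hc0, Int.mul_ediv_cancel _ hc0, Int.mul_ediv_cancel _ hc0]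
  refine ⟨mkChar (fun g => cval χ g / c) hadd, ?_, ?_⟩
  · -- surjective
    have hcT : c ∈ T := by
      rw [hc]; exact AddSubgroup.mem_closure_singleton_self c
    obtain ⟨gc, hgc⟩ := hcT
    intro y
    refine ⟨gc ^ (Multiplicative.toAdd y), ?_⟩
    have : cval χ (gc ^ (Multiplicative.toAdd y)) = (Multiplicative.toAdd y) * c := by
      rw [cval_zpow, hgc]
    have h2 : cval (mkChar (fun g => cval χ g / c) hadd) (gc ^ (Multiplicative.toAdd y))
        = Multiplicative.toAdd y := by
      rw [cval_mkChar, this, Int.mul_ediv_cancel _ hc0]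
    exact Multiplicative.toAdd.injective h2
  · -- same kernel
    ext g
    rw [mem_ker_iff_cval, mem_ker_iff_cval, cval_mkChar]
    obtain ⟨n, hn⟩ := hdvd g
    rw [← hn, Int.mul_ediv_cancel _ hc0]
    constructor
    · rintro rfl; ring
    · intro h
      rcases mul_eq_zero.mp h with h' | h'
      · exact h'
      · exact absurd h' hc0


/-- From a non-torsion element of a f.g. abelian group, get a ℤ-valued functional
that does not vanish on it. -/
lemma exists_hom_ne_zero {M : Type u} [AddCommGroup M] [AddGroup.FG M] (x : M)
    (hx : ∀ n : ℤ, n ≠ 0 → n • x ≠ 0) : ∃ φ : M →+ ℤ, φ x ≠ 0 := by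
  haveI : Module.Finite ℤ M := Module.Finite.iff_addGroup_fg.mpr ‹_›
  let T := Submodule.torsion ℤ M
  let F := M ⧸ T
  haveI : Module.Finite ℤ F := Module.Finite.quotient ℤ _
  haveI : Module.IsTorsionFree ℤ F := Submodule.QuotientTorsion.instIsTorsionFree
  haveI : Module.Free ℤ F := Module.free_of_finite_type_torsion_free'
  let b := Module.Free.chooseBasis ℤ F
  have hxT : x ∉ T := by
    intro hxT
    rw [Submodule.mem_torsion_iff] at hxT
    obtain ⟨a, ha⟩ := hxT
    exact hx a (nonZeroDivisors.coe_ne_zero a) ha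
  have hx0 : T.mkQ x ≠ 0 := by
    intro h
    exact hxT ((Submodule.Quotient.mk_eq_zero T).mp h)
  have hrepr : b.repr (T.mkQ x) ≠ 0 := by
    intro h
    have h3 := congrArg b.repr.symm h
    simp only [map_zero, LinearEquiv.symm_apply_apply] at h3
    exact hx0 h3
  obtain ⟨j, hj⟩ := Finsupp.ne_iff.mp hrepr
  refine ⟨((b.coord j).comp T.mkQ).toAddMonoidHom, ?_⟩
  change b.coord j (T.mkQ x) ≠ 0
  rw [Module.Basis.coord_apply]
  exact hj

/-- rank comparison along a map with torsion kernel -/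
lemma rank_le_of_torsion_ker {M N : Type u} [AddCommGroup M] [AddCommGroup N]
    (g : M →+ N) (hg : ∀ x : M, g x = 0 → ∃ n : ℤ, n ≠ 0 ∧ n • x = 0) :
    Module.rank ℤ M ≤ Module.rank ℤ N := by
  rw [Module.rank_def]
  apply ciSup_le'
  rintro ⟨s, li⟩
  have li : LinearIndependent ℤ (fun i : s => (i : M)) := li
  have li' : LinearIndependent ℤ (fun i : s => g.toIntLinearMap (i : M)) := by
    rw [linearIndependent_iff'] at li ⊢
    intro t f hsum j hj
    have hker : g.toIntLinearMap (∑ i ∈ t, f i • (i : M)) = 0 := by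
      rw [map_sum]
      simpa using hsum
    obtain ⟨n, hn0, hn⟩ := hg _ hker
    have : ∑ i ∈ t, (n * f i) • (i : M) = 0 := by
      calc ∑ i ∈ t, (n * f i) • (i : M) = n • ∑ i ∈ t, f i • (i : M) := by
            rw [Finset.smul_sum]
            exact Finset.sum_congr rfl fun i _ => mul_smul n (f i) _
        _ = 0 := hn
    have := li t (fun i => n * f i) this j hj
    rcases mul_eq_zero.mp this with h | h
    · exact absurd h hn0
    · exact h
  simpa using li'.cardinal_le_rank


section Exist

variable {K G Γ : Type u} [Group K] [Group G] [Group Γ]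

lemma of_surjective : Function.Surjective (Abelianization.of : G → Abelianization G) := by
  intro x
  induction x using Quotient.inductionOn' with
  | h g => exact ⟨g, rfl⟩

lemma of_eq_one_iff (x : G) : (Abelianization.of x : Abelianization G) = 1 ↔ x ∈ commutator G :=
  QuotientGroup.eq_one_iff x

lemma ker_abmap (i : K →* G) (f : G →* Γ)
    (hf : Function.Surjective f) (hex : i.range = f.ker) (x : Abelianization G)
    (hx : Abelianization.map f x = 1) : ∃ k : K, Abelianization.of (i k) = x := by
  obtain ⟨w, rfl⟩ := of_surjective x
  rw [Abelianization.map_of] at hx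
  have hfw : f w ∈ commutator Γ := (of_eq_one_iff (f w)).mp hx
  have hcomm : commutator Γ = Subgroup.map f (commutator G) := by
    rw [commutator_def, commutator_def, Subgroup.map_commutator,
      Subgroup.map_top_of_surjective f hf]
  rw [hcomm] at hfw
  obtain ⟨c, hc, hfc⟩ := hfw
  have hu : w * c⁻¹ ∈ i.range := by
    rw [hex, MonoidHom.mem_ker, map_mul, map_inv, hfc, mul_inv_cancel]
  obtain ⟨k, hk⟩ := hu
  refine ⟨k, ?_⟩
  have hc1 : (Abelianization.of c : Abelianization G) = 1 :=
    Abelianization.commutator_subset_ker (Abelianization.of) hc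
  rw [hk, map_mul, map_inv, hc1]
  simp

lemma exists_theta (hG : Group.FG G) (i : K →* G) (f : G →* Γ)
    (hf : Function.Surjective f) (hex : i.range = f.ker) (hb1 : b1 Γ < b1 G) :
    ∃ θ : G →* Multiplicative ℤ, ∃ k : K, cval θ (i k) ≠ 0 := by
  by_contra hcon
  push_neg at hcon
  haveI : Group.FG G := hG
  haveI : Group.FG (Abelianization G) := Group.fg_of_surjective of_surjective
  -- every of(i k) is torsion
  have htor : ∀ k : K, ∃ n : ℤ, n ≠ 0 ∧
      n • (Additive.ofMul (Abelianization.of (i k))) = 0 := by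
    intro k
    by_contra htk
    push_neg at htk
    obtain ⟨φ, hφ⟩ := exists_hom_ne_zero (Additive.ofMul (Abelianization.of (i k)))
      (fun n hn => htk n hn)
    have hadd : ∀ a b : G, φ (Additive.ofMul (Abelianization.of (a * b)))
        = φ (Additive.ofMul (Abelianization.of a)) + φ (Additive.ofMul (Abelianization.of b)) := by
      intro a b
      rw [map_mul]
      exact φ.map_add _ _
    exact absurd (hcon (mkChar (fun g => φ (Additive.ofMul (Abelianization.of g))) hadd) k)
      (by rw [cval_mkChar]; exact hφ)
  -- the induced map on abelianizations has torsion kernel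
  have hrank : Module.rank ℤ (Additive (Abelianization G)) ≤
      Module.rank ℤ (Additive (Abelianization Γ)) := by
    apply rank_le_of_torsion_ker (MonoidHom.toAdditive (Abelianization.map f))
    intro x hx
    have hx' : Abelianization.map f (Additive.toMul x) = 1 := congrArg Additive.toMul hx
    obtain ⟨k, hk⟩ := ker_abmap i f hf hex (Additive.toMul x) hx'
    obtain ⟨n, hn0, hn⟩ := htor k
    refine ⟨n, hn0, ?_⟩
    rw [← hn]
    congr 1
    rw [hk]
    rfl
  exact absurd hrank (not_le.mpr hb1)

lemma exists_psi (hΓ : Group.FG Γ) (hb0 : 0 < b1 Γ) :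
    ∃ ψ : Γ →* Multiplicative ℤ, Function.Surjective ψ := by
  haveI : Group.FG Γ := hΓ
  haveI : Group.FG (Abelianization Γ) := Group.fg_of_surjective of_surjective
  have hb0' : Module.rank ℤ (Additive (Abelianization Γ)) ≠ 0 := by
    intro h
    rw [show b1 Γ = Module.rank ℤ (Additive (Abelianization Γ)) from rfl] at hb0
    rw [h] at hb0
    exact lt_irrefl 0 hb0
  have : ¬(∀ x : Additive (Abelianization Γ), ∃ a : ℤ, a ≠ 0 ∧ a • x = 0) := by
    intro h
    exact hb0' (rank_eq_zero_iff.mpr h)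
  push_neg at this
  obtain ⟨x, hx⟩ := this
  obtain ⟨φ, hφ⟩ := exists_hom_ne_zero x (fun n hn h => (hx n hn) h)
  obtain ⟨γ₁, hγ₁⟩ := of_surjective (Additive.toMul x)
  have hadd : ∀ a b : Γ, φ (Additive.ofMul (Abelianization.of (a * b)))
      = φ (Additive.ofMul (Abelianization.of a)) + φ (Additive.ofMul (Abelianization.of b)) := by
    intro a b
    rw [map_mul]
    exact φ.map_add _ _
  have hne : cval (mkChar (fun g => φ (Additive.ofMul (Abelianization.of g))) hadd) γ₁ ≠ 0 := by
    rw [cval_mkChar]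
    rw [hγ₁]
    simpa using hφ
  obtain ⟨ψ, hsurj, _⟩ := rescale _ γ₁ hne
  exact ⟨ψ, hsurj⟩

end Exist



/-- conjugates of elements of `Q` by powers `τ^m`, `a ≤ m ≤ b` -/
def atomSet (τ : G) (Q : Set G) (a b : ℤ) : Set G :=
  (fun p : ℤ × G => τ ^ p.1 * p.2 * τ ^ (-p.1)) '' (Set.Icc a b ×ˢ Q)

/-- the element `τ^n (τ^{-L} s) τ^{-n}` -/
def omg (τ s : G) (L : ℕ) (n : ℤ) : G := τ ^ n * (τ ^ (-(L : ℤ)) * s) * τ ^ (-n)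

def omegaSet (τ s : G) (L : ℕ) (a b : ℤ) : Set G :=
  (fun n : ℤ => omg τ s L n) '' Set.Icc a b

lemma atom_mem_atomSet (τ : G) {Q : Set G} {q : G} (hq : q ∈ Q) {a b m : ℤ}
    (h1 : a ≤ m) (h2 : m ≤ b) : τ ^ m * q * τ ^ (-m) ∈ atomSet τ Q a b :=
  ⟨(m, q), ⟨Set.mem_Icc.mpr ⟨h1, h2⟩, hq⟩, rfl⟩

lemma mem_atomSet_iff {τ : G} {Q : Set G} {a b : ℤ} {x : G} :
    x ∈ atomSet τ Q a b ↔ ∃ m q, q ∈ Q ∧ a ≤ m ∧ m ≤ b ∧ x = τ ^ m * q * τ ^ (-m) := by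
  constructor
  · rintro ⟨⟨m, q⟩, ⟨hm, hq⟩, rfl⟩
    exact ⟨m, q, hq, (Set.mem_Icc.mp hm).1, (Set.mem_Icc.mp hm).2, rfl⟩
  · rintro ⟨m, q, hq, h1, h2, rfl⟩
    exact atom_mem_atomSet τ hq h1 h2

lemma omg_mem_omegaSet (τ s : G) (L : ℕ) {a b n : ℤ} (h1 : a ≤ n) (h2 : n ≤ b) :
    omg τ s L n ∈ omegaSet τ s L a b :=
  ⟨n, Set.mem_Icc.mpr ⟨h1, h2⟩, rfl⟩

lemma atomSet_finite (τ : G) {Q : Set G} (hQ : Q.Finite) (a b : ℤ) :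
    (atomSet τ Q a b).Finite :=
  ((Set.finite_Icc a b).prod hQ).image _

lemma omegaSet_finite (τ s : G) (L : ℕ) (a b : ℤ) : (omegaSet τ s L a b).Finite :=
  (Set.finite_Icc a b).image _

/-- conjugation by `τ^k` shifts atom windows -/
lemma shift_mem_closure (τ : G) (Q : Set G) (a b k : ℤ) (x : G)
    (hx : x ∈ Subgroup.closure (atomSet τ Q a b)) :
    τ ^ k * x * τ ^ (-k) ∈ Subgroup.closure (atomSet τ Q (a + k) (b + k)) := by
  induction hx using Subgroup.closure_induction with
  | mem y hy =>
    obtain ⟨m, q, hq, h1, h2, rfl⟩ := mem_atomSet_iff.mp hy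
    have hid : τ ^ k * (τ ^ m * q * τ ^ (-m)) * τ ^ (-k)
        = τ ^ (m + k) * q * τ ^ (-(m + k)) := by group
    rw [hid]
    exact Subgroup.subset_closure (atom_mem_atomSet τ hq (by omega) (by omega))
  | one => simpa using Subgroup.one_mem _
  | mul y z hy hz ihy ihz =>
    have hid : τ ^ k * (y * z) * τ ^ (-k)
        = (τ ^ k * y * τ ^ (-k)) * (τ ^ k * z * τ ^ (-k)) := by group
    rw [hid]
    exact Subgroup.mul_mem _ ihy ihz
  | inv y hy ihy =>
    have hid : τ ^ k * y⁻¹ * τ ^ (-k) = (τ ^ k * y * τ ^ (-k))⁻¹ := by group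
    rw [hid]
    exact Subgroup.inv_mem _ ihy

/-- The core combinatorial lemma: all conjugates `τ^m q τ^{-m}` lie in the subgroup
generated by a finite window of atoms together with a finite window of `ω`'s. -/
lemma core (τ s : G) (Q : Set G) (R : ℕ)
    (hα : ∀ q ∈ Q, s * q * s⁻¹ ∈ Subgroup.closure (atomSet τ Q (-(R : ℤ)) R))
    (hα' : ∀ q ∈ Q, s⁻¹ * q * s ∈ Subgroup.closure (atomSet τ Q (-(R : ℤ)) R))
    (hab : τ⁻¹ * (s * τ * s⁻¹) ∈ Subgroup.closure (atomSet τ Q (-(R : ℤ)) R))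
    (hbb : τ⁻¹ * (s⁻¹ * τ * s) ∈ Subgroup.closure (atomSet τ Q (-(R : ℤ)) R)) :
    ∀ q ∈ Q, ∀ m : ℤ, τ ^ m * q * τ ^ (-m) ∈
      Subgroup.closure (atomSet τ Q (-(2 * (R : ℤ) + 1)) (R + 1)
        ∪ omegaSet τ s (R + 1) (-((R : ℤ) + 1)) (R + 1)) := by
  set L : ℕ := R + 1 with hL
  have hLR : (L : ℤ) = (R : ℤ) + 1 := by simp [hL]
  set B := Subgroup.closure (atomSet τ Q (-(2 * (R : ℤ) + 1)) (R + 1)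
        ∪ omegaSet τ s (R + 1) (-((R : ℤ) + 1)) (R + 1)) with hB
  -- atoms in a window all of whose conjugates are known to lie in B
  have hCB : ∀ (a b : ℤ),
      (∀ q ∈ Q, ∀ m : ℤ, a ≤ m → m ≤ b → τ ^ m * q * τ ^ (-m) ∈ B) →
      ∀ x ∈ Subgroup.closure (atomSet τ Q a b), x ∈ B := by
    intro a b hknown x hx
    refine (Subgroup.closure_le B).mpr ?_ hx
    rintro y hy
    obtain ⟨m, q, hq, h1, h2, rfl⟩ := mem_atomSet_iff.mp hy
    exact hknown q hq m h1 h2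
  have main : ∀ j : ℕ,
      (∀ q ∈ Q, ∀ m : ℤ, -((L : ℤ) + R + j) ≤ m → m ≤ (L : ℤ) + j →
        τ ^ m * q * τ ^ (-m) ∈ B) ∧
      (∀ n : ℤ, -((L : ℤ) + j) ≤ n → n ≤ (L : ℤ) + j → omg τ s L n ∈ B) := by
    intro j
    induction j with
    | zero =>
      constructor
      · intro q hq m h1 h2
        apply Subgroup.subset_closure
        apply Set.mem_union_left
        exact atom_mem_atomSet τ hq (by omega) (by omega)
      · intro n h1 h2
        apply Subgroup.subset_closure
        apply Set.mem_union_right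
        exact omg_mem_omegaSet τ s L (by omega) (by omega)
    | succ j ih =>
      obtain ⟨IHa, IHw⟩ := ih
      -- new ω at the top
      have hwUp : omg τ s L ((L : ℤ) + j + 1) ∈ B := by
        have hid : omg τ s L ((L : ℤ) + j + 1)
            = (τ ^ ((j : ℤ) + 1) * (τ⁻¹ * (s * τ * s⁻¹))⁻¹ * τ ^ (-((j : ℤ) + 1)))
              * omg τ s L ((L : ℤ) + j) := by
          unfold omg
          rw [hLR]
          group
        rw [hid]
        refine Subgroup.mul_mem _ ?_ (IHw ((L : ℤ) + j) (by omega) (by omega))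
        refine hCB (-(R : ℤ) + ((j : ℤ) + 1)) ((R : ℤ) + ((j : ℤ) + 1)) ?_ _
          (shift_mem_closure τ Q _ _ _ _ (Subgroup.inv_mem _ hab))
        intro q hq m h1 h2
        exact IHa q hq m (by omega) (by omega)
      -- new ω at the bottom
      have hwDown : omg τ s L (-((L : ℤ) + j) - 1) ∈ B := by
        have hid : omg τ s L (-((L : ℤ) + j) - 1)
            = omg τ s L (-((L : ℤ) + j))
              * (τ ^ (-((L : ℤ) + j)) * (τ⁻¹ * (s⁻¹ * τ * s))⁻¹ * τ ^ (-(-((L : ℤ) + j)))) := by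
          unfold omg
          rw [hLR]
          group
        rw [hid]
        refine Subgroup.mul_mem _ (IHw (-((L : ℤ) + j)) (by omega) (by omega)) ?_
        refine hCB (-(R : ℤ) + -((L : ℤ) + j)) ((R : ℤ) + -((L : ℤ) + j)) ?_ _
          (shift_mem_closure τ Q _ _ _ _ (Subgroup.inv_mem _ hbb))
        intro q hq m h1 h2
        exact IHa q hq m (by omega) (by omega)
      have hwAll : ∀ n : ℤ, -((L : ℤ) + (j + 1)) ≤ n → n ≤ (L : ℤ) + (j + 1) →
          omg τ s L n ∈ B := by
        intro n h1 h2
        push_cast at h1 h2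
        rcases eq_or_lt_of_le h2 with h2' | h2'
        · rw [show n = (L : ℤ) + j + 1 by omega]
          exact hwUp
        rcases eq_or_lt_of_le h1 with h1' | h1'
        · rw [show n = -((L : ℤ) + j) - 1 by omega]
          exact hwDown
        exact IHw n (by omega) (by omega)
      constructor
      · -- new atoms
        intro q hq m h1 h2
        push_cast at h1 h2
        rcases eq_or_lt_of_le h2 with h2' | h2'
        · -- top frontier : m = L + j + 1
          have hm : m = (L : ℤ) + j + 1 := by omega
          subst hm
          have hid : τ ^ ((L : ℤ) + j + 1) * q * τ ^ (-((L : ℤ) + j + 1))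
              = (omg τ s L ((L : ℤ) + j + 1))⁻¹
                * (τ ^ ((j : ℤ) + 1) * (s * q * s⁻¹) * τ ^ (-((j : ℤ) + 1)))
                * omg τ s L ((L : ℤ) + j + 1) := by
            unfold omg
            rw [hLR]
            group
          rw [hid]
          refine Subgroup.mul_mem _ (Subgroup.mul_mem _ (Subgroup.inv_mem _ hwUp) ?_) hwUp
          refine hCB (-(R : ℤ) + ((j : ℤ) + 1)) ((R : ℤ) + ((j : ℤ) + 1)) ?_ _
            (shift_mem_closure τ Q _ _ _ _ (hα q hq))
          intro q' hq' m' h1' h2'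
          exact IHa q' hq' m' (by omega) (by omega)
        rcases eq_or_lt_of_le h1 with h1' | h1'
        · -- bottom frontier : m = -(L + R + j) - 1
          have hm : m = -((L : ℤ) + R + j) - 1 := by omega
          subst hm
          have hid : τ ^ (-((L : ℤ) + R + j) - 1) * q * τ ^ (-(-((L : ℤ) + R + j) - 1))
              = omg τ s L (-((R : ℤ) + j + 1))
                * (τ ^ (-((R : ℤ) + j + 1)) * (s⁻¹ * q * s) * τ ^ (-(-((R : ℤ) + j + 1))))
                * (omg τ s L (-((R : ℤ) + j + 1)))⁻¹ := by
            unfold omg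
            rw [hLR]
            group
          rw [hid]
          have hw : omg τ s L (-((R : ℤ) + j + 1)) ∈ B :=
            hwAll (-((R : ℤ) + j + 1)) (by omega) (by omega)
          refine Subgroup.mul_mem _ (Subgroup.mul_mem _ hw ?_) (Subgroup.inv_mem _ hw)
          refine hCB (-(R : ℤ) + -((R : ℤ) + j + 1)) ((R : ℤ) + -((R : ℤ) + j + 1)) ?_ _
            (shift_mem_closure τ Q _ _ _ _ (hα' q hq))
          intro q' hq' m' h1' h2'
          exact IHa q' hq' m' (by omega) (by omega)
        · exact IHa q hq m (by omega) (by omega)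
      · exact hwAll
  intro q hq m
  have h := (main m.natAbs).1 q hq m (by omega) (by omega)
  exact h



/-- all conjugates of elements of `Q` by powers of `τ` -/
def atomSetAll (τ : G) (Q : Set G) : Set G :=
  {y | ∃ q ∈ Q, ∃ m : ℤ, y = τ ^ m * q * τ ^ (-m)}

lemma atomSet_subset_all (τ : G) (Q : Set G) (a b : ℤ) :
    atomSet τ Q a b ⊆ atomSetAll τ Q := by
  rintro x ⟨⟨m, q⟩, ⟨_, hq⟩, rfl⟩
  exact ⟨q, hq, m, rfl⟩

lemma atomSet_mono (τ : G) (Q : Set G) {a b a' b' : ℤ} (ha : a' ≤ a) (hb : b ≤ b') :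
    atomSet τ Q a b ⊆ atomSet τ Q a' b' := by
  rintro x ⟨⟨m, q⟩, ⟨hm, hq⟩, rfl⟩
  rw [Set.mem_Icc] at hm
  exact ⟨(m, q), ⟨Set.mem_Icc.mpr ⟨by omega, by omega⟩, hq⟩, rfl⟩

lemma shift_all (τ : G) (Q : Set G) (k : ℤ) (x : G)
    (hx : x ∈ Subgroup.closure (atomSetAll τ Q)) :
    τ ^ k * x * τ ^ (-k) ∈ Subgroup.closure (atomSetAll τ Q) := by
  induction hx using Subgroup.closure_induction with
  | mem y hy =>
    obtain ⟨q, hq, m, rfl⟩ := hy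
    have hid : τ ^ k * (τ ^ m * q * τ ^ (-m)) * τ ^ (-k)
        = τ ^ (m + k) * q * τ ^ (-(m + k)) := by group
    rw [hid]
    exact Subgroup.subset_closure ⟨q, hq, m + k, rfl⟩
  | one => simpa using Subgroup.one_mem _
  | mul y z hy hz ihy ihz =>
    have hid : τ ^ k * (y * z) * τ ^ (-k)
        = (τ ^ k * y * τ ^ (-k)) * (τ ^ k * z * τ ^ (-k)) := by group
    rw [hid]
    exact Subgroup.mul_mem _ ihy ihz
  | inv y hy ihy =>
    have hid : τ ^ k * y⁻¹ * τ ^ (-k) = (τ ^ k * y * τ ^ (-k))⁻¹ := by group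
    rw [hid]
    exact Subgroup.inv_mem _ ihy

lemma window_of_mem_all (τ : G) (Q : Set G) (x : G)
    (hx : x ∈ Subgroup.closure (atomSetAll τ Q)) :
    ∃ R : ℕ, x ∈ Subgroup.closure (atomSet τ Q (-(R : ℤ)) R) := by
  induction hx using Subgroup.closure_induction with
  | mem y hy =>
    obtain ⟨q, hq, m, rfl⟩ := hy
    refine ⟨m.natAbs, Subgroup.subset_closure ?_⟩
    exact ⟨(m, q), ⟨Set.mem_Icc.mpr ⟨by omega, by omega⟩, hq⟩, rfl⟩
  | one => exact ⟨0, Subgroup.one_mem _⟩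
  | mul y z hy hz ihy ihz =>
    obtain ⟨R₁, h₁⟩ := ihy
    obtain ⟨R₂, h₂⟩ := ihz
    refine ⟨max R₁ R₂, Subgroup.mul_mem _ ?_ ?_⟩
    · exact Subgroup.closure_mono (atomSet_mono τ Q (by omega) (by omega)) h₁
    · exact Subgroup.closure_mono (atomSet_mono τ Q (by omega) (by omega)) h₂
  | inv y hy ihy =>
    obtain ⟨R₁, h₁⟩ := ihy
    exact ⟨R₁, Subgroup.inv_mem _ h₁⟩

/-- elements of the subgroup generated by `S` that are killed by `χ` lie in the
subgroup generated by all `τ`-conjugates of `Q`. -/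
lemma decomp (τ : G) (S Q : Set G) (χ : G →* Multiplicative ℤ) (c : ℤ) (hc : c ≠ 0)
    (hτ : cval χ τ = c)
    (hSQ : ∀ a ∈ S, ∃ q ∈ Q, ∃ j : ℤ, a = q * τ ^ j)
    (hQ0 : ∀ q ∈ Q, cval χ q = 0) :
    ∀ x ∈ Subgroup.closure S, cval χ x = 0 → x ∈ Subgroup.closure (atomSetAll τ Q) := by
  have hall0 : ∀ y ∈ Subgroup.closure (atomSetAll τ Q), cval χ y = 0 := by
    intro y hy
    induction hy using Subgroup.closure_induction with
    | mem z hz =>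
      obtain ⟨q, hq, m, rfl⟩ := hz
      rw [cval_mul, cval_mul, cval_zpow, cval_zpow, hQ0 q hq]
      ring
    | one => simp [cval]
    | mul y z _ _ ihy ihz => rw [cval_mul, ihy, ihz]; ring
    | inv y _ ihy => rw [cval_inv, ihy]; ring
  have key : ∀ x ∈ Subgroup.closure S,
      ∃ y ∈ Subgroup.closure (atomSetAll τ Q), ∃ j : ℤ, x = y * τ ^ j := by
    intro x hx
    induction hx using Subgroup.closure_induction with
    | mem a ha =>
      obtain ⟨q, hq, j, rfl⟩ := hSQ a ha
      exact ⟨q, Subgroup.subset_closure ⟨q, hq, 0, by group⟩, j, rfl⟩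
    | one => exact ⟨1, Subgroup.one_mem _, 0, by group⟩
    | mul a b _ _ iha ihb =>
      obtain ⟨y₁, hy₁, j₁, rfl⟩ := iha
      obtain ⟨y₂, hy₂, j₂, rfl⟩ := ihb
      refine ⟨y₁ * (τ ^ j₁ * y₂ * τ ^ (-j₁)), ?_, j₁ + j₂, by group⟩
      exact Subgroup.mul_mem _ hy₁ (shift_all τ Q j₁ y₂ hy₂)
    | inv a _ iha =>
      obtain ⟨y, hy, j, rfl⟩ := iha
      refine ⟨τ ^ (-j) * y⁻¹ * τ ^ (-(-j)), ?_, -j, by group⟩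
      exact shift_all τ Q (-j) y⁻¹ (Subgroup.inv_mem _ hy)
  intro x hx hx0
  obtain ⟨y, hy, j, rfl⟩ := key x hx
  rw [cval_mul, hall0 y hy, cval_zpow, hτ] at hx0
  have hj : j = 0 := by
    rcases mul_eq_zero.mp (by omega : j * c = 0) with h | h
    · exact h
    · exact absurd h hc
  rw [hj]
  simpa using hy


end Stmt0

open Stmt0 Subgroup

/-- a finitely generated group `G` fitting in an extension
`1 → K → G → Γ → 1` with `K` finitely generated and `b₁(G) > b₁(Γ) > 0`
algebraically fibers. -/
theorem stmt0 {K G Γ : Type u} [Group K] [Group G] [Group Γ]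
    (hG : Group.FG G) (hK : Group.FG K)
    (i : K →* G) (f : G →* Γ)
    (hi : Function.Injective i) (hf : Function.Surjective f)
    (hex : i.range = f.ker)
    (hb1 : b1 Γ < b1 G) (hb0 : 0 < b1 Γ) :
    ∃ φ : G →* Multiplicative ℤ, Function.Surjective φ ∧ φ.ker.FG := by
  classical
  haveI := hG
  haveI := hK
  haveI : Group.FG Γ := Group.fg_of_surjective hf
  obtain ⟨ψ, hψ⟩ := Stmt0.exists_psi ‹Group.FG Γ› hb0
  obtain ⟨θ, k₀, hk₀⟩ := Stmt0.exists_theta hG i f hf hex hb1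
  obtain ⟨γ₁, hγ₁⟩ := hψ (Multiplicative.ofAdd 1)
  obtain ⟨g₀, hg₀⟩ := hf γ₁
  set s : G := g₀ with hs
  -- facts about i.range
  have hkerf : ∀ x ∈ i.range, f x = 1 := by
    intro x hx
    rw [hex] at hx
    exact hx
  have hnormal : ∀ (g x : G), x ∈ i.range → g * x * g⁻¹ ∈ i.range := by
    intro g x hx
    rw [hex] at hx ⊢
    exact f.normal_ker.conj_mem x hx g
  -- the subgroup of values of θ on i.range
  let T : AddSubgroup ℤ :=
    { carrier := {n : ℤ | ∃ x ∈ i.range, cval θ x = n}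
      zero_mem' := ⟨1, Subgroup.one_mem _, cval_one θ⟩
      add_mem' := by
        rintro _ _ ⟨x, hx, rfl⟩ ⟨y, hy, rfl⟩
        exact ⟨x * y, Subgroup.mul_mem _ hx hy, cval_mul θ x y⟩
      neg_mem' := by
        rintro _ ⟨x, hx, rfl⟩
        exact ⟨x⁻¹, Subgroup.inv_mem _ hx, cval_inv θ x⟩ }
  obtain ⟨c, hcT⟩ := Int.subgroup_cyclic T
  have hmemT : ∀ n : ℤ, (∃ x ∈ i.range, cval θ x = n) ↔ ∃ m : ℤ, m * c = n := by
    intro n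
    have : n ∈ T ↔ (∃ x ∈ i.range, cval θ x = n) := Iff.rfl
    rw [← this, hcT, AddSubgroup.mem_closure_singleton]
    simp [mul_comm]
  have hc0 : c ≠ 0 := by
    rintro rfl
    obtain ⟨m, hm⟩ := (hmemT (cval θ (i k₀))).mp ⟨i k₀, ⟨k₀, rfl⟩, rfl⟩
    simp at hm
    exact hk₀ hm.symm
  obtain ⟨τ, hτrange, hτc⟩ : ∃ x ∈ i.range, cval θ x = c :=
    (hmemT c).mpr ⟨1, one_mul c⟩
  have hvals : ∀ x ∈ i.range, ∃ n : ℤ, cval θ x = n * c := by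
    intro x hx
    obtain ⟨m, hm⟩ := (hmemT (cval θ x)).mp ⟨x, hx, rfl⟩
    exact ⟨m, hm.symm⟩
  -- finite generating set of i.range
  have hAfg : (i.range).FG := (Group.fg_iff_subgroup_fg i.range).mp (Group.fg_range i)
  obtain ⟨Sset, hSclosure, hSfinite⟩ := (Subgroup.fg_iff i.range).mp hAfg
  have hSsub : ∀ a ∈ Sset, a ∈ i.range := by
    intro a ha
    rw [← hSclosure]
    exact Subgroup.subset_closure ha
  -- exponents
  let ea : G → ℤ := fun a => if h : a ∈ i.range then Classical.choose (hvals a h) else 0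
  have hea : ∀ a (h : a ∈ i.range), cval θ a = ea a * c := by
    intro a h
    simp only [ea, dif_pos h]
    exact Classical.choose_spec (hvals a h)
  set Q : Set G := (fun a => a * τ ^ (-(ea a))) '' Sset with hQ
  have hQfin : Q.Finite := hSfinite.image _
  have hQrange : ∀ q ∈ Q, q ∈ i.range := by
    rintro q ⟨a, ha, rfl⟩
    exact Subgroup.mul_mem _ (hSsub a ha) (Subgroup.zpow_mem _ hτrange _)
  have hQ0 : ∀ q ∈ Q, cval θ q = 0 := by
    rintro q ⟨a, ha, rfl⟩
    rw [cval_mul, cval_zpow, hτc, hea a (hSsub a ha)]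
    ring
  -- decomposition into the subgroup generated by all atoms
  have hdecomp : ∀ x ∈ i.range, cval θ x = 0 →
      x ∈ Subgroup.closure (atomSetAll τ Q) := by
    intro x hx hx0
    refine decomp τ Sset Q θ c hc0 hτc ?_ hQ0 x (by rw [hSclosure]; exact hx) hx0
    intro a ha
    exact ⟨a * τ ^ (-(ea a)), ⟨a, ha, rfl⟩, ea a, by group⟩
  -- conjugated generators lie in the all-atom subgroup
  have hconj1 : ∀ q ∈ Q, s * q * s⁻¹ ∈ Subgroup.closure (atomSetAll τ Q) := by
    intro q hq
    exact hdecomp _ (hnormal s q (hQrange q hq)) (by rw [cval_conj]; exact hQ0 q hq)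
  have hconj2 : ∀ q ∈ Q, s⁻¹ * q * s ∈ Subgroup.closure (atomSetAll τ Q) := by
    intro q hq
    have h1 : s⁻¹ * q * s = s⁻¹ * q * s⁻¹⁻¹ := by rw [inv_inv]
    rw [h1]
    exact hdecomp _ (hnormal s⁻¹ q (hQrange q hq))
      (by rw [cval_conj]; exact hQ0 q hq)
  have habar : τ⁻¹ * (s * τ * s⁻¹) ∈ Subgroup.closure (atomSetAll τ Q) := by
    refine hdecomp _ (Subgroup.mul_mem _ (Subgroup.inv_mem _ hτrange)
      (hnormal s τ hτrange)) ?_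
    rw [cval_mul, cval_inv, cval_conj, hτc]
    ring
  have hbbar : τ⁻¹ * (s⁻¹ * τ * s) ∈ Subgroup.closure (atomSetAll τ Q) := by
    have h1 : s⁻¹ * τ * s = s⁻¹ * τ * s⁻¹⁻¹ := by rw [inv_inv]
    refine hdecomp _ (Subgroup.mul_mem _ (Subgroup.inv_mem _ hτrange)
      (by rw [h1]; exact hnormal s⁻¹ τ hτrange)) ?_
    rw [cval_mul, cval_inv, h1, cval_conj, hτc]
    ring
  -- common window R
  let r : G → ℕ := fun x => if h : x ∈ Subgroup.closure (atomSetAll τ Q) then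
    Classical.choose (window_of_mem_all τ Q x h) else 0
  have hr : ∀ x (h : x ∈ Subgroup.closure (atomSetAll τ Q)),
      x ∈ Subgroup.closure (atomSet τ Q (-(r x : ℤ)) (r x)) := by
    intro x h
    simp only [r, dif_pos h]
    exact Classical.choose_spec (window_of_mem_all τ Q x h)
  set R : ℕ := ((hQfin.image (fun q => s * q * s⁻¹)).toFinset.sup r)
      + ((hQfin.image (fun q => s⁻¹ * q * s)).toFinset.sup r)
      + r (τ⁻¹ * (s * τ * s⁻¹)) + r (τ⁻¹ * (s⁻¹ * τ * s)) with hR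
  have hwinmono : ∀ (x : G) (R₁ : ℕ), R₁ ≤ R →
      x ∈ Subgroup.closure (atomSet τ Q (-(R₁ : ℤ)) R₁) →
      x ∈ Subgroup.closure (atomSet τ Q (-(R : ℤ)) R) := by
    intro x R₁ hle hx
    refine Subgroup.closure_mono (atomSet_mono τ Q ?_ ?_) hx <;> omega
  have hα : ∀ q ∈ Q, s * q * s⁻¹ ∈ Subgroup.closure (atomSet τ Q (-(R : ℤ)) R) := by
    intro q hq
    refine hwinmono _ (r (s * q * s⁻¹)) ?_ (hr _ (hconj1 q hq))
    have : r (s * q * s⁻¹) ≤ (hQfin.image (fun q => s * q * s⁻¹)).toFinset.sup r := by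
      apply Finset.le_sup
      rw [Set.Finite.mem_toFinset]
      exact ⟨q, hq, rfl⟩
    omega
  have hα' : ∀ q ∈ Q, s⁻¹ * q * s ∈ Subgroup.closure (atomSet τ Q (-(R : ℤ)) R) := by
    intro q hq
    refine hwinmono _ (r (s⁻¹ * q * s)) ?_ (hr _ (hconj2 q hq))
    have : r (s⁻¹ * q * s) ≤ (hQfin.image (fun q => s⁻¹ * q * s)).toFinset.sup r := by
      apply Finset.le_sup
      rw [Set.Finite.mem_toFinset]
      exact ⟨q, hq, rfl⟩
    omega
  have hab : τ⁻¹ * (s * τ * s⁻¹) ∈ Subgroup.closure (atomSet τ Q (-(R : ℤ)) R) :=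
    hwinmono _ _ (by omega) (hr _ habar)
  have hbb : τ⁻¹ * (s⁻¹ * τ * s) ∈ Subgroup.closure (atomSet τ Q (-(R : ℤ)) R) :=
    hwinmono _ _ (by omega) (hr _ hbbar)
  -- the character χ
  set e0 : ℤ := cval θ s with he0
  set M : ℤ := ((R : ℤ) + 1) * c - e0 with hM
  have haddχ : ∀ a b : G, M * cval ψ (f (a * b)) + cval θ (a * b)
      = (M * cval ψ (f a) + cval θ a) + (M * cval ψ (f b) + cval θ b) := by
    intro a b
    rw [map_mul, cval_mul, cval_mul]
    ring
  set χ : G →* Multiplicative ℤ :=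
    mkChar (fun g => M * cval ψ (f g) + cval θ g) haddχ with hχdef
  have hχ : ∀ g, cval χ g = M * cval ψ (f g) + cval θ g := fun g => cval_mkChar _ _ g
  have hχrange : ∀ x ∈ i.range, cval χ x = cval θ x := by
    intro x hx
    rw [hχ, hkerf x hx, cval_one]
    ring
  have hχτ : cval χ τ = c := by rw [hχrange τ hτrange, hτc]
  have hχs : cval χ s = ((R : ℤ) + 1) * c := by
    have h1 : cval ψ (f s) = 1 := by
      rw [hg₀]
      simp [cval, hγ₁]
    rw [hχ, h1, hM]
    ring
  -- the core combinatorial result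
  have hcore := core τ s Q R hα hα' hab hbb
  -- generators of B lie in ker χ
  have hatomker : ∀ x ∈ atomSetAll τ Q, x ∈ χ.ker := by
    rintro x ⟨q, hq, m, rfl⟩
    rw [mem_ker_iff_cval]
    have h1 : τ ^ m * q * τ ^ (-m) = τ ^ m * q * (τ ^ m)⁻¹ := by group
    rw [h1, cval_conj, hχrange q (hQrange q hq)]
    exact hQ0 q hq
  have homgker : ∀ n : ℤ, omg τ s (R + 1) n ∈ χ.ker := by
    intro n
    rw [mem_ker_iff_cval]
    have h1 : omg τ s (R + 1) n
        = τ ^ n * (τ ^ (-((R : ℤ) + 1)) * s) * (τ ^ n)⁻¹ := by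
      unfold omg
      push_cast
      group
    rw [h1, cval_conj, cval_mul, cval_zpow, hχτ, hχs]
    ring
  have hBker : Subgroup.closure (atomSet τ Q (-(2 * (R : ℤ) + 1)) (R + 1)
      ∪ omegaSet τ s (R + 1) (-((R : ℤ) + 1)) (R + 1)) ≤ χ.ker := by
    rw [Subgroup.closure_le]
    rintro x (hx | hx)
    · exact hatomker x (atomSet_subset_all τ Q _ _ hx)
    · obtain ⟨n, _, rfl⟩ := hx
      exact homgker n
  -- the key containment : A ∩ ker χ lies in B
  have hLB : ∀ x ∈ i.range, cval χ x = 0 →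
      x ∈ Subgroup.closure (atomSet τ Q (-(2 * (R : ℤ) + 1)) (R + 1)
        ∪ omegaSet τ s (R + 1) (-((R : ℤ) + 1)) (R + 1)) := by
    intro x hx hx0
    have hθ0 : cval θ x = 0 := by rw [← hχrange x hx]; exact hx0
    have hall := hdecomp x hx hθ0
    refine (Subgroup.closure_le _).mpr ?_ hall
    rintro y ⟨q, hq, m, rfl⟩
    exact hcore q hq m
  -- the finite-index image subgroup of Γ
  set d : ℕ := c.natAbs with hd
  haveI : NeZero d := ⟨Int.natAbs_ne_zero.mpr hc0⟩
  set castχ : G →* Multiplicative (ZMod d) :=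
    (AddMonoidHom.toMultiplicative (Int.castAddHom (ZMod d))).comp χ with hcastχdef
  have hcastχ : ∀ g, castχ g = Multiplicative.ofAdd ((cval χ g : ℤ) : ZMod d) :=
    fun g => rfl
  have hcd : ((c : ℤ) : ZMod d) = 0 := by
    rw [ZMod.intCast_zmod_eq_zero_iff_dvd]
    exact Int.natAbs_dvd.mpr dvd_rfl
  have hkerle : f.ker ≤ castχ.ker := by
    intro x hx
    have hx' : x ∈ i.range := by rw [hex]; exact hx
    obtain ⟨n, hn⟩ := hvals x hx'
    rw [MonoidHom.mem_ker, hcastχ, hχrange x hx', hn]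
    push_cast [hcd]
    simp
  set finv : Γ → G := Function.surjInv hf with hfinvdef
  have hfinv : Function.RightInverse finv f := Function.rightInverse_surjInv hf
  set χbar : Γ →* Multiplicative (ZMod d) :=
    f.liftOfRightInverse finv hfinv ⟨castχ, hkerle⟩ with hχbardef
  have hχbar : ∀ x : G, χbar (f x) = castχ x := fun x =>
    f.liftOfRightInverse_comp_apply finv hfinv ⟨castχ, hkerle⟩ x
  have hNΓ₀ : ∀ n ∈ χ.ker, f n ∈ χbar.ker := by
    intro n hn
    rw [MonoidHom.mem_ker, hχbar, hcastχ]
    rw [mem_ker_iff_cval] at hn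
    rw [hn]
    simp
  have hlift : ∀ γ' ∈ χbar.ker, ∃ y ∈ χ.ker, f y = γ' := by
    intro γ' hγ'
    have h1 : castχ (finv γ') = 1 := by
      rw [← hχbar, hfinv γ']
      exact hγ'
    have h2 : ((cval χ (finv γ') : ℤ) : ZMod d) = 0 := by
      rw [hcastχ] at h1
      simpa using h1
    have h3 : c ∣ cval χ (finv γ') :=
      Int.natAbs_dvd.mp ((ZMod.intCast_zmod_eq_zero_iff_dvd _ d).mp h2)
    obtain ⟨n, hn⟩ := h3
    refine ⟨finv γ' * τ ^ (-n), ?_, ?_⟩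
    · rw [mem_ker_iff_cval, cval_mul, cval_zpow, hχτ, hn]
      ring
    · rw [map_mul, map_zpow, hkerf τ hτrange, hfinv γ']
      simp
  -- χbar.ker is finitely generated
  haveI : Finite (χbar.range) := Subtype.finite
  haveI : χbar.ker.FiniteIndex := Subgroup.finiteIndex_ker χbar
  have hΓ₀fg : χbar.ker.FG :=
    (Group.fg_iff_subgroup_fg _).mp (Subgroup.fg_of_index_ne_zero _)
  obtain ⟨Tset, hTclosure, hTfin⟩ := (Subgroup.fg_iff _).mp hΓ₀fg
  have hTsub : ∀ t ∈ Tset, t ∈ χbar.ker := by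
    intro t ht
    rw [← hTclosure]
    exact Subgroup.subset_closure ht
  let vfun : Γ → G := fun γ' => if h : γ' ∈ χbar.ker then Classical.choose (hlift γ' h) else 1
  have hvfun : ∀ γ' (h : γ' ∈ χbar.ker), vfun γ' ∈ χ.ker ∧ f (vfun γ') = γ' := by
    intro γ' h
    simp only [vfun, dif_pos h]
    exact ⟨(Classical.choose_spec (hlift γ' h)).1, (Classical.choose_spec (hlift γ' h)).2⟩
  set Vset : Set G := vfun '' Tset with hVdef
  have hVker : ∀ v ∈ Vset, v ∈ χ.ker := by
    rintro v ⟨t, ht, rfl⟩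
    exact (hvfun t (hTsub t ht)).1
  have hfV : f '' Vset = Tset := by
    ext t
    constructor
    · rintro ⟨v, ⟨t', ht', rfl⟩, rfl⟩
      rw [(hvfun t' (hTsub t' ht')).2]
      exact ht'
    · intro ht
      exact ⟨vfun t, ⟨t, ht, rfl⟩, (hvfun t (hTsub t ht)).2⟩
  -- the final generating set
  set GenSet : Set G := Vset ∪ (atomSet τ Q (-(2 * (R : ℤ) + 1)) (R + 1)
      ∪ omegaSet τ s (R + 1) (-((R : ℤ) + 1)) (R + 1)) with hGenSetDef
  have hGenFin : GenSet.Finite :=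
    (hTfin.image _).union ((atomSet_finite τ hQfin _ _).union (omegaSet_finite τ s _ _ _))
  have hGenKer : ∀ x ∈ GenSet, x ∈ χ.ker := by
    rintro x (hx | hx)
    · exact hVker x hx
    · exact hBker (Subgroup.subset_closure hx)
  have heq : Subgroup.closure GenSet = χ.ker := by
    apply le_antisymm
    · rw [Subgroup.closure_le]
      intro x hx
      exact hGenKer x hx
    · intro n hn
      have hfn : f n ∈ χbar.ker := hNΓ₀ n hn
      have hmap : f n ∈ Subgroup.map f (Subgroup.closure Vset) := by
        rw [MonoidHom.map_closure, hfV, hTclosure]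
        exact hfn
      obtain ⟨v, hv, hveq⟩ := hmap
      have hvker : cval χ v = 0 := by
        rw [← mem_ker_iff_cval]
        exact (Subgroup.closure_le χ.ker).mpr (fun y hy => hVker y hy) hv
      have hu : n * v⁻¹ ∈ i.range := by
        rw [hex, MonoidHom.mem_ker, map_mul, map_inv, hveq]
        simp
      have hu0 : cval χ (n * v⁻¹) = 0 := by
        rw [cval_mul, cval_inv, hvker]
        rw [mem_ker_iff_cval] at hn
        rw [hn]
        ring
      have huB := hLB _ hu hu0
      have hsplit : n = (n * v⁻¹) * v := by group
      rw [hsplit]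
      refine Subgroup.mul_mem _ ?_ ?_
      · exact Subgroup.closure_mono Set.subset_union_right huB
      · exact Subgroup.closure_mono Set.subset_union_left hv
  have hFG : (χ.ker).FG := (Subgroup.fg_iff _).mpr ⟨GenSet, heq, hGenFin⟩
  obtain ⟨φ, hφs, hφk⟩ := rescale χ τ (by rw [hχτ]; exact hc0)
  exact ⟨φ, hφs, by rw [hφk]; exact hFG⟩
end

section
/- Let F₂ be a free group of rank 2 (or more generally a finitely generated free group). Every finitely generated normal subgroup of F₂ is either trivial or of finite index. -/
namespace Stmt7

open FreeGroup List

variable {ι : Type*} [DecidableEq ι]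

/-- A word is reduced iff no adjacent cancelling pair. -/
def IsRed (l : List (ι × Bool)) : Prop :=
  l.Chain' (fun a b => ¬(a.1 = b.1 ∧ a.2 = !b.2))

theorem reduce_eq_self {l : List (ι × Bool)} (h : IsRed l) : reduce l = l := by
  induction l with
  | nil => rfl
  | cons x t ih =>
    rw [reduce.cons, ih h.tail]
    cases t with
    | nil => rfl
    | cons hd tl =>
      have hx : ¬(x.1 = hd.1 ∧ x.2 = !hd.2) := (List.isChain_cons_cons.mp h).1
      simp only [if_neg hx]

theorem isRed_reduce (l : List (ι × Bool)) : IsRed (reduce l) := by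
  induction l with
  | nil => exact List.isChain_nil
  | cons x t ih =>
    rw [reduce.cons]
    cases h : reduce t with
    | nil => exact List.isChain_singleton x
    | cons hd tl =>
      rw [h] at ih
      by_cases hc : x.1 = hd.1 ∧ x.2 = !hd.2
      · simp only [if_pos hc]
        exact ih.tail
      · simp only [if_neg hc]
        exact List.isChain_cons_cons.mpr ⟨hc, ih⟩

theorem isRed_toWord (x : FreeGroup ι) : IsRed x.toWord := by
  rw [← reduce_toWord]; exact isRed_reduce _

theorem toWord_mk_of {l : List (ι × Bool)} (h : IsRed l) : (mk l).toWord = l := by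
  rw [toWord_mk, reduce_eq_self h]

theorem invRev_append (l₁ l₂ : List (ι × Bool)) :
    invRev (l₁ ++ l₂) = invRev l₂ ++ invRev l₁ := by
  simp [invRev]

theorem invRev_singleton (a : ι × Bool) : invRev [a] = [(a.1, !a.2)] := by
  simp [invRev]

/-- Maximal cancellation decomposition of a product of two elements. -/
theorem exists_cancel : ∀ (n : ℕ) (x y : FreeGroup ι), x.toWord.length ≤ n →
    ∃ A B d : List (ι × Bool),
      x.toWord = A ++ d ∧ y.toWord = invRev d ++ B ∧ (x * y).toWord = A ++ B := by
  intro n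
  induction n with
  | zero =>
    intro x y hx
    have hx1 : x = 1 := toWord_eq_nil_iff.mp (List.eq_nil_of_length_eq_zero (Nat.le_zero.mp hx))
    subst hx1
    exact ⟨[], y.toWord, [], by simp [toWord_one], by simp [invRev], by simp⟩
  | succ n ih =>
    intro x y hx
    by_cases hjun : IsRed (x.toWord ++ y.toWord)
    · refine ⟨x.toWord, y.toWord, [], by simp, by simp [invRev], ?_⟩
      conv_lhs => rw [← mk_toWord (x := x), ← mk_toWord (x := y)]
      rw [mul_mk, toWord_mk_of hjun]
    · have hx' := isRed_toWord x
      have hy' := isRed_toWord y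
      have hjun' : ¬∀ p ∈ x.toWord.getLast?, ∀ q ∈ y.toWord.head?,
          ¬(p.1 = q.1 ∧ p.2 = !q.2) := by
        intro c3
        exact hjun (List.isChain_append.mpr ⟨hx', hy', c3⟩)
      push_neg at hjun'
      obtain ⟨a, ha, b, hb, hab⟩ := hjun'
      have hbval : b = (a.1, !a.2) := by
        obtain ⟨h1, h2⟩ := hab
        ext
        · exact h1.symm
        · rw [h2]; simp
      obtain ⟨A₁, hA₁⟩ : ∃ A₁, x.toWord = A₁ ++ [a] := by
        obtain ⟨h, heq⟩ := List.mem_getLast?_eq_getLast ha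
        exact ⟨x.toWord.dropLast, by rw [heq, List.dropLast_append_getLast h]⟩
      obtain ⟨t, ht⟩ : ∃ t, y.toWord = b :: t := by
        cases hy : y.toWord with
        | nil => rw [hy] at hb; simp at hb
        | cons c t =>
          rw [hy] at hb
          simp at hb
          exact ⟨t, by rw [hb]⟩
      have hredA₁ : IsRed A₁ := by
        have := isRed_toWord x
        rw [hA₁] at this
        exact this.prefix (List.prefix_append _ _)
      have hredt : IsRed t := by
        have := isRed_toWord y
        rw [ht] at this
        exact this.tail
      have hx'w : (mk A₁).toWord = A₁ := toWord_mk_of hredA₁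
      have hy'w : (mk t).toWord = t := toWord_mk_of hredt
      have hxy : x * y = mk A₁ * mk t := by
        have e1 : x = mk A₁ * mk [a] := by
          conv_lhs => rw [← mk_toWord (x := x)]
          rw [hA₁, ← mul_mk]
        have e2 : y = mk [b] * mk t := by
          conv_lhs => rw [← mk_toWord (x := y)]
          rw [ht]
          rfl
        have e3 : mk [b] = (mk [a])⁻¹ := by
          rw [inv_mk, invRev_singleton, hbval]
        rw [e1, e2, e3]
        group
      have hlen : (mk A₁).toWord.length ≤ n := by
        rw [hx'w]
        have := hx
        rw [hA₁] at this
        simp at this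
        omega
      obtain ⟨A, B, d, h1, h2, h3⟩ := ih (mk A₁) (mk t) hlen
      rw [hx'w] at h1
      rw [hy'w] at h2
      refine ⟨A, B, d ++ [a], ?_, ?_, ?_⟩
      · rw [hA₁, h1, List.append_assoc]
      · rw [ht, h2, invRev_append, invRev_singleton, hbval]
        rfl
      · rw [hxy]; exact h3

/-- Finitely generated subgroups are quasiconvex: every prefix of a reduced word
of an element is close to the subgroup. -/
theorem quasi {S : Finset (FreeGroup ι)} {L : ℕ} (hL : ∀ s ∈ S, norm s ≤ L) :
    ∀ lst : List (FreeGroup ι),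
      (∀ y ∈ lst, y ∈ (S : Set (FreeGroup ι)) ∪ (S : Set (FreeGroup ι))⁻¹) →
      ∀ l, l <+: lst.prod.toWord →
      ∃ q ∈ Subgroup.closure (S : Set (FreeGroup ι)), norm ((mk l)⁻¹ * q) ≤ L := by
  intro lst
  induction lst using List.reverseRecOn with
  | nil =>
    intro _ l hl
    have hl' : l = [] := by
      simpa [toWord_one] using List.prefix_nil.mp (by simpa [toWord_one] using hl)
    refine ⟨1, one_mem _, ?_⟩
    rw [hl']
    simp [← one_eq_mk]
  | append_singleton l' y ih =>
    intro hmem l hl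
    rw [List.prod_append, List.prod_singleton] at hl
    obtain ⟨A, B, d, h1, h2, h3⟩ := exists_cancel l'.prod.toWord.length l'.prod y le_rfl
    rw [h3] at hl
    by_cases hlen : l.length ≤ A.length
    · have hlA : l <+: A := List.prefix_of_prefix_length_le hl (List.prefix_append A B) hlen
      have : l <+: l'.prod.toWord := by
        rw [h1]
        exact hlA.trans (List.prefix_append A d)
      exact ih (fun z hz => hmem z (by simp [hz])) l this
    · push_neg at hlen
      have hAl : A <+: l :=
        List.prefix_of_prefix_length_le (List.prefix_append A B) hl (le_of_lt hlen)
      obtain ⟨b₁, rfl⟩ := hAl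
      have hb₁ : b₁ <+: B := by
        obtain ⟨t, ht⟩ := hl
        rw [List.append_assoc] at ht
        exact ⟨t, List.append_cancel_left ht⟩
      have hyL : norm y ≤ L := by
        rcases hmem y (by simp) with hy | hy
        · exact hL y hy
        · rw [← norm_inv_eq]
          exact hL y⁻¹ (Set.mem_inv.mp hy)
      refine ⟨l'.prod, ?_, ?_⟩
      · apply Subgroup.list_prod_mem
        intro z hz
        rcases hmem z (by simp [hz]) with h | h
        · exact Subgroup.subset_closure h
        · rw [← inv_inv z]
          exact Subgroup.inv_mem _ (Subgroup.subset_closure (Set.mem_inv.mp h))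
      · have hx : l'.prod = mk A * mk d := by
          conv_lhs => rw [← mk_toWord (x := l'.prod)]
          rw [h1, ← mul_mk]
        have key : (mk (A ++ b₁))⁻¹ * l'.prod = mk (invRev b₁ ++ d) := by
          rw [← mul_mk, mul_inv_rev, hx, mul_assoc, inv_mul_cancel_left, inv_mk, mul_mk]
        rw [key]
        calc norm (mk (invRev b₁ ++ d)) ≤ (invRev b₁ ++ d).length := norm_mk_le
          _ = b₁.length + d.length := by simp [invRev_length]
          _ ≤ B.length + d.length := by have := hb₁.length_le; omega
          _ = norm y := by
              have : norm y = y.toWord.length := rfl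
              rw [this, h2]
              simp [invRev_length]; omega
          _ ≤ L := hyL

/-- Cyclically reduced word predicate. -/
def CR (l : List (ι × Bool)) : Prop :=
  ∀ a b, l.head? = some a → l.getLast? = some b → b ≠ (a.1, !a.2)

theorem exists_cr : ∀ (n : ℕ) (x : FreeGroup ι), x.toWord.length ≤ n → x ≠ 1 →
    ∃ u c : FreeGroup ι, x = u * c * u⁻¹ ∧ c ≠ 1 ∧ CR c.toWord := by
  intro n
  induction n with
  | zero =>
    intro x hx hne
    exact absurd (toWord_eq_nil_iff.mp (List.eq_nil_of_length_eq_zero (Nat.le_zero.mp hx))) hne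
  | succ n ih =>
    intro x hx hne
    by_cases hcr : CR x.toWord
    · exact ⟨1, x, by group, hne, hcr⟩
    · unfold CR at hcr
      push_neg at hcr
      obtain ⟨a, b, hhead, hlast, hab⟩ := hcr
      obtain ⟨t, hxt⟩ : ∃ t, x.toWord = a :: t := by
        cases hx' : x.toWord with
        | nil => rw [hx'] at hhead; simp at hhead
        | cons c t =>
          rw [hx'] at hhead
          simp at hhead
          exact ⟨t, by rw [hhead]⟩
      have htne : t ≠ [] := by
        rintro rfl
        rw [hxt] at hlast
        simp at hlast
        rw [hlast] at hab
        have := congrArg Prod.snd hab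
        simp at this
      obtain ⟨t₀, ht₀⟩ : ∃ t₀, t = t₀ ++ [b] := by
        have hlt : t.getLast? = some b := by
          cases ht' : t.getLast? with
          | none => exact absurd (List.getLast?_eq_none_iff.mp ht') htne
          | some xx =>
            have h'' : (a :: t) = [a] ++ t := rfl
            rw [hxt, h'', List.getLast?_append, ht'] at hlast
            simpa using hlast
        obtain ⟨h, heq⟩ := List.mem_getLast?_eq_getLast hlt
        exact ⟨t.dropLast, by rw [heq, List.dropLast_append_getLast h]⟩
      have hxword : x.toWord = [a] ++ t₀ ++ [b] := by rw [hxt, ht₀]; rfl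
      have hredt₀ : IsRed t₀ :=
        (isRed_toWord x).infix ⟨[a], [b], hxword.symm⟩
      have hx'w : (mk t₀).toWord = t₀ := toWord_mk_of hredt₀
      have hmkb : mk [b] = (mk [a])⁻¹ := by
        rw [inv_mk, invRev_singleton, hab]
      have hx2 : x = mk [a] * mk t₀ * mk [b] := by
        conv_lhs => rw [← mk_toWord (x := x)]
        rw [hxword, ← mul_mk, ← mul_mk]
      have hx'ne : mk t₀ ≠ 1 := by
        intro h0
        have ht₀nil : t₀ = [] := by
          rw [← hx'w, h0, toWord_one]
        have := isRed_toWord x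
        rw [hxword, ht₀nil] at this
        simp only [List.append_nil] at this
        have hpair : ¬(a.1 = b.1 ∧ a.2 = !b.2) := (List.isChain_cons_cons.mp this).1
        apply hpair
        rw [hab]
        simp
      have hlen : (mk t₀).toWord.length ≤ n := by
        rw [hx'w]
        have := hx
        rw [hxword] at this
        simp at this
        omega
      obtain ⟨u, c, h1, h2, h3⟩ := ih (mk t₀) hlen hx'ne
      refine ⟨mk [a] * u, c, ?_, h2, h3⟩
      rw [hx2, hmkb, h1]
      group

end Stmt7

open Stmt7 FreeGroup in
/-- every finitely generated normal subgroup of a finitely generated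
free group (in particular of `F₂ = FreeGroup (Fin 2)`) is trivial or of finite index. -/
theorem stmt7 {ι : Type*} [Finite ι]
    (N : Subgroup (FreeGroup ι)) [N.Normal] (hN : N.FG) :
    N = ⊥ ∨ N.FiniteIndex := by
  classical
  by_cases hbot : N = ⊥
  · exact Or.inl hbot
  refine Or.inr ⟨fun hidx => ?_⟩
  have hinf : Infinite (FreeGroup ι ⧸ N) := by
    rw [Subgroup.index] at hidx
    rcases Nat.card_eq_zero.mp hidx with h | h
    · exact absurd h (not_isEmpty_of_nonempty _)
    · exact h
  obtain ⟨w₀, hw₀N, hw₀⟩ := (Subgroup.bot_or_exists_ne_one N).resolve_left hbot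
  obtain ⟨u, c, hdec, hcne, hcr⟩ := exists_cr w₀.toWord.length w₀ le_rfl hw₀
  have hNn : N.Normal := ‹_›
  have hcN : c ∈ N := by
    have hc' : c = u⁻¹ * w₀ * u⁻¹⁻¹ := by rw [hdec]; group
    rw [hc']
    exact hNn.conj_mem _ hw₀N _
  obtain ⟨S, hS⟩ := hN
  set L := S.sup norm with hLdef
  have hL : ∀ s ∈ S, norm s ≤ L := fun s hs => Finset.le_sup hs
  set R := L + 2 * norm c with hR
  -- find a coset-minimal g of length > R
  have hg : ∃ g : FreeGroup ι, (∀ n ∈ N, norm g ≤ norm (n * g)) ∧ R < norm g := by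
    by_contra hcon
    push_neg at hcon
    have key : ∀ q : FreeGroup ι ⧸ N, ∃ y : FreeGroup ι,
        (QuotientGroup.mk y : FreeGroup ι ⧸ N) = q ∧
        ∀ z : FreeGroup ι, (QuotientGroup.mk z : FreeGroup ι ⧸ N) = q → norm y ≤ norm z := by
      intro q
      obtain ⟨y₀, hy₀⟩ := Quot.exists_rep q
      have hne : (FreeGroup.norm '' {y : FreeGroup ι | (QuotientGroup.mk y : FreeGroup ι ⧸ N) = q}).Nonempty :=
        ⟨FreeGroup.norm y₀, y₀, hy₀, rfl⟩
      obtain ⟨y, hy1, hy2⟩ := Nat.sInf_mem hne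
      refine ⟨y, hy1, fun z hz => ?_⟩
      rw [hy2]
      exact Nat.sInf_le ⟨z, hz, rfl⟩
    choose f hf1 hf2 using key
    have hmin : ∀ q, ∀ n ∈ N, norm (f q) ≤ norm (n * f q) := by
      intro q n hn
      refine hf2 q _ ?_
      have hq : ((n * f q : FreeGroup ι) : FreeGroup ι ⧸ N) = ((f q : FreeGroup ι) : FreeGroup ι ⧸ N) := by
        apply (QuotientGroup.eq (s := N)).mpr
        have h' : (n * f q)⁻¹ * f q = (f q)⁻¹ * n⁻¹ * (f q) := by group
        rw [h']
        exact hNn.conj_mem' _ (N.inv_mem hn) _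
      exact hq.trans (hf1 q)
    have hfin : (Set.univ : Set (FreeGroup ι ⧸ N)).Finite := by
      have hball0 : ({l : List (ι × Bool) | l.length ≤ R}).Finite :=
        List.finite_length_le (ι × Bool) R
      have hball : {x : FreeGroup ι | FreeGroup.norm x ≤ R}.Finite := by
        have heq : {x : FreeGroup ι | FreeGroup.norm x ≤ R}
            = FreeGroup.toWord ⁻¹' {l : List (ι × Bool) | l.length ≤ R} := rfl
        rw [heq]
        exact Set.Finite.preimage toWord_injective.injOn hball0
      have : (Set.univ : Set (FreeGroup ι ⧸ N)) ⊆ (fun x => QuotientGroup.mk x) ''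
          {x : FreeGroup ι | FreeGroup.norm x ≤ R} := by
        intro q _
        exact ⟨f q, hcon _ (hmin q), hf1 q⟩
      exact (hball.image _).subset this
    exact Set.infinite_univ hfin
  obtain ⟨g, hgmin, hglong⟩ := hg
  have hgc_mem : g * c * g⁻¹ ∈ N := hNn.conj_mem _ hcN _
  have h1 : norm g ≤ norm (g * c) := by
    have := hgmin (g * c * g⁻¹) hgc_mem
    rwa [inv_mul_cancel_right] at this
  obtain ⟨P, W₁, d, hG, hW, hGW⟩ := exists_cancel g.toWord.length g c le_rfl
  obtain ⟨U, V, e, hGW2, hginv, hh⟩ := exists_cancel (g * c).toWord.length (g * c) g⁻¹ le_rfl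
  have lG : norm g = P.length + d.length := by
    show g.toWord.length = _
    rw [hG]; simp
  have lC : norm c = d.length + W₁.length := by
    show c.toWord.length = _
    rw [hW]; simp [invRev_length]
  have lGC : norm (g * c) = P.length + W₁.length := by
    show (g * c).toWord.length = _
    rw [hGW]; simp
  have lGC2 : norm (g * c) = U.length + e.length := by
    show (g * c).toWord.length = _
    rw [hGW2]; simp
  have hd_le : d.length ≤ W₁.length := by omega
  by_cases he : e.length ≤ W₁.length
  · -- the prefix U of (g c g⁻¹).toWord is close to g : contradiction with quasiconvexity
    have hmemN : g * c * g⁻¹ ∈ Submonoid.closure ((S : Set (FreeGroup ι)) ∪ (S : Set (FreeGroup ι))⁻¹) := by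
      rw [← Subgroup.closure_toSubmonoid, Subgroup.mem_toSubmonoid, hS]
      exact hgc_mem
    obtain ⟨lst, hlst, hprod⟩ := Submonoid.exists_list_of_mem_closure hmemN
    have hUpre : U <+: lst.prod.toWord := by
      rw [hprod, hh]
      exact ⟨V, rfl⟩
    obtain ⟨q, hqmem, hqnorm⟩ := quasi hL lst hlst U hUpre
    have hqN : q ∈ N := hS ▸ hqmem
    have hgc_eq : g * c = mk U * mk e := by
      conv_lhs => rw [← mk_toWord (x := g * c)]
      rw [hGW2, ← mul_mk]
    have hUg : (mk U)⁻¹ * g = mk e * c⁻¹ := by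
      have hU : mk U = g * c * (mk e)⁻¹ := by
        rw [hgc_eq]; group
      rw [hU]; group
    have hUg_norm : norm ((mk U)⁻¹ * g) ≤ 2 * norm c := by
      rw [hUg]
      calc norm (mk e * c⁻¹) ≤ norm (mk e) + norm c⁻¹ := norm_mul_le _ _
        _ ≤ e.length + norm c := by
            have := norm_mk_le (L₁ := e) (α := ι)
            rw [norm_inv_eq]
            omega
        _ ≤ 2 * norm c := by omega
    have hfinal : norm (q⁻¹ * g) ≤ L + 2 * norm c := by
      have hsplit : q⁻¹ * g = (q⁻¹ * mk U) * ((mk U)⁻¹ * g) := by group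
      rw [hsplit]
      have e2 : norm (q⁻¹ * mk U) ≤ L := by
        have : q⁻¹ * mk U = ((mk U)⁻¹ * q)⁻¹ := by group
        rw [this, norm_inv_eq]
        exact hqnorm
      calc norm ((q⁻¹ * mk U) * ((mk U)⁻¹ * g))
          ≤ norm (q⁻¹ * mk U) + norm ((mk U)⁻¹ * g) := norm_mul_le _ _
        _ ≤ L + 2 * norm c := add_le_add e2 hUg_norm
    have := hgmin q⁻¹ (N.inv_mem hqN)
    omega
  · push_neg at he
    have hPW : P ++ W₁ = U ++ e := by rw [← hGW, hGW2]
    obtain ⟨e', he'1, he'2⟩ : ∃ e', e = e' ++ W₁ ∧ P = U ++ e' := by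
      rcases List.append_eq_append_iff.mp hPW with ⟨a', ha1, ha2⟩ | ⟨c', hc1, hc2⟩
      · exfalso
        have := congrArg List.length ha2
        simp at this
        omega
      · exact ⟨c', hc2, hc1⟩
    have hG1 : g.toWord = (U ++ e') ++ d := by rw [hG, he'2]
    have hGinvRev : g.toWord = invRev V ++ e := by
      have h0 : g.toWord = invRev ((g⁻¹).toWord) := by
        rw [toWord_inv, invRev_invRev]
      rw [h0, hginv, invRev_append, invRev_invRev]
    have hG2 : g.toWord = (invRev V ++ e') ++ W₁ := by
      rw [hGinvRev, he'1, List.append_assoc]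
    have hcomp : (U ++ e') ++ d = (invRev V ++ e') ++ W₁ := by rw [← hG1, ← hG2]
    obtain ⟨W₂, hW₂⟩ : ∃ W₂, W₁ = W₂ ++ d := by
      rcases List.append_eq_append_iff.mp hcomp with ⟨a', ha1, ha2⟩ | ⟨c', hc1, hc2⟩
      · have hlen0 : a'.length = 0 := by
          have := congrArg List.length ha2
          simp at this
          omega
        obtain rfl := List.eq_nil_of_length_eq_zero hlen0
        exact ⟨[], by simpa using ha2.symm⟩
      · exact ⟨c', hc2⟩
    by_cases hdnil : d = []
    · -- g ends with c : shorter coset representative, contradiction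
      subst hdnil
      have hcW : c.toWord = W₁ := by
        rw [hW]; simp [invRev]
      have hg_eq : g = mk (invRev V ++ e') * c := by
        conv_lhs => rw [← mk_toWord (x := g)]
        rw [hG2, ← mul_mk, ← hcW, mk_toWord]
      have hshorter : g * c⁻¹ = mk (invRev V ++ e') := by
        rw [hg_eq]; group
      have hlt : norm (g * c⁻¹) < norm g := by
        rw [hshorter]
        have h1' : norm (mk (invRev V ++ e')) ≤ (invRev V ++ e').length := norm_mk_le
        have h2' : norm g = (invRev V ++ e').length + W₁.length := by
          show g.toWord.length = _
          rw [hG2]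
          simp
          omega
        have h3' : W₁.length ≠ 0 := by
          intro h0
          apply hcne
          rw [← toWord_eq_nil_iff, hcW]
          exact List.eq_nil_of_length_eq_zero h0
        omega
      have hge : norm g ≤ norm (g * c⁻¹) := by
        have hm := hgmin (g * c⁻¹ * g⁻¹) (hNn.conj_mem _ (N.inv_mem hcN) _)
        rwa [inv_mul_cancel_right] at hm
      omega
    · -- c is not cyclically reduced : contradiction
      exfalso
      have hcW : c.toWord = invRev d ++ (W₂ ++ d) := by rw [hW, hW₂]
      obtain ⟨b, hb⟩ : ∃ b, d.getLast? = some b :=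
        ⟨d.getLast hdnil, List.getLast?_eq_getLast hdnil⟩
      have hinvne : invRev d ≠ [] := by
        intro h0
        apply hdnil
        have := congrArg List.length h0
        rw [invRev_length] at this
        exact List.eq_nil_of_length_eq_zero this
      have hhead : c.toWord.head? = some (b.1, !b.2) := by
        rw [hcW]
        rw [List.head?_append]
        have : (invRev d).head? = some (b.1, !b.2) := by
          show ((d.map (fun g : ι × Bool => (g.1, !g.2))).reverse).head? = _
          rw [List.head?_reverse, List.getLast?_map, hb]
          rfl
        rw [this]
        rfl
      have hlast : c.toWord.getLast? = some b := by
        rw [hcW, List.getLast?_append]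
        have : (W₂ ++ d).getLast? = some b := by
          rw [List.getLast?_append, hb]
          rfl
        rw [this]
        rfl
      apply hcr _ _ hhead hlast
      ext
      · rfl
      · simp
end

section
/- Let Π = Π₁ *_K Π₂ be an amalgamated free product of finitely generated groups over a finitely generated subgroup K, where Π₂ = ⟨K, s | sks⁻¹ = f(k)⟩ is an HNN extension of K by an automorphism f. Let χ: Π → ℝ be a nonzero character with χ|_{Π₁} representing a point of the BNS invariant Σ¹(Π₁), χ|_K ≠ 0, and χ(s) = 0. Then [χ] ∈ Σ¹(Π). -/
/-- `χ : G → ℝ` is an (additive) character. -/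
def IsChar {G : Type*} [Group G] (χ : G → ℝ) : Prop :=
  ∀ a b : G, χ (a * b) = χ a + χ b

/-- `[χ]` lies in the Bieri–Neumann–Strebel invariant `Σ¹(G)`: `χ` is a nonzero
character and, for every finite generating set `S` of `G`, the full subgraph of the
Cayley graph `Γ(G,S)` on the vertices `{g : 0 ≤ χ g}` is connected. -/
def InSigma1 {G : Type*} [Group G] (χ : G → ℝ) : Prop :=
  IsChar χ ∧ χ ≠ (fun _ => 0) ∧
    ∀ S : Finset G, Subgroup.closure (S : Set G) = ⊤ →
      ∀ x y : G, 0 ≤ χ x → 0 ≤ χ y →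
        Relation.ReflTransGen
          (fun a b => 0 ≤ χ a ∧ 0 ≤ χ b ∧ ∃ s ∈ S, b = a * s ∨ a = b * s) x y
/-- The amalgamated free product `Π₁ *_K Π₂` along `j₁ : K → Π₁`, `j₂ : K → Π₂`:
the quotient of the free product `Π₁ ∗ Π₂` by the normal closure of the elements
`j₁(k) j₂(k)⁻¹`. -/
def Amal {K P₁ P₂ : Type*} [Group K] [Group P₁] [Group P₂]
    (j₁ : K →* P₁) (j₂ : K →* P₂) : Type _ :=
  (Monoid.Coprod P₁ P₂) ⧸ Subgroup.normalClosure
    {x | ∃ k : K, x = Monoid.Coprod.inl (j₁ k) * (Monoid.Coprod.inr (j₂ k))⁻¹}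

instance {K P₁ P₂ : Type*} [Group K] [Group P₁] [Group P₂]
    (j₁ : K →* P₁) (j₂ : K →* P₂) : Group (Amal j₁ j₂) :=
  QuotientGroup.Quotient.group _

/-- The canonical map `Π₁ → Π₁ *_K Π₂`. -/
def amalInl {K P₁ P₂ : Type*} [Group K] [Group P₁] [Group P₂]
    (j₁ : K →* P₁) (j₂ : K →* P₂) : P₁ →* Amal j₁ j₂ :=
  (QuotientGroup.mk' _).comp Monoid.Coprod.inl

/-- The canonical map `Π₂ → Π₁ *_K Π₂`. -/
def amalInr {K P₁ P₂ : Type*} [Group K] [Group P₁] [Group P₂]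
    (j₁ : K →* P₁) (j₂ : K →* P₂) : P₂ →* Amal j₁ j₂ :=
  (QuotientGroup.mk' _).comp Monoid.Coprod.inr


namespace BNSAux

theorem amal_comm {K P₁ P₂ : Type*} [Group K] [Group P₁] [Group P₂]
    (j₁ : K →* P₁) (j₂ : K →* P₂) (c : K) :
    amalInl j₁ j₂ (j₁ c) = amalInr j₁ j₂ (j₂ c) := by
  show QuotientGroup.mk' _ (Monoid.Coprod.inl (j₁ c))
      = QuotientGroup.mk' _ (Monoid.Coprod.inr (j₂ c))
  rw [QuotientGroup.mk'_eq_mk']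
  have hg : Monoid.Coprod.inl (j₁ c) * (Monoid.Coprod.inr (j₂ c))⁻¹ ∈
      Subgroup.normalClosure
        {x | ∃ k : K, x = Monoid.Coprod.inl (j₁ k) * (Monoid.Coprod.inr (j₂ k))⁻¹} :=
    Subgroup.subset_normalClosure ⟨c, rfl⟩
  refine ⟨(Monoid.Coprod.inl (j₁ c))⁻¹ *
      (Monoid.Coprod.inl (j₁ c) * (Monoid.Coprod.inr (j₂ c))⁻¹)⁻¹ *
      Monoid.Coprod.inl (j₁ c), ?_, by group⟩
  have h2 := (Subgroup.normalClosure_normal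
    (s := {x | ∃ k : K, x = Monoid.Coprod.inl (j₁ k) * (Monoid.Coprod.inr (j₂ k))⁻¹})).conj_mem
    _ ((Subgroup.inv_mem _) hg) (Monoid.Coprod.inl (j₁ c))⁻¹
  simpa [mul_assoc] using h2

end BNSAux

namespace BNSAux

variable {G : Type*} [Group G] (χ : G → ℝ)

/-- One edge of the Cayley graph within level `c`. -/
def Step (S : Set G) (c : ℝ) (a b : G) : Prop :=
  c ≤ χ a ∧ c ≤ χ b ∧ ∃ s ∈ S, b = a * s ∨ a = b * s

def Walk (S : Set G) (c : ℝ) : G → G → Prop := Relation.ReflTransGen (Step χ S c)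

variable {χ}

theorem char_one (hχ : IsChar χ) : χ 1 = 0 := by
  have := hχ 1 1; simp at this; linarith

theorem char_inv (hχ : IsChar χ) (a : G) : χ a⁻¹ = -χ a := by
  have := hχ a a⁻¹; rw [mul_inv_cancel] at this; rw [char_one hχ] at this; linarith

theorem char_pow (hχ : IsChar χ) (a : G) (n : ℕ) : χ (a ^ n) = n * χ a := by
  induction n with
  | zero => simpa using char_one hχ
  | succ m ih => rw [pow_succ, hχ, ih]; push_cast; ring

theorem char_zpow (hχ : IsChar χ) (a : G) (n : ℤ) : χ (a ^ n) = n * χ a := by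
  cases n with
  | ofNat m => simpa using char_pow hχ a m
  | negSucc m =>
    rw [zpow_negSucc, char_inv hχ, char_pow hχ]
    push_cast; ring

theorem step_symm {S : Set G} {c : ℝ} : Symmetric (Step χ S c) := by
  rintro a b ⟨h1, h2, s, hs, h⟩
  exact ⟨h2, h1, s, hs, h.symm⟩

theorem walk_symm {S : Set G} {c : ℝ} {a b : G} (h : Walk χ S c a b) : Walk χ S c b a :=
  by
    haveI : Std.Symm (Step χ S c) := ⟨fun _ _ h => step_symm h⟩
    exact (Relation.ReflTransGen.symmetric (r := Step χ S c)).symm _ _ h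

theorem walk_mono_level {S : Set G} {c c' : ℝ} (hcc : c' ≤ c) {a b : G}
    (h : Walk χ S c a b) : Walk χ S c' a b :=
  Relation.ReflTransGen.mono (r := Step χ S c) (p := Step χ S c')
    (fun _ _ ⟨h1, h2, h3⟩ => ⟨hcc.trans h1, hcc.trans h2, h3⟩) _ _ h

theorem walk_translate (hχ : IsChar χ) {S : Set G} {c : ℝ} (w : G) {a b : G}
    (h : Walk χ S c a b) : Walk χ S (c + χ w) (w * a) (w * b) := by
  refine Relation.ReflTransGen.lift (p := Step χ S (c + χ w)) (fun x => w * x) ?_ _ _ h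
  rintro x y ⟨h1, h2, s, hs, hxy⟩
  show Step χ S (c + χ w) (w * x) (w * y)
  refine ⟨by rw [hχ]; linarith, by rw [hχ]; linarith, s, hs, ?_⟩
  rcases hxy with h | h
  · exact Or.inl (by rw [h, mul_assoc])
  · exact Or.inr (by rw [h, mul_assoc])

theorem walk_step {S : Set G} {c : ℝ} {u a : G} (hu : u ∈ S ∨ u⁻¹ ∈ S)
    (h1 : c ≤ χ a) (h2 : c ≤ χ (a * u)) : Walk χ S c a (a * u) := by
  refine Relation.ReflTransGen.single ⟨h1, h2, ?_⟩
  rcases hu with h | h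
  · exact ⟨u, h, Or.inl rfl⟩
  · exact ⟨u⁻¹, h, Or.inr (by rw [mul_assoc, mul_inv_cancel, mul_one])⟩

theorem walk_climb (hχ : IsChar χ) {S : Set G} {c : ℝ} {u a : G}
    (hu : u ∈ S ∨ u⁻¹ ∈ S) (hupos : 0 ≤ χ u) (hc : c ≤ χ a) (n : ℕ) :
    Walk χ S c a (a * u ^ n) := by
  induction n with
  | zero => rw [pow_zero, mul_one]; exact Relation.ReflTransGen.refl
  | succ m ih =>
    refine ih.trans ?_
    have h1 : c ≤ χ (a * u ^ m) := by
      rw [hχ, char_pow hχ]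
      have : (0:ℝ) ≤ m * χ u := by positivity
      linarith
    have h2 : c ≤ χ (a * u ^ m * u) := by
      rw [hχ, hχ, char_pow hχ]
      have : (0:ℝ) ≤ m * χ u := by positivity
      linarith
    have := walk_step (χ := χ) hu h1 h2
    rw [pow_succ, ← mul_assoc]
    exact this

/-- Any element that is a product of letters from `S ∪ S⁻¹` can be walked to,
at the cost of a finite drop `d`. -/
theorem walk_of_letters (hχ : IsChar χ) {S : Set G} (L : List G)
    (hL : ∀ y ∈ L, y ∈ S ∨ y⁻¹ ∈ S) :
    ∃ d : ℝ, d ≤ 0 ∧ ∀ w c, c ≤ χ w + d → Walk χ S c w (w * L.prod) := by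
  induction L with
  | nil => exact ⟨0, le_refl _, fun w c hc => by rw [List.prod_nil, mul_one]; exact Relation.ReflTransGen.refl⟩
  | cons y L' ih =>
    obtain ⟨d', hd', hwalk⟩ := ih (fun z hz => hL z (List.mem_cons_of_mem _ hz))
    refine ⟨min 0 (min (χ y) (χ y + d')), by simp, fun w c hc => ?_⟩
    have h0 : c ≤ χ w := by
      have := min_le_left (0:ℝ) (min (χ y) (χ y + d')); linarith
    have h1 : c ≤ χ (w * y) := by
      rw [hχ]
      have := (min_le_right (0:ℝ) _).trans (min_le_left (χ y) (χ y + d')); linarith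
    have h2 : c ≤ χ (w * y) + d' := by
      rw [hχ]
      have := (min_le_right (0:ℝ) _).trans (min_le_right (χ y) (χ y + d')); linarith
    have hy := hL y List.mem_cons_self
    refine (walk_step (χ := χ) hy h0 h1).trans ?_
    have := hwalk (w * y) c h2
    rw [List.prod_cons, ← mul_assoc]
    exact this


theorem exists_letters {S : Set G} (hS : Subgroup.closure S = ⊤) (g : G) :
    ∃ L : List G, (∀ y ∈ L, y ∈ S ∨ y⁻¹ ∈ S) ∧ L.prod = g := by
  have hg : g ∈ Submonoid.closure (S ∪ S⁻¹) := by
    rw [← Subgroup.closure_toSubmonoid, hS]; trivial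
  obtain ⟨L, hL, hprod⟩ := Submonoid.exists_list_of_mem_closure hg
  refine ⟨L, fun y hy => ?_, hprod⟩
  rcases hL y hy with h | h
  · exact Or.inl h
  · exact Or.inr (by simpa using h)

theorem walk_any (hχ : IsChar χ) {S : Set G} (hS : Subgroup.closure S = ⊤) (g : G) :
    ∃ d : ℝ, d ≤ 0 ∧ ∀ w c, c ≤ χ w + d → Walk χ S c w (w * g) := by
  obtain ⟨L, hL, hprod⟩ := exists_letters hS g
  obtain ⟨d, hd, hwalk⟩ := walk_of_letters hχ L hL
  exact ⟨d, hd, fun w c hc => by rw [← hprod]; exact hwalk w c hc⟩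

theorem uniform_cost (hχ : IsChar χ) {S : Set G} (hS : Subgroup.closure S = ⊤)
    {X : Set G} (hX : X.Finite) :
    ∃ C : ℝ, 0 ≤ C ∧ ∀ x ∈ X, ∀ w c, c ≤ χ w - C → Walk χ S c w (w * x) := by
  refine Set.Finite.induction_on (motive := fun T _ =>
      ∃ C : ℝ, 0 ≤ C ∧ ∀ x ∈ T, ∀ w c, c ≤ χ w - C → Walk χ S c w (w * x))
    X hX ⟨0, le_refl _, by simp⟩ ?_
  rintro a T _ _ ⟨C, hC0, hC⟩
  obtain ⟨d, hd, hwalk⟩ := walk_any hχ hS a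
  refine ⟨max C (-d), le_trans hC0 (le_max_left _ _), ?_⟩
  rintro x hx w c hc
  rcases Set.mem_insert_iff.mp hx with rfl | hx
  · exact hwalk w c (by have := le_max_right C (-d); linarith)
  · exact hC x hx w c (by have := le_max_left C (-d); linarith)

theorem walk_transform (hχ : IsChar χ) {X S : Set G} {C : ℝ} (hC0 : 0 ≤ C)
    (hcost : ∀ x ∈ X, ∀ w c, c ≤ χ w - C → Walk χ S c w (w * x))
    {a b : G} (h : Walk χ X 0 a b) : Walk χ S (-C) a b := by
  induction h with
  | refl => exact Relation.ReflTransGen.refl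
  | tail h1 step ih =>
    rename_i p q
    obtain ⟨hp, hq, x, hxX, hpq⟩ := step
    refine ih.trans ?_
    rcases hpq with h | h
    · rw [h]; exact hcost x hxX p (-C) (by linarith)
    · have : Walk χ S (-C) q (q * x) := hcost x hxX q (-C) (by linarith)
      rw [← h] at this
      exact walk_symm this

theorem exists_nat_mul_ge {u : ℝ} (hu : 0 < u) (r : ℝ) : ∃ n : ℕ, r ≤ n * u := by
  obtain ⟨n, hn⟩ := exists_nat_ge (r / u)
  exact ⟨n, by rwa [div_le_iff₀ hu] at hn⟩

theorem exists_pos_letter (hχ : IsChar χ) (hχ0 : χ ≠ (fun _ => 0))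
    {S : Finset G} (hS : Subgroup.closure (S : Set G) = ⊤) :
    ∃ u : G, (u ∈ (S : Set G) ∨ u⁻¹ ∈ (S : Set G)) ∧ 0 < χ u := by
  have hinv : ∀ a : G, χ a⁻¹ = -χ a := by
    intro a
    have h1 := hχ a a⁻¹
    have h2 := hχ 1 1
    simp at h1 h2
    linarith
  by_cases hall : ∀ s ∈ S, χ s = 0
  · exfalso
    apply hχ0
    funext g
    have hg : g ∈ Subgroup.closure (S : Set G) := by rw [hS]; trivial
    refine Subgroup.closure_induction (fun x hx => hall x hx) ?_ ?_ ?_ hg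
    · have h2 := hχ 1 1; simp at h2; linarith
    · intro x y _ _ hx hy; rw [hχ, hx, hy]; ring
    · intro x _ hx; rw [hinv, hx]; ring
  · push_neg at hall
    obtain ⟨s₀, hs₀S, hs₀⟩ := hall
    rcases lt_or_gt_of_ne hs₀ with h | h
    · exact ⟨s₀⁻¹, Or.inr (by simpa using hs₀S), by rw [hinv]; linarith⟩
    · exact ⟨s₀, Or.inl hs₀S, h⟩


/-- The key transfer theorem: if high points are connected at level 0 with respect to
some finite set `X`, then the positive part is connected w.r.t. every finite
generating set. -/
theorem transfer (hχ : IsChar χ) (hχ0 : χ ≠ (fun _ => 0))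
    {X : Set G} (hXfin : X.Finite) {v : ℝ}
    (core : ∀ a b : G, v ≤ χ a → v ≤ χ b → Walk χ X 0 a b)
    (S : Finset G) (hS : Subgroup.closure (S : Set G) = ⊤) :
    ∀ x y : G, 0 ≤ χ x → 0 ≤ χ y → Walk χ (S : Set G) 0 x y := by
  intro x y hx hy
  obtain ⟨u, hu, hupos⟩ := exists_pos_letter hχ hχ0 hS
  obtain ⟨C, hC0, hcost⟩ := uniform_cost hχ hS hXfin
  obtain ⟨n₀, hn₀⟩ := exists_nat_mul_ge hupos C
  set z := u ^ n₀ with hz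
  have hχz : χ z = n₀ * χ u := char_pow hχ u n₀
  -- high points are S-connected at level 0
  have high : ∀ a b : G, χ z + v ≤ χ a → χ z + v ≤ χ b → Walk χ (S : Set G) 0 a b := by
    intro a b ha hb
    have h1 : v ≤ χ (z⁻¹ * a) := by rw [hχ, char_inv hχ]; linarith
    have h2 : v ≤ χ (z⁻¹ * b) := by rw [hχ, char_inv hχ]; linarith
    have h3 := core _ _ h1 h2
    have h4 := walk_transform hχ hC0 hcost h3
    have h5 := walk_translate hχ z h4
    rw [mul_inv_cancel_left, mul_inv_cancel_left] at h5
    refine walk_mono_level ?_ h5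
    linarith
  obtain ⟨n₁, hn₁⟩ := exists_nat_mul_ge hupos (χ z + v - χ x)
  obtain ⟨n₂, hn₂⟩ := exists_nat_mul_ge hupos (χ z + v - χ y)
  have cx : Walk χ (S : Set G) 0 x (x * u ^ n₁) := walk_climb hχ hu hupos.le hx n₁
  have cy : Walk χ (S : Set G) 0 y (y * u ^ n₂) := walk_climb hχ hu hupos.le hy n₂
  have hmid : Walk χ (S : Set G) 0 (x * u ^ n₁) (y * u ^ n₂) := by
    refine high _ _ ?_ ?_
    · rw [hχ, char_pow hχ u n₁]; linarith
    · rw [hχ, char_pow hχ u n₂]; linarith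
  exact (cx.trans hmid).trans (walk_symm cy)



section Form

variable {P : Type*} [Group P] (ι : P →* G) (sh : G)

/-- Elements expressible with at most `m` occurrences of the stable letter. -/
def Form : ℕ → Set G
  | 0 => Set.range ι
  | m+1 => Form m ∪
      {g | ∃ (p : P) (h : G) (e : ℤ), (e = 1 ∨ e = -1) ∧ h ∈ Form m ∧ g = ι p * sh ^ e * h}

theorem form_mul_left (q : P) {g : G} : ∀ {m : ℕ}, g ∈ Form ι sh m → ι q * g ∈ Form ι sh m
  | 0, ⟨p, hp⟩ => ⟨q * p, by rw [map_mul, hp]⟩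
  | m+1, Or.inl hg => Or.inl (form_mul_left q hg)
  | m+1, Or.inr ⟨p, h, e, he, hh, hg⟩ =>
      Or.inr ⟨q * p, h, e, he, hh, by rw [hg, map_mul, mul_assoc, mul_assoc, mul_assoc]⟩

theorem form_mono {g : G} {m : ℕ} (hg : g ∈ Form ι sh m) : g ∈ Form ι sh (m+1) :=
  Or.inl hg

theorem form_exists (hgen : Subgroup.closure (Set.range ι ∪ {sh}) = ⊤) (g : G) :
    ∃ m, g ∈ Form ι sh m := by
  obtain ⟨L, hL, hprod⟩ := exists_letters hgen g
  subst hprod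
  induction L with
  | nil => exact ⟨0, 1, by simp⟩
  | cons y L' ih =>
    obtain ⟨m, hm⟩ := ih (fun z hz => hL z (List.mem_cons_of_mem _ hz))
    rw [List.prod_cons]
    have hy := hL y List.mem_cons_self
    have hcases : (∃ p : P, y = ι p) ∨ y = sh ∨ y = sh⁻¹ := by
      rcases hy with h | h
      · rcases h with ⟨p, hp⟩ | h
        · exact Or.inl ⟨p, hp.symm⟩
        · exact Or.inr (Or.inl (by simpa using h))
      · rcases h with ⟨p, hp⟩ | h
        · exact Or.inl ⟨p⁻¹, by rw [map_inv, hp, inv_inv]⟩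
        · refine Or.inr (Or.inr ?_)
          have : y⁻¹ = sh := by simpa using h
          rw [← this, inv_inv]
    rcases hcases with ⟨p, rfl⟩ | rfl | rfl
    · exact ⟨m, form_mul_left ι sh p hm⟩
    · exact ⟨m+1, Or.inr ⟨1, L'.prod, 1, Or.inl rfl, hm, by simp⟩⟩
    · exact ⟨m+1, Or.inr ⟨1, L'.prod, -1, Or.inr rfl, hm, by simp⟩⟩

end Form

end BNSAux

/-- let `Π = Π₁ *_K Π₂` with `Π₂ = K ⋊_f ℤ` the HNN extension of `K`
by an automorphism `f` (with stable letter `s`). If `χ : Π → ℝ` is a nonzero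
character with `[χ|_{Π₁}] ∈ Σ¹(Π₁)`, `χ|_K ≠ 0` and `χ(s) = 0`, then `[χ] ∈ Σ¹(Π)`. -/
theorem stmt14 {K P₁ : Type*} [Group K] [Group P₁]
    (hK : Group.FG K) (h1 : Group.FG P₁)
    (f : MulAut K) (j₁ : K →* P₁) (hj₁ : Function.Injective j₁)
    (χ : Amal j₁ (SemidirectProduct.inl :
        K →* K ⋊[zpowersHom (MulAut K) f] Multiplicative ℤ) → ℝ)
    (hχ : IsChar χ) (hχ0 : χ ≠ (fun _ => 0))
    (hχ1 : InSigma1 (χ ∘ amalInl j₁ SemidirectProduct.inl))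
    (hχK : ∃ k : K, χ (amalInl j₁ SemidirectProduct.inl (j₁ k)) ≠ 0)
    (hs : χ (amalInr j₁ SemidirectProduct.inl
        (SemidirectProduct.inr (Multiplicative.ofAdd (1 : ℤ)))) = 0) :
    InSigma1 χ := by
  classical
  open BNSAux in
  -- notation
  set ι := amalInl j₁ (SemidirectProduct.inl :
      K →* K ⋊[zpowersHom (MulAut K) f] Multiplicative ℤ) with hι
  set ρ := amalInr j₁ (SemidirectProduct.inl :
      K →* K ⋊[zpowersHom (MulAut K) f] Multiplicative ℤ) with hρ
  set sh := ρ (SemidirectProduct.inr (Multiplicative.ofAdd (1 : ℤ))) with hsh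
  have comm : ∀ c : K, ι (j₁ c) = ρ (SemidirectProduct.inl c) := fun c =>
    amal_comm j₁ _ c
  have χsh : χ sh = 0 := hs
  -- powers of the stable letter
  have sh_pow : ∀ m : ℤ, sh ^ m = ρ (SemidirectProduct.inr (Multiplicative.ofAdd m)) := by
    intro m
    rw [hsh, ← map_zpow, ← map_zpow]
    congr 2
    rw [← ofAdd_zsmul]
    norm_num
  have conj_lemma : ∀ (m : ℤ) (c : K), sh ^ m * ρ (SemidirectProduct.inl c) * (sh ^ m)⁻¹
      = ρ (SemidirectProduct.inl ((f ^ m) c)) := by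
    intro m c
    rw [sh_pow, ← map_inv, ← map_mul, ← map_mul]
    congr 1
    have h := SemidirectProduct.inl_aut (φ := zpowersHom (MulAut K) f)
      (Multiplicative.ofAdd m) c
    rw [map_inv] at h
    rw [← h]
    congr 1
  -- the positive element of K
  obtain ⟨k₀, hk₀⟩ := hχK
  obtain ⟨k, hv⟩ : ∃ k : K, 0 < χ (ι (j₁ k)) := by
    rcases lt_or_gt_of_ne hk₀ with h | h
    · exact ⟨k₀⁻¹, by rw [map_inv, map_inv, char_inv hχ]; linarith⟩
    · exact ⟨k₀, h⟩
  set v := χ (ι (j₁ k)) with hvdef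
  -- generating set of P₁
  obtain ⟨n, A, -, hA⟩ := Group.fg_iff'.mp h1
  -- our favourite generating set of the amalgam
  set X : Set (Amal j₁ (SemidirectProduct.inl :
      K →* K ⋊[zpowersHom (MulAut K) f] Multiplicative ℤ)) :=
    (fun a => ι a) '' (A : Set P₁) ∪ {sh} with hX
  have hXfin : X.Finite := (A.finite_toSet.image _).union (Set.finite_singleton _)
  -- `range ι ∪ {sh}` generates
  have hgen : Subgroup.closure (Set.range ι ∪ {sh}) = ⊤ := by
    rw [eq_top_iff]
    rintro g -
    obtain ⟨x, rfl⟩ := QuotientGroup.mk'_surjective _ g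
    induction x using Monoid.Coprod.induction_on with
    | inl p => exact Subgroup.subset_closure (Or.inl ⟨p, rfl⟩)
    | inr q =>
      rw [← SemidirectProduct.inl_left_mul_inr_right q]
      show ρ (SemidirectProduct.inl q.left * SemidirectProduct.inr q.right) ∈ _
      rw [map_mul]
      refine Subgroup.mul_mem _ ?_ ?_
      · rw [← comm]
        exact Subgroup.subset_closure (Or.inl ⟨j₁ q.left, rfl⟩)
      · have h2' : ρ (SemidirectProduct.inr q.right) = sh ^ (Multiplicative.toAdd q.right) := by
          rw [sh_pow]
          rfl
        rw [h2']
        have hshmem : sh ∈ Subgroup.closure (Set.range ι ∪ {sh}) :=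
          Subgroup.subset_closure (Set.mem_union_right _ (Set.mem_singleton _))
        exact Subgroup.zpow_mem _ hshmem (Multiplicative.toAdd q.right)
    | mul x y hx hy =>
      rw [map_mul]
      exact Subgroup.mul_mem _ hx hy
  -- the crucial `Π₁`-segment lemma
  have seg : ∀ (p : P₁) w, max 0 (-(χ (ι p))) + v ≤ χ w →
      Walk χ X 0 w (w * ι p) := by
    intro p w hw
    set M := max 0 (-(χ (ι p))) with hM
    have hM0 : 0 ≤ M := le_max_left _ _
    set m : ℕ := ⌈M / v⌉₊ with hm
    have hm1 : M ≤ m * v := by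
      rw [← div_le_iff₀ hv]
      exact Nat.le_ceil _
    have hm2 : (m : ℝ) * v ≤ χ w := by
      have h1' : (m : ℝ) < M / v + 1 := Nat.ceil_lt_add_one (by positivity)
      have h2' : (m : ℝ) * v < M + v := by
        have := (mul_lt_mul_of_pos_right h1' hv)
        rwa [add_mul, div_mul_cancel₀ _ (ne_of_gt hv), one_mul] at this
      linarith
    have hχ₁ : IsChar (χ ∘ ι) := hχ1.1
    have hwalk₁ := hχ1.2.2 A hA ((j₁ k) ^ m) ((j₁ k) ^ m * p) ?_ ?_
    · have hlift : Walk χ X 0 (ι ((j₁ k) ^ m)) (ι ((j₁ k) ^ m * p)) := by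
        refine Relation.ReflTransGen.lift (p := Step χ X 0) (fun q => ι q) ?_ _ _ hwalk₁
        rintro a b ⟨h1', h2', s, hsA, hab⟩
        refine ⟨h1', h2', ι s, Or.inl ⟨s, hsA, rfl⟩, ?_⟩
        show ι b = ι a * ι s ∨ ι a = ι b * ι s
        rcases hab with h | h
        · exact Or.inl (by rw [h, map_mul])
        · exact Or.inr (by rw [h, map_mul])
      have htr := walk_translate hχ (w * (ι ((j₁ k) ^ m))⁻¹) hlift
      rw [inv_mul_cancel_right] at htr
      have hχt : χ (w * (ι ((j₁ k) ^ m))⁻¹) = χ w - m * v := by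
        rw [hχ, char_inv hχ, map_pow, char_pow hχ]
        ring
      have hlevel : (0:ℝ) ≤ 0 + χ (w * (ι ((j₁ k) ^ m))⁻¹) := by
        rw [hχt]; linarith
      have := walk_mono_level hlevel htr
      rwa [map_mul, ← mul_assoc, inv_mul_cancel_right] at this
    · show (0:ℝ) ≤ χ (ι ((j₁ k) ^ m))
      rw [map_pow, char_pow hχ]
      positivity
    · show (0:ℝ) ≤ χ (ι ((j₁ k) ^ m * p))
      rw [map_mul, hχ, map_pow, char_pow hχ]
      have : -(χ (ι p)) ≤ M := le_max_right _ _
      linarith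
  -- main induction on the number of stable letters
  have Qlem : ∀ m : ℕ, ∀ g ∈ Form ι sh m, ∀ w,
      v ≤ χ w → v ≤ χ (w * g) → Walk χ X 0 w (w * g) := by
    intro m
    induction m with
    | zero =>
      rintro g ⟨p, rfl⟩ w hw hwg
      apply seg
      have hmul : χ (w * ι p) = χ w + χ (ι p) := hχ w _
      rcases le_or_gt 0 (χ (ι p)) with h | h
      · rw [max_eq_left (by linarith)]; linarith
      · rw [max_eq_right (by linarith)]; linarith
    | succ m ih =>
      rintro g hg w hw hwg
      rcases hg with hg | ⟨p, h, e, he, hh, rfl⟩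
      · exact ih g hg w hw hwg
      · -- choose the power of k to insert
        set N : ℕ := ⌈(max 0 (-(χ (ι p)))) / v⌉₊ with hN
        have hNv : max 0 (-(χ (ι p))) ≤ N * v := by
          rw [← div_le_iff₀ hv]
          exact Nat.le_ceil _
        have hNp : 0 ≤ χ (ι p) + N * v := by
          have := le_max_right 0 (-(χ (ι p))); linarith
        -- the Π₁ piece with the climbing power appended
        set κe := ρ (SemidirectProduct.inl ((f ^ e) k)) with hκe
        have hχκe : χ κe = v := by
          have h1' := conj_lemma e k
          have : χ (sh ^ e * ρ (SemidirectProduct.inl k) * (sh ^ e)⁻¹)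
              = χ (ρ (SemidirectProduct.inl k)) := by
            rw [hχ, hχ, char_inv hχ]; ring
          rw [h1'] at this
          rw [hκe, this, ← comm, hvdef]
        set p' := p * (j₁ ((f ^ e) k)) ^ N with hp'
        have hιp' : ι p' = ι p * κe ^ N := by
          rw [hp', map_mul, map_pow, comm]
        have hχp' : χ (ι p') = χ (ι p) + N * v := by
          rw [hιp', hχ, char_pow hχ, hχκe]
        have hχshe : χ (sh ^ e) = 0 := by
          rw [char_zpow hχ, χsh, mul_zero]
        -- first segment
        have step1 : Walk χ X 0 w (w * ι p') := by
          apply seg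
          rw [max_eq_left (by rw [hχp']; linarith)]
          linarith
        -- crossing the stable letter
        have hχw₁ : χ (w * ι p') = χ w + χ (ι p) + N * v := by
          rw [hχ, hχp']; ring
        have hχz : χ (w * ι p' * sh ^ e) = χ w + χ (ι p) + N * v := by
          rw [hχ, hχw₁, hχshe, add_zero]
        have step2 : Walk χ X 0 (w * ι p') (w * ι p' * sh ^ e) := by
          refine Relation.ReflTransGen.single ⟨?_, ?_, sh, Set.mem_union_right _ rfl, ?_⟩
          · rw [hχw₁]; linarith
          · rw [hχz]; linarith
          · rcases he with rfl | rfl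
            · exact Or.inl (by rw [zpow_one])
            · exact Or.inr (by rw [zpow_neg_one, mul_assoc, inv_mul_cancel, mul_one])
        -- the key algebraic identity
        have hconj : κe ^ N * sh ^ e = sh ^ e * (ι (j₁ k)) ^ N := by
          have h1' : κe = sh ^ e * ι (j₁ k) * (sh ^ e)⁻¹ := by
            rw [comm k]; exact (conj_lemma e k).symm
          rw [h1', conj_pow]
          group
        have key : (w * ι p' * sh ^ e) * (ι ((j₁ k)⁻¹ ^ N) * h) = w * (ι p * sh ^ e * h) := by
          rw [hιp']
          have hc : ι ((j₁ k)⁻¹ ^ N) = ((ι (j₁ k)) ^ N)⁻¹ := by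
            rw [map_pow, map_inv, inv_pow]
          rw [hc]
          calc w * (ι p * κe ^ N) * sh ^ e * (((ι (j₁ k)) ^ N)⁻¹ * h)
              = w * ι p * (κe ^ N * sh ^ e) * (((ι (j₁ k)) ^ N)⁻¹ * h) := by group
            _ = w * ι p * (sh ^ e * (ι (j₁ k)) ^ N) * (((ι (j₁ k)) ^ N)⁻¹ * h) := by
                rw [hconj]
            _ = w * (ι p * sh ^ e * h) := by group
        -- last part by induction
        have hform : ι ((j₁ k)⁻¹ ^ N) * h ∈ Form ι sh m := form_mul_left ι sh _ hh
        have step3 : Walk χ X 0 (w * ι p' * sh ^ e)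
            ((w * ι p' * sh ^ e) * (ι ((j₁ k)⁻¹ ^ N) * h)) := by
          refine ih _ hform _ ?_ ?_
          · rw [hχz]; linarith
          · rw [key]; exact hwg
        rw [key] at step3
        exact (step1.trans step2).trans step3
  -- any two sufficiently high points are connected w.r.t. X
  have core : ∀ a b, v ≤ χ a → v ≤ χ b → Walk χ X 0 a b := by
    intro a b ha hb
    obtain ⟨m, hm⟩ := form_exists ι sh hgen (a⁻¹ * b)
    have h1' := Qlem m _ hm a ha (by rwa [mul_inv_cancel_left])
    rwa [mul_inv_cancel_left] at h1'
  -- conclude via the transfer theorem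
  refine ⟨hχ, hχ0, ?_⟩
  intro S hS x y hx hy
  have hwalk := transfer hχ hχ0 hXfin core S hS x y hx hy
  refine Relation.ReflTransGen.mono ?_ _ _ hwalk
  rintro a b ⟨h1', h2', s, hsS, hab⟩
  exact ⟨h1', h2', s, hsS, hab⟩
end

section
/- Let Π = Π₁ *_K Π₂ be an amalgamated free product of finitely generated groups over a finitely generated subgroup K. If χ: Π → ℝ is a character with [χ|_{Π₁}] ∈ Σ¹(Π₁), [χ|_{Π₂}] ∈ Σ¹(Π₂), and χ|_K ≠ 0, then [χ] ∈ Σ¹(Π). -/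
namespace Stmt15Aux

open Relation Subgroup

variable {G : Type*} [Group G]

/-- A single Cayley step with respect to generating set `U`. -/
def Step (U : Set G) (a b : G) : Prop := ∃ s ∈ U, b = a * s ∨ a = b * s

/-- A step staying at χ-level ≥ c. -/
def Rel (χ : G → ℝ) (U : Set G) (c : ℝ) (a b : G) : Prop :=
  c ≤ χ a ∧ c ≤ χ b ∧ Step U a b

theorem char_one {χ : G → ℝ} (hχ : IsChar χ) : χ 1 = 0 := by
  have := hχ 1 1; simp only [mul_one] at this; linarith

theorem char_inv {χ : G → ℝ} (hχ : IsChar χ) (g : G) : χ g⁻¹ = -χ g := by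
  have := hχ g g⁻¹; rw [mul_inv_cancel, char_one hχ] at this; linarith

theorem char_pow {χ : G → ℝ} (hχ : IsChar χ) (g : G) (n : ℕ) : χ (g ^ n) = n * χ g := by
  induction n with
  | zero => simpa using char_one hχ
  | succ n ih => rw [pow_succ, hχ, ih]; push_cast; ring

theorem step_symm {U : Set G} {a b : G} (h : Step U a b) : Step U b a := by
  obtain ⟨s, hs, h | h⟩ := h
  exacts [⟨s, hs, Or.inr h⟩, ⟨s, hs, Or.inl h⟩]

theorem rel_symm {χ : G → ℝ} {U : Set G} {c : ℝ} : Symmetric (Rel χ U c) :=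
  fun _ _ ⟨h1, h2, h3⟩ => ⟨h2, h1, step_symm h3⟩

theorem rtg_symm {χ : G → ℝ} {U : Set G} {c : ℝ} {x y : G}
    (h : ReflTransGen (Rel χ U c) x y) : ReflTransGen (Rel χ U c) y x :=
  by haveI : Std.Symm (Rel χ U c) := ⟨fun _ _ h' => rel_symm h'⟩; exact Std.Symm.symm x y h

theorem rel_mono {χ : G → ℝ} {U : Set G} {c c' : ℝ} (h : c' ≤ c) {x y : G}
    (hp : ReflTransGen (Rel χ U c) x y) : ReflTransGen (Rel χ U c') x y :=
  ReflTransGen.mono (show ∀ a b, Rel χ U c a b → Rel χ U c' a b from fun _ _ ⟨h1, h2, h3⟩ => ⟨h.trans h1, h.trans h2, h3⟩) x y hp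

theorem rel_translate {χ : G → ℝ} (hχ : IsChar χ) {U : Set G} {c : ℝ} {x y : G} (h : G)
    (hp : ReflTransGen (Rel χ U c) x y) :
    ReflTransGen (Rel χ U (c + χ h)) (h * x) (h * y) := by
  induction hp with
  | refl => exact .refl
  | tail _ hbc ih =>
      obtain ⟨h1, h2, s, hs, hc | hc⟩ := hbc
      · exact ih.tail ⟨by rw [hχ]; linarith, by rw [hχ]; linarith,
          s, hs, Or.inl (by rw [hc, mul_assoc])⟩
      · exact ih.tail ⟨by rw [hχ]; linarith, by rw [hχ]; linarith,
          s, hs, Or.inr (by rw [hc, mul_assoc])⟩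

/-- For any `g`, there is a dip-bound `D` such that from any vertex `x` one can walk to
`x*g` along `S`-edges staying above `χ x - D`. -/
theorem exists_dip {χ : G → ℝ} (hχ : IsChar χ) {S : Finset G}
    (hS : closure (S : Set G) = ⊤) (g : G) :
    ∃ D : ℝ, 0 ≤ D ∧ ∀ x : G, ReflTransGen (Rel χ (S : Set G) (χ x - D)) x (x * g) := by
  have hg : g ∈ closure (S : Set G) := hS ▸ mem_top g
  induction hg using closure_induction with
  | mem s hs =>
      refine ⟨max 0 (-χ s), le_max_left _ _, fun x => ReflTransGen.single ?_⟩
      refine ⟨by simp, ?_, s, hs, Or.inl rfl⟩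
      rw [hχ]
      have := le_max_right 0 (-χ s); linarith
  | one => exact ⟨0, le_refl _, fun x => by simpa using ReflTransGen.refl⟩
  | mul a b _ _ iha ihb =>
      obtain ⟨Da, hDa, ha⟩ := iha
      obtain ⟨Db, hDb, hb⟩ := ihb
      refine ⟨max Da (Db - χ a), le_trans hDa (le_max_left _ _), fun x => ?_⟩
      refine (rel_mono (by have := le_max_left Da (Db - χ a); linarith) (ha x)).trans ?_
      have h3 := hb (x * a)
      rw [hχ x a] at h3
      rw [← mul_assoc]
      exact rel_mono (by have := le_max_right Da (Db - χ a); linarith) h3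
  | inv a _ iha =>
      obtain ⟨Da, hDa, ha⟩ := iha
      refine ⟨max 0 (Da + χ a), le_max_left _ _, fun x => ?_⟩
      have h1 := ha (x * a⁻¹)
      rw [inv_mul_cancel_right, hχ x a⁻¹, char_inv hχ] at h1
      have h2 := rtg_symm h1
      exact rel_mono (by have := le_max_right 0 (Da + χ a); linarith) h2

/-- Uniform dip bound over a finite set of group elements (and their inverses). -/
theorem exists_dip_finset {χ : G → ℝ} (hχ : IsChar χ) {S : Finset G}
    (hS : closure (S : Set G) = ⊤) (T : Finset G) :
    ∃ D : ℝ, 0 ≤ D ∧ ∀ t ∈ T, ∀ x : G,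
      ReflTransGen (Rel χ (S : Set G) (χ x - D)) x (x * t) ∧
      ReflTransGen (Rel χ (S : Set G) (χ x - D)) x (x * t⁻¹) := by
  classical
  induction T using Finset.induction with
  | empty => exact ⟨0, le_refl _, by simp⟩
  | @insert t T htT ih =>
      obtain ⟨D, hD, hall⟩ := ih
      obtain ⟨D1, hD1, h1⟩ := exists_dip hχ hS t
      obtain ⟨D2, hD2, h2⟩ := exists_dip hχ hS t⁻¹
      refine ⟨max D (max D1 D2), le_trans hD (le_max_left _ _), fun u hu x => ?_⟩
      have e1 : D ≤ max D (max D1 D2) := le_max_left _ _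
      have e2 : D1 ≤ max D (max D1 D2) := le_trans (le_max_left _ _) (le_max_right _ _)
      have e3 : D2 ≤ max D (max D1 D2) := le_trans (le_max_right _ _) (le_max_right _ _)
      rcases Finset.mem_insert.1 hu with rfl | hu
      · exact ⟨rel_mono (by linarith) (h1 x), rel_mono (by linarith) (h2 x)⟩
      · exact ⟨rel_mono (by linarith) ((hall u hu x).1),
          rel_mono (by linarith) ((hall u hu x).2)⟩

/-- Substituting `S`-words for `T`-edges: a `T`-path at level `L` yields an
`S`-path at level `L - D`. -/
theorem subst {χ : G → ℝ} {S T : Finset G} {D L : ℝ} {x y : G}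
    (hD : ∀ t ∈ T, ∀ x : G,
      ReflTransGen (Rel χ (S : Set G) (χ x - D)) x (x * t) ∧
      ReflTransGen (Rel χ (S : Set G) (χ x - D)) x (x * t⁻¹))
    (h : ReflTransGen (Rel χ (T : Set G) L) x y) :
    ReflTransGen (Rel χ (S : Set G) (L - D)) x y := by
  induction h with
  | refl => exact .refl
  | @tail b c _ hbc ih =>
      obtain ⟨h1, h2, t, ht, hc | hc⟩ := hbc
      · subst hc
        exact ih.trans (rel_mono (by linarith) ((hD t ht _).1))
      · have hcc : c = b * t⁻¹ := by rw [hc, mul_inv_cancel_right]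
        rw [hcc]
        exact ih.trans (rel_mono (by linarith) ((hD t ht _).2))

/-- Climbing with a strictly positive generator. -/
theorem climb {χ : G → ℝ} (hχ : IsChar χ) {S : Finset G} {s : G}
    (hs : ∀ a : G, Step (S : Set G) a (a * s)) (hpos : 0 < χ s) {x : G} (hx : 0 ≤ χ x)
    (n : ℕ) : ReflTransGen (Rel χ (S : Set G) 0) x (x * s ^ n) := by
  induction n with
  | zero => simpa using ReflTransGen.refl
  | succ n ih =>
      refine ih.tail ⟨?_, ?_, ?_⟩
      · rw [hχ, char_pow hχ]
        have : (0:ℝ) ≤ n := Nat.cast_nonneg n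
        nlinarith
      · rw [hχ, char_pow hχ]
        push_cast
        have : (0:ℝ) ≤ n := Nat.cast_nonneg n
        nlinarith
      · have := hs (x * s ^ n)
        rw [pow_succ, ← mul_assoc]
        exact this

/-- If `χ` is nonzero somewhere and `S` generates, there is an `S`-step direction with
strictly positive `χ`. -/
theorem exists_pos_step {χ : G → ℝ} (hχ : IsChar χ) {S : Finset G}
    (hS : closure (S : Set G) = ⊤) {g₀ : G} (hg₀ : χ g₀ ≠ 0) :
    ∃ s : G, 0 < χ s ∧ ∀ a : G, Step (S : Set G) a (a * s) := by
  by_cases h : ∀ s ∈ S, χ s = 0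
  · exfalso
    let Z : Subgroup G :=
      { carrier := {g | χ g = 0}
        one_mem' := char_one hχ
        mul_mem' := fun {a b} ha hb => by
          simp only [Set.mem_setOf_eq] at *
          rw [hχ]; rw [ha, hb]; ring
        inv_mem' := fun {a} ha => by
          simp only [Set.mem_setOf_eq] at *
          rw [char_inv hχ, ha]; ring }
    have hle : closure (S : Set G) ≤ Z := (closure_le Z).2 (fun s hs => h s hs)
    rw [hS] at hle
    exact hg₀ (hle (mem_top g₀))
  · push_neg at h
    obtain ⟨s, hsS, hs⟩ := h
    rcases hs.lt_or_gt with hneg | hpos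
    · refine ⟨s⁻¹, by rw [char_inv hχ]; linarith, fun a => ⟨s, hsS, Or.inr ?_⟩⟩
      group
    · exact ⟨s, hpos, fun a => ⟨s, hsS, Or.inl rfl⟩⟩

/-- Every element of a group generated by a symmetric set `A` is a product of a list
of elements of `A`. -/
theorem exists_list {A : Set G} (hinv : ∀ a ∈ A, a⁻¹ ∈ A) (hA : closure A = ⊤) (g : G) :
    ∃ l : List G, (∀ a ∈ l, a ∈ A) ∧ l.prod = g := by
  have hg : g ∈ closure A := hA ▸ mem_top g
  induction hg using closure_induction with
  | mem s hs => exact ⟨[s], by simpa using hs, by simp⟩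
  | one => exact ⟨[], by simp, by simp⟩
  | mul a b _ _ iha ihb =>
      obtain ⟨la, h1a, h2a⟩ := iha
      obtain ⟨lb, h1b, h2b⟩ := ihb
      refine ⟨la ++ lb, ?_, by simp [h2a, h2b]⟩
      intro x hx
      rcases List.mem_append.1 hx with h | h
      exacts [h1a x h, h1b x h]
  | inv a _ iha =>
      obtain ⟨la, h1a, h2a⟩ := iha
      refine ⟨(la.map (·⁻¹)).reverse, ?_, ?_⟩
      · intro x hx
        simp only [List.mem_reverse, List.mem_map] at hx
        obtain ⟨b, hb, rfl⟩ := hx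
        exact hinv b (h1a b hb)
      · rw [List.prod_reverse_noncomm, List.map_map]
        simp only [Function.comp_def, inv_inv, List.map_id']
        rw [h2a]

end Stmt15Aux


theorem amal_comm {K P₁ P₂ : Type*} [Group K] [Group P₁] [Group P₂]
    (j₁ : K →* P₁) (j₂ : K →* P₂) (k : K) :
    amalInl j₁ j₂ (j₁ k) = amalInr j₁ j₂ (j₂ k) := by
  show (QuotientGroup.mk (Monoid.Coprod.inl (j₁ k)) : Amal j₁ j₂) =
    QuotientGroup.mk (Monoid.Coprod.inr (j₂ k))
  rw [QuotientGroup.eq]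
  have hx : Monoid.Coprod.inl (j₁ k) * (Monoid.Coprod.inr (j₂ k))⁻¹ ∈
      Subgroup.normalClosure
        {x : Monoid.Coprod P₁ P₂ |
          ∃ k : K, x = Monoid.Coprod.inl (j₁ k) * (Monoid.Coprod.inr (j₂ k))⁻¹} :=
    Subgroup.subset_normalClosure ⟨k, rfl⟩
  have h2 := Subgroup.normalClosure_normal.conj_mem _
    (Subgroup.inv_mem _ hx) (Monoid.Coprod.inl (j₁ k))⁻¹
  convert h2 using 1
  group

/-- for an amalgam `Π = Π₁ *_K Π₂` of finitely generated groups over a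
finitely generated subgroup `K`, a character `χ` of `Π` with `[χ|_{Π₁}] ∈ Σ¹(Π₁)`,
`[χ|_{Π₂}] ∈ Σ¹(Π₂)` and `χ|_K ≠ 0` satisfies `[χ] ∈ Σ¹(Π)`. -/
theorem stmt15 {K P₁ P₂ : Type*} [Group K] [Group P₁] [Group P₂]
    (hK : Group.FG K) (h1 : Group.FG P₁) (h2 : Group.FG P₂)
    (j₁ : K →* P₁) (j₂ : K →* P₂)
    (hj₁ : Function.Injective j₁) (hj₂ : Function.Injective j₂)
    (χ : Amal j₁ j₂ → ℝ) (hχ : IsChar χ)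
    (hχ1 : InSigma1 (χ ∘ amalInl j₁ j₂))
    (hχ2 : InSigma1 (χ ∘ amalInr j₁ j₂))
    (hχK : ∃ k : K, χ (amalInl j₁ j₂ (j₁ k)) ≠ 0) :
    InSigma1 χ := by
  classical
  open Stmt15Aux Relation in
  obtain ⟨hchar1, hne1, hconn1⟩ := hχ1
  obtain ⟨hchar2, hne2, hconn2⟩ := hχ2
  obtain ⟨S₁, hS₁⟩ : ∃ S : Finset P₁, Subgroup.closure (S : Set P₁) = ⊤ := by
    obtain ⟨S, hS, hfin⟩ := Group.fg_iff.1 h1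
    exact ⟨hfin.toFinset, by rwa [Set.Finite.coe_toFinset]⟩
  obtain ⟨S₂, hS₂⟩ : ∃ S : Finset P₂, Subgroup.closure (S : Set P₂) = ⊤ := by
    obtain ⟨S, hS, hfin⟩ := Group.fg_iff.1 h2
    exact ⟨hfin.toFinset, by rwa [Set.Finite.coe_toFinset]⟩
  obtain ⟨k', hk'⟩ := hχK
  set ι₁ := amalInl j₁ j₂ with hι₁
  set ι₂ := amalInr j₁ j₂ with hι₂
  obtain ⟨k₀, ha⟩ : ∃ k₀ : K, 0 < χ (ι₁ (j₁ k₀)) := by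
    rcases hk'.lt_or_gt with h | h
    · refine ⟨k'⁻¹, ?_⟩
      rw [map_inv, map_inv, char_inv hχ]
      linarith
    · exact ⟨k', h⟩
  set z := ι₁ (j₁ k₀) with hz
  have hzz : z = ι₂ (j₂ k₀) := amal_comm j₁ j₂ k₀
  set T : Finset (Amal j₁ j₂) := S₁.image ι₁ ∪ S₂.image ι₂ with hT
  -- lifting Σ¹-paths of the factors into the amalgam
  have lift₁ : ∀ (x : Amal j₁ j₂) (p q : P₁), 0 ≤ χ x →
      Relation.ReflTransGen
        (fun a b => 0 ≤ (χ ∘ ι₁) a ∧ 0 ≤ (χ ∘ ι₁) b ∧ ∃ s ∈ S₁, b = a * s ∨ a = b * s) p q →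
      Relation.ReflTransGen (Rel χ (T : Set (Amal j₁ j₂)) 0) (x * ι₁ p) (x * ι₁ q) := by
    intro x p q hx h
    induction h with
    | refl => exact .refl
    | @tail u v _ huv ih =>
        obtain ⟨hu1, hu2, s, hs, hc | hc⟩ := huv
        · refine ih.tail ⟨by rw [hχ]; exact add_nonneg hx hu1,
            by rw [hχ]; exact add_nonneg hx hu2, ι₁ s, ?_, Or.inl ?_⟩
          · exact Finset.mem_coe.2 (Finset.mem_union_left _ (Finset.mem_image_of_mem _ hs))
          · rw [hc, map_mul, mul_assoc]
        · refine ih.tail ⟨by rw [hχ]; exact add_nonneg hx hu1,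
            by rw [hχ]; exact add_nonneg hx hu2, ι₁ s, ?_, Or.inr ?_⟩
          · exact Finset.mem_coe.2 (Finset.mem_union_left _ (Finset.mem_image_of_mem _ hs))
          · rw [hc, map_mul, mul_assoc]
  have lift₂ : ∀ (x : Amal j₁ j₂) (p q : P₂), 0 ≤ χ x →
      Relation.ReflTransGen
        (fun a b => 0 ≤ (χ ∘ ι₂) a ∧ 0 ≤ (χ ∘ ι₂) b ∧ ∃ s ∈ S₂, b = a * s ∨ a = b * s) p q →
      Relation.ReflTransGen (Rel χ (T : Set (Amal j₁ j₂)) 0) (x * ι₂ p) (x * ι₂ q) := by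
    intro x p q hx h
    induction h with
    | refl => exact .refl
    | @tail u v _ huv ih =>
        obtain ⟨hu1, hu2, s, hs, hc | hc⟩ := huv
        · refine ih.tail ⟨by rw [hχ]; exact add_nonneg hx hu1,
            by rw [hχ]; exact add_nonneg hx hu2, ι₂ s, ?_, Or.inl ?_⟩
          · exact Finset.mem_coe.2 (Finset.mem_union_right _ (Finset.mem_image_of_mem _ hs))
          · rw [hc, map_mul, mul_assoc]
        · refine ih.tail ⟨by rw [hχ]; exact add_nonneg hx hu1,
            by rw [hχ]; exact add_nonneg hx hu2, ι₂ s, ?_, Or.inr ?_⟩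
          · exact Finset.mem_coe.2 (Finset.mem_union_right _ (Finset.mem_image_of_mem _ hs))
          · rw [hc, map_mul, mul_assoc]
  have hcharc1 : (χ ∘ ι₁) 1 = 0 := by
    simp only [Function.comp_apply, map_one]; exact char_one hχ
  have hcharc2 : (χ ∘ ι₂) 1 = 0 := by
    simp only [Function.comp_apply, map_one]; exact char_one hχ
  -- dropping the last letter of a word, at the cost of multiplying by z^m
  have drop₁ : ∀ (b : Amal j₁ j₂) (p : P₁) (m : ℕ), 0 ≤ χ (b * ι₁ p) → χ (ι₁ p) ≤ m * χ z →
      Relation.ReflTransGen (Rel χ (T : Set (Amal j₁ j₂)) 0) (b * ι₁ p) (b * z ^ m) := by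
    intro b p m hx hm
    have hval : (χ ∘ ι₁) (p⁻¹ * (j₁ k₀) ^ m) = -χ (ι₁ p) + m * χ z := by
      simp only [Function.comp_apply, map_mul, map_inv, map_pow]
      rw [hχ, char_inv hχ, char_pow hχ, ← hz]
    have hpath := hconn1 S₁ hS₁ 1 (p⁻¹ * (j₁ k₀) ^ m) (le_of_eq hcharc1.symm)
      (by rw [hval]; linarith)
    have hres := lift₁ (b * ι₁ p) 1 (p⁻¹ * (j₁ k₀) ^ m) hx hpath
    have e : b * ι₁ p * ι₁ (p⁻¹ * (j₁ k₀) ^ m) = b * z ^ m := by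
      rw [map_mul, map_inv, map_pow, ← hz]
      group
    rwa [map_one, mul_one, e] at hres
  have drop₂ : ∀ (b : Amal j₁ j₂) (p : P₂) (m : ℕ), 0 ≤ χ (b * ι₂ p) → χ (ι₂ p) ≤ m * χ z →
      Relation.ReflTransGen (Rel χ (T : Set (Amal j₁ j₂)) 0) (b * ι₂ p) (b * z ^ m) := by
    intro b p m hx hm
    have hval : (χ ∘ ι₂) (p⁻¹ * (j₂ k₀) ^ m) = -χ (ι₂ p) + m * χ z := by
      simp only [Function.comp_apply, map_mul, map_inv, map_pow]
      rw [hχ, char_inv hχ, char_pow hχ, hzz]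
    have hpath := hconn2 S₂ hS₂ 1 (p⁻¹ * (j₂ k₀) ^ m) (le_of_eq hcharc2.symm)
      (by rw [hval]; linarith)
    have hres := lift₂ (b * ι₂ p) 1 (p⁻¹ * (j₂ k₀) ^ m) hx hpath
    have e : b * ι₂ p * ι₂ (p⁻¹ * (j₂ k₀) ^ m) = b * z ^ m := by
      rw [map_mul, map_inv, map_pow, hzz]
      group
    rwa [map_one, mul_one, e] at hres
  have base₁ : ∀ p : P₁, 0 ≤ χ (ι₁ p) → Relation.ReflTransGen
      (Rel χ (T : Set (Amal j₁ j₂)) 0) (ι₁ p) 1 := by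
    intro p hp
    have hpath := hconn1 S₁ hS₁ p 1 hp (le_of_eq hcharc1.symm)
    have := lift₁ 1 p 1 (le_of_eq (char_one hχ).symm) hpath
    simpa using this
  have base₂ : ∀ p : P₂, 0 ≤ χ (ι₂ p) → Relation.ReflTransGen
      (Rel χ (T : Set (Amal j₁ j₂)) 0) (ι₂ p) 1 := by
    intro p hp
    have hpath := hconn2 S₂ hS₂ p 1 hp (le_of_eq hcharc2.symm)
    have := lift₂ 1 p 1 (le_of_eq (char_one hχ).symm) hpath
    simpa using this
  -- the sheets generate the amalgam
  set A : Set (Amal j₁ j₂) := Set.range ι₁ ∪ Set.range ι₂ with hA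
  have hAinv : ∀ g ∈ A, g⁻¹ ∈ A := by
    rintro g (⟨p, rfl⟩ | ⟨p, rfl⟩)
    · exact Or.inl ⟨p⁻¹, map_inv _ _⟩
    · exact Or.inr ⟨p⁻¹, map_inv _ _⟩
  have hAgen : Subgroup.closure A = ⊤ := by
    rw [eq_top_iff]
    intro g _
    refine QuotientGroup.induction_on g ?_
    intro w
    refine Monoid.Coprod.induction_on w ?_ ?_ ?_
    · intro m; exact Subgroup.subset_closure (Or.inl ⟨m, rfl⟩)
    · intro n; exact Subgroup.subset_closure (Or.inr ⟨n, rfl⟩)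
    · intro u v hu hv
      rw [QuotientGroup.mk_mul]
      exact Subgroup.mul_mem _ hu hv
  -- key: induction on word length
  have key : ∀ (n : ℕ) (l : List (Amal j₁ j₂)), l.length = n → (∀ g ∈ l, g ∈ A) →
      0 ≤ χ l.prod →
      Relation.ReflTransGen (Rel χ (T : Set (Amal j₁ j₂)) 0) l.prod 1 := by
    intro n
    induction n with
    | zero =>
        intro l hl _ _
        rw [List.length_eq_zero_iff.1 hl]
        exact .refl
    | succ n ih =>
        intro l hl hmem hpos
        rcases List.eq_nil_or_concat l with rfl | ⟨l', g, rfl⟩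
        · simp at hl
        · have hg : g ∈ A := hmem g (by simp [List.concat_eq_append])
          have hl' : l'.length = n := by
            simpa [List.concat_eq_append] using hl
          have hprod : (l'.concat g).prod = l'.prod * g := by
            simp [List.concat_eq_append]
          rcases List.eq_nil_or_concat l' with rfl | ⟨l'', g', rfl⟩
          · -- single letter
            rcases hg with ⟨p, rfl⟩ | ⟨p, rfl⟩
            · rw [hprod]; simp only [List.prod_nil, one_mul]
              exact base₁ p (by rw [hprod] at hpos; simpa using hpos)
            · rw [hprod]; simp only [List.prod_nil, one_mul]
              exact base₂ p (by rw [hprod] at hpos; simpa using hpos)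
          · -- at least two letters; drop the last one
            have hg' : g' ∈ A := hmem g' (by simp [List.concat_eq_append])
            have hb : ((l''.concat g').concat g).prod = (l''.concat g').prod * g := hprod
            set b := (l''.concat g').prod with hbdef
            rcases hg with ⟨p, rfl⟩ | ⟨p, rfl⟩
            · obtain ⟨m, hm⟩ := exists_nat_ge (max (χ (ι₁ p)) (-χ b) / χ z)
              have hm' : max (χ (ι₁ p)) (-χ b) ≤ m * χ z := by
                rw [div_le_iff₀ ha] at hm; linarith
              have hm1 : χ (ι₁ p) ≤ m * χ z := le_trans (le_max_left _ _) hm'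
              have hm2 : -χ b ≤ m * χ z := le_trans (le_max_right _ _) hm'
              have hdrop := drop₁ b p m (by rw [← hb]; exact hpos) hm1
              have hnew : g' * z ^ m ∈ A := by
                rcases hg' with ⟨q, rfl⟩ | ⟨q, rfl⟩
                · exact Or.inl ⟨q * (j₁ k₀) ^ m, by rw [map_mul, map_pow, ← hz]⟩
                · exact Or.inr ⟨q * (j₂ k₀) ^ m, by rw [map_mul, map_pow, ← hzz]⟩
              have hlen : (l''.concat (g' * z ^ m)).length = n := by
                simpa [List.concat_eq_append] using hl'
              have hmem' : ∀ x ∈ l''.concat (g' * z ^ m), x ∈ A := by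
                intro x hx
                rw [List.concat_eq_append, List.mem_append, List.mem_singleton] at hx
                rcases hx with hx | rfl
                · exact hmem x (by simp [List.concat_eq_append, hx])
                · exact hnew
              have hprodnew : (l''.concat (g' * z ^ m)).prod = b * z ^ m := by
                simp only [List.concat_eq_append, List.prod_append, List.prod_cons,
                  List.prod_nil, mul_one] at hbdef ⊢
                rw [hbdef, mul_assoc]
              have hposnew : 0 ≤ χ ((l''.concat (g' * z ^ m)).prod) := by
                rw [hprodnew, hχ, char_pow hχ]
                linarith
              have htail := ih (l''.concat (g' * z ^ m)) hlen hmem' hposnew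
              rw [hprodnew] at htail
              rw [hb]
              exact hdrop.trans htail
            · obtain ⟨m, hm⟩ := exists_nat_ge (max (χ (ι₂ p)) (-χ b) / χ z)
              have hm' : max (χ (ι₂ p)) (-χ b) ≤ m * χ z := by
                rw [div_le_iff₀ ha] at hm; linarith
              have hm1 : χ (ι₂ p) ≤ m * χ z := le_trans (le_max_left _ _) hm'
              have hm2 : -χ b ≤ m * χ z := le_trans (le_max_right _ _) hm'
              have hdrop := drop₂ b p m (by rw [← hb]; exact hpos) hm1
              have hnew : g' * z ^ m ∈ A := by
                rcases hg' with ⟨q, rfl⟩ | ⟨q, rfl⟩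
                · exact Or.inl ⟨q * (j₁ k₀) ^ m, by rw [map_mul, map_pow, ← hz]⟩
                · exact Or.inr ⟨q * (j₂ k₀) ^ m, by rw [map_mul, map_pow, ← hzz]⟩
              have hlen : (l''.concat (g' * z ^ m)).length = n := by
                simpa [List.concat_eq_append] using hl'
              have hmem' : ∀ x ∈ l''.concat (g' * z ^ m), x ∈ A := by
                intro x hx
                rw [List.concat_eq_append, List.mem_append, List.mem_singleton] at hx
                rcases hx with hx | rfl
                · exact hmem x (by simp [List.concat_eq_append, hx])
                · exact hnew
              have hprodnew : (l''.concat (g' * z ^ m)).prod = b * z ^ m := by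
                simp only [List.concat_eq_append, List.prod_append, List.prod_cons,
                  List.prod_nil, mul_one] at hbdef ⊢
                rw [hbdef, mul_assoc]
              have hposnew : 0 ≤ χ ((l''.concat (g' * z ^ m)).prod) := by
                rw [hprodnew, hχ, char_pow hχ]
                linarith
              have htail := ih (l''.concat (g' * z ^ m)) hlen hmem' hposnew
              rw [hprodnew] at htail
              rw [hb]
              exact hdrop.trans htail
  have connT : ∀ x y : Amal j₁ j₂, 0 ≤ χ x → 0 ≤ χ y →
      Relation.ReflTransGen (Rel χ (T : Set (Amal j₁ j₂)) 0) x y := by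
    intro x y hx hy
    obtain ⟨lx, hlx, hpx⟩ := exists_list hAinv hAgen x
    obtain ⟨ly, hly, hpy⟩ := exists_list hAinv hAgen y
    have h1 := key lx.length lx rfl hlx (by rw [hpx]; exact hx)
    have h2 := key ly.length ly rfl hly (by rw [hpy]; exact hy)
    rw [hpx] at h1; rw [hpy] at h2
    exact h1.trans (rtg_symm h2)
  -- now prove the result for an arbitrary generating set
  refine ⟨hχ, ?_, ?_⟩
  · intro h0
    exact hk' (by rw [h0])
  · intro S hS x y hx hy
    obtain ⟨sp, hsp_pos, hsp_step⟩ := exists_pos_step hχ hS (ne_of_gt ha)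
    obtain ⟨D, hD0, hDall⟩ := exists_dip_finset hχ hS T
    obtain ⟨n, hn⟩ := exists_nat_ge ((D - χ x) / χ sp)
    have hn' : D - χ x ≤ n * χ sp := by rw [div_le_iff₀ hsp_pos] at hn; linarith
    obtain ⟨M, hM⟩ := exists_nat_ge ((χ (x * sp ^ n) - χ y) / χ sp)
    have hM' : χ (x * sp ^ n) - χ y ≤ M * χ sp := by
      rw [div_le_iff₀ hsp_pos] at hM; linarith
    have hxn : χ (x * sp ^ n) = χ x + n * χ sp := by rw [hχ, char_pow hχ]
    have hyM : χ (y * sp ^ M) = χ y + M * χ sp := by rw [hχ, char_pow hχ]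
    have hχh : D ≤ χ (x * sp ^ n) := by rw [hxn]; linarith
    have hχw : χ (x * sp ^ n) ≤ χ (y * sp ^ M) := by rw [hyM]; linarith
    have p1 := climb hχ hsp_step hsp_pos hx n
    have p2 := climb hχ hsp_step hsp_pos hy M
    have p3 : Relation.ReflTransGen (Rel χ (T : Set (Amal j₁ j₂)) 0) 1
        ((x * sp ^ n)⁻¹ * (y * sp ^ M)) := by
      refine connT _ _ (le_of_eq (char_one hχ).symm) ?_
      rw [hχ, char_inv hχ]
      linarith
    have p4 := rel_translate hχ (x * sp ^ n) p3
    rw [mul_one, mul_inv_cancel_left] at p4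
    have p5 := subst hDall p4
    have p6 : Relation.ReflTransGen (Rel χ (S : Set (Amal j₁ j₂)) 0)
        (x * sp ^ n) (y * sp ^ M) := rel_mono (by linarith) p5
    have final := (p1.trans p6).trans (rtg_symm p2)
    exact ReflTransGen.mono (show ∀ a b, Rel χ (S : Set (Amal j₁ j₂)) 0 a b → (fun a b => 0 ≤ χ a ∧ 0 ≤ χ b ∧ ∃ s ∈ S, b = a * s ∨ a = b * s) a b from fun a b ⟨u1, u2, s, hsS, hc⟩ => ⟨u1, u2, s, Finset.mem_coe.1 hsS, hc⟩) _ _ final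
end

section
/- Let G be a finitely generated group and f: G → Γ an epimorphism with finitely generated kernel K. If a nonzero homomorphism χ: Γ → ℝ satisfies [χ] ∈ Σ¹(Γ), then [χ ∘ f] ∈ Σ¹(G); conversely, if [χ ∘ f] ∈ Σ¹(G) then [χ] ∈ Σ¹(Γ). In particular, if Γ algebraically fibers then G algebraically fibers. -/
section Aux

open Relation

variable {G : Type*} [Group G] {c : G → ℝ}

lemma char_one (hc : IsChar c) : c 1 = 0 := by
  have := hc 1 1; rw [mul_one] at this; linarith

lemma char_inv (hc : IsChar c) (a : G) : c a⁻¹ = -c a := by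
  have := hc a a⁻¹; rw [mul_inv_cancel, char_one hc] at this; linarith

lemma char_pow (hc : IsChar c) (a : G) : ∀ n : ℕ, c (a ^ n) = n * c a
  | 0 => by simpa using char_one hc
  | n + 1 => by rw [pow_succ, hc, char_pow hc a n]; push_cast; ring

lemma char_list_prod (hc : IsChar c) : ∀ L : List G, c L.prod = (L.map c).sum
  | [] => by simpa using char_one hc
  | l :: L => by
      rw [List.prod_cons, hc, char_list_prod hc L, List.map_cons, List.sum_cons]

/-- The edge/step relation of the positive part of the Cayley graph. -/
abbrev Step (c : G → ℝ) (S : Finset G) (a b : G) : Prop :=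
  0 ≤ c a ∧ 0 ≤ c b ∧ ∃ s ∈ S, b = a * s ∨ a = b * s

lemma exists_word {S : Set G} {g : G} (hg : g ∈ Subgroup.closure S) :
    ∃ L : List G, (∀ l ∈ L, l ∈ S ∨ l⁻¹ ∈ S) ∧ L.prod = g := by
  have hg' : g ∈ Submonoid.closure (S ∪ S⁻¹) := by
    rw [← Subgroup.closure_toSubmonoid]; exact hg
  obtain ⟨L, hL, hLp⟩ := Submonoid.exists_list_of_mem_closure hg'
  refine ⟨L, fun l hl => ?_, hLp⟩
  rcases hL l hl with h | h
  · exact Or.inl h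
  · exact Or.inr (Set.mem_inv.mp h)

lemma spell (hc : IsChar c) (S : Finset G) :
    ∀ (L : List G) (a : G), (∀ l ∈ L, l ∈ S ∨ l⁻¹ ∈ S) →
      (∀ p : List G, p <+: L → 0 ≤ c (a * p.prod)) →
      ReflTransGen (Step c S) a (a * L.prod)
  | [], a, _, _ => by simpa using ReflTransGen.refl
  | l :: L, a, hlet, hpre => by
    have h0 : 0 ≤ c a := by simpa using hpre [] List.nil_prefix
    have h1 : 0 ≤ c (a * l) := by simpa using hpre [l] ⟨L, rfl⟩
    have hstep : Step c S a (a * l) := by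
      refine ⟨h0, h1, ?_⟩
      rcases hlet l List.mem_cons_self with h | h
      · exact ⟨l, h, Or.inl rfl⟩
      · exact ⟨l⁻¹, h, Or.inr (by group)⟩
    have ih := spell hc S L (a * l) (fun x hx => hlet x (List.mem_cons_of_mem _ hx))
      (fun p hp => by
        obtain ⟨q, hq⟩ := hp
        have := hpre (l :: p) ⟨q, by rw [List.cons_append, hq]⟩
        simpa [List.prod_cons, mul_assoc] using this)
    have := ReflTransGen.head hstep ih
    simpa [List.prod_cons, mul_assoc] using this

lemma le_foldr_max (z : ℝ) : ∀ (l : List ℝ), ∀ x ∈ l, x ≤ l.foldr max z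
  | a :: l, x, hx => by
    rcases List.mem_cons.mp hx with h | h
    · rw [h, List.foldr_cons]; exact le_max_left _ _
    · exact le_trans (le_foldr_max z l x h) (by rw [List.foldr_cons]; exact le_max_right _ _)

lemma init_le_foldr_max (z : ℝ) : ∀ l : List ℝ, z ≤ l.foldr max z
  | [] => le_refl z
  | a :: l => le_trans (init_le_foldr_max z l) (le_max_right _ _)

lemma prefix_replicate {a : G} {n : ℕ} {p : List G} (hp : p <+: List.replicate n a) :
    p = List.replicate p.length a ∧ p.length ≤ n := by
  constructor
  · exact List.eq_replicate_iff.mpr ⟨rfl, fun b hb => List.eq_of_mem_replicate (hp.sublist.subset hb)⟩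
  · simpa using hp.length_le

lemma conjPath (hc : IsChar c) (S : Finset G) {d : G} (hdS : d ∈ S ∨ d⁻¹ ∈ S)
    (hd : 0 < c d) (m : ℕ) {t : G} (ht0 : c t = 0) {W : List G}
    (hWS : ∀ x ∈ W, x ∈ S ∨ x⁻¹ ∈ S) (hWp : W.prod = t)
    (hWdip : ∀ p, p <+: W → -(c p.prod) ≤ (m : ℝ) * c d)
    (g : G) (hg : 0 ≤ c g) :
    ReflTransGen (Step c S) g (g * (d ^ m * t * (d ^ m)⁻¹)) := by
  have hcd : ∀ j : ℕ, c (d ^ j) = j * c d := char_pow hc d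
  have seg1 : ReflTransGen (Step c S) g (g * d ^ m) := by
    have := spell hc S (List.replicate m d) g
      (fun l hl => by rw [List.eq_of_mem_replicate hl]; exact hdS)
      (fun p hp => by
        obtain ⟨hpe, hpl⟩ := prefix_replicate hp
        rw [hpe, List.prod_replicate, hc, hcd]
        have : (0:ℝ) ≤ (p.length : ℝ) * c d := mul_nonneg (Nat.cast_nonneg _) hd.le
        linarith)
    rwa [List.prod_replicate] at this
  have seg2 : ReflTransGen (Step c S) (g * d ^ m) (g * d ^ m * t) := by
    have := spell hc S W (g * d ^ m) hWS (fun p hp => by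
      rw [hc, hc, hcd]
      have h1 := hWdip p hp
      linarith)
    rwa [hWp] at this
  have seg3 : ReflTransGen (Step c S) (g * d ^ m * t) (g * d ^ m * t * (d⁻¹) ^ m) := by
    have := spell hc S (List.replicate m d⁻¹) (g * d ^ m * t)
      (fun l hl => by
        rw [List.eq_of_mem_replicate hl]
        rcases hdS with h | h
        · exact Or.inr (by rwa [inv_inv])
        · exact Or.inl h)
      (fun p hp => by
        obtain ⟨hpe, hpl⟩ := prefix_replicate hp
        rw [hpe, List.prod_replicate, hc, hc, hc, hcd, char_pow hc d⁻¹, char_inv hc, ht0]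
        have hl : (p.length : ℝ) ≤ (m : ℝ) := Nat.cast_le.mpr hpl
        have := mul_le_mul_of_nonneg_right hl hd.le
        linarith)
    rwa [List.prod_replicate] at this
  have htrans := (seg1.trans seg2).trans seg3
  have heq : g * d ^ m * t * (d⁻¹) ^ m = g * (d ^ m * t * (d ^ m)⁻¹) := by
    rw [inv_pow]; group
  rwa [heq] at htrans

lemma ker_path (hc : IsChar c) (S : Finset G) {d : G} (hdS : d ∈ S ∨ d⁻¹ ∈ S)
    (hd : 0 < c d) (m : ℕ) :
    ∀ L : List G,
      (∀ l ∈ L, ∃ t W, c t = 0 ∧ (∀ x ∈ W, x ∈ S ∨ x⁻¹ ∈ S) ∧ W.prod = t ∧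
        (∀ p, p <+: W → -(c p.prod) ≤ (m : ℝ) * c d) ∧ l = d ^ m * t * (d ^ m)⁻¹) →
      ∀ g : G, 0 ≤ c g → ReflTransGen (Step c S) g (g * L.prod)
  | [], _, g, _ => by simpa using ReflTransGen.refl
  | l :: L, hL, g, hg => by
    obtain ⟨t, W, ht0, hWS, hWp, hdip, hl⟩ := hL l List.mem_cons_self
    have h1 : ReflTransGen (Step c S) g (g * l) := by
      rw [hl]; exact conjPath hc S hdS hd m ht0 hWS hWp hdip g hg
    have hcl : c l = 0 := by
      rw [hl, hc, hc, ht0, char_inv hc, char_pow hc]; ring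
    have h2 := ker_path hc S hdS hd m L (fun x hx => hL x (List.mem_cons_of_mem _ hx)) (g * l)
      (by rw [hc, hcl]; linarith)
    have := h1.trans h2
    simpa [List.prod_cons, mul_assoc] using this

lemma exists_up (hc : IsChar c) {S : Finset G} (hS : Subgroup.closure (S : Set G) = ⊤)
    (hne : c ≠ fun _ => 0) : ∃ d : G, (d ∈ S ∨ d⁻¹ ∈ S) ∧ 0 < c d := by
  obtain ⟨g, hg⟩ := Function.ne_iff.mp hne
  obtain ⟨L, hL, hLp⟩ :=
    exists_word (show g ∈ Subgroup.closure (S : Set G) from hS ▸ Subgroup.mem_top g)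
  have hex : ∃ l ∈ L, c l ≠ 0 := by
    by_contra h
    push_neg at h
    apply hg
    rw [← hLp, char_list_prod hc]
    exact List.sum_eq_zero (fun x hx => by
      obtain ⟨l, hl, rfl⟩ := List.mem_map.mp hx; exact h l hl)
  obtain ⟨l, hlL, hl0⟩ := hex
  have hlS : l ∈ S ∨ l⁻¹ ∈ S := by
    rcases hL l hlL with h | h
    · exact Or.inl h
    · exact Or.inr h
  rcases lt_or_gt_of_ne hl0 with h | h
  · refine ⟨l⁻¹, ?_, by rw [char_inv hc]; linarith⟩
    rcases hlS with h' | h'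
    · exact Or.inr (by rwa [inv_inv])
    · exact Or.inl h'
  · exact ⟨l, hlS, h⟩

lemma conj_prod (u : G) : ∀ L : List G, (L.map (fun t => u * t * u⁻¹)).prod = u * L.prod * u⁻¹
  | [] => by simp
  | l :: L => by
      rw [List.map_cons, List.prod_cons, List.prod_cons, conj_prod u L]; group

end Aux

section Main

open Relation

variable {G Γ : Type*} [Group G] [Group Γ]

lemma forward_conn (f : G →* Γ) (hf : Function.Surjective f) {T : Finset G}
    (hT : Subgroup.closure (T : Set G) = f.ker)
    {χ : Γ → ℝ} (hχ : IsChar χ) (hne : (fun g => χ (f g)) ≠ fun _ => 0)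
    (hconn : ∀ S : Finset Γ, Subgroup.closure (S : Set Γ) = ⊤ →
      ∀ x y : Γ, 0 ≤ χ x → 0 ≤ χ y → ReflTransGen (Step χ S) x y)
    (S : Finset G) (hS : Subgroup.closure (S : Set G) = ⊤) (x y : G)
    (hx : 0 ≤ χ (f x)) (hy : 0 ≤ χ (f y)) :
    ReflTransGen (Step (fun g => χ (f g)) S) x y := by
  classical
  set c : G → ℝ := fun g => χ (f g) with hcdef
  have hc : IsChar c := fun a b => by
    show χ (f (a * b)) = χ (f a) + χ (f b)
    rw [map_mul]; exact hχ _ _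
  -- the image generating set of Γ
  have hS' : Subgroup.closure ((S.image f : Finset Γ) : Set Γ) = ⊤ := by
    rw [Finset.coe_image, ← MonoidHom.map_closure, hS, ← MonoidHom.range_eq_map]
    exact MonoidHom.range_eq_top_of_surjective f hf
  have hpath := hconn (S.image f) hS' (f x) (f y) hx hy
  -- lift the path in Γ to a path in G
  have hlift : ∀ b : Γ, ReflTransGen (Step χ (S.image f)) (f x) b →
      ∃ g : G, f g = b ∧ ReflTransGen (Step c S) x g := by
    intro b hb
    induction hb with
    | refl => exact ⟨x, rfl, ReflTransGen.refl⟩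
    | tail hab hstep ih =>
      obtain ⟨g, hg, hpg⟩ := ih
      obtain ⟨h1, h2, s', hs', hcase⟩ := hstep
      obtain ⟨s, hsS, rfl⟩ := Finset.mem_image.mp hs'
      rcases hcase with h | h
      · refine ⟨g * s, by rw [map_mul, hg]; exact h.symm,
          hpg.tail ⟨?_, ?_, s, hsS, Or.inl rfl⟩⟩
        · show 0 ≤ χ (f g); rw [hg]; exact h1
        · show 0 ≤ χ (f (g * s)); rw [map_mul, hg, ← h]; exact h2
      · refine ⟨g * s⁻¹, by rw [map_mul, map_inv, hg, h]; group,
          hpg.tail ⟨?_, ?_, s, hsS, Or.inr (by group)⟩⟩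
        · show 0 ≤ χ (f g); rw [hg]; exact h1
        · show 0 ≤ χ (f (g * s⁻¹)); rw [map_mul, map_inv, hg, h, mul_inv_cancel_right]; exact h2
  obtain ⟨g, hgfy, hpg⟩ := hlift (f y) hpath
  -- find an increasing generator
  obtain ⟨d, hdS, hd⟩ := exists_up hc hS hne
  -- choose words in S for every element
  have hwex : ∀ t : G, ∃ W : List G, (∀ z ∈ W, z ∈ S ∨ z⁻¹ ∈ S) ∧ W.prod = t := by
    intro t
    obtain ⟨L, h1, h2⟩ :=
      exists_word (show t ∈ Subgroup.closure (S : Set G) from hS ▸ Subgroup.mem_top t)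
    exact ⟨L, fun z hz => h1 z hz, h2⟩
  choose w hw1 hw2 using hwex
  -- the dip constant
  set Tlist : List G := T.toList ++ T.toList.map (·⁻¹) with hTlist
  set C : ℝ :=
    (Tlist.map (fun t => ((w t).inits.map (fun p => -(c p.prod))).foldr max 0)).foldr max 0
    with hC
  obtain ⟨m, hm⟩ := exists_nat_ge (C / c d)
  have hmC : C ≤ (m : ℝ) * c d := by
    rw [div_le_iff₀ hd] at hm; linarith
  have hdip : ∀ t : G, (t ∈ T ∨ t⁻¹ ∈ T) → ∀ p, p <+: w t →
      -(c p.prod) ≤ (m : ℝ) * c d := by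
    intro t ht p hp
    have h1 : -(c p.prod) ≤ ((w t).inits.map (fun p => -(c p.prod))).foldr max 0 :=
      le_foldr_max 0 _ _ (List.mem_map.mpr ⟨p, (List.mem_inits _ _).mpr hp, rfl⟩)
    have htl : t ∈ Tlist := by
      rcases ht with h | h
      · exact List.mem_append.mpr (Or.inl (Finset.mem_toList.mpr h))
      · exact List.mem_append.mpr (Or.inr (List.mem_map.mpr ⟨t⁻¹, Finset.mem_toList.mpr h, inv_inv t⟩))
    have h2 : ((w t).inits.map (fun p => -(c p.prod))).foldr max 0 ≤ C :=
      le_foldr_max 0 _ _ (List.mem_map.mpr ⟨t, htl, rfl⟩)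
    linarith
  -- the kernel element
  have hk : g⁻¹ * y ∈ f.ker := by
    rw [MonoidHom.mem_ker, map_mul, map_inv, hgfy, inv_mul_cancel]
  have hk' : (d ^ m)⁻¹ * (g⁻¹ * y) * d ^ m ∈ f.ker := by
    have := (MonoidHom.normal_ker f).conj_mem _ hk (d ^ m)⁻¹
    rwa [inv_inv] at this
  obtain ⟨L', hL1', hL2'⟩ :=
    exists_word (show (d ^ m)⁻¹ * (g⁻¹ * y) * d ^ m ∈ Subgroup.closure (T : Set G) from
      hT.symm ▸ hk')
  set L : List G := L'.map (fun t => d ^ m * t * (d ^ m)⁻¹) with hLdef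
  have hLprod : L.prod = g⁻¹ * y := by
    rw [hLdef, conj_prod, hL2']; group
  have hTker : ∀ t : G, t ∈ T → t ∈ f.ker := by
    intro t ht
    exact hT ▸ Subgroup.subset_closure ht
  have hmem : ∀ l ∈ L, ∃ t W, c t = 0 ∧ (∀ z ∈ W, z ∈ S ∨ z⁻¹ ∈ S) ∧ W.prod = t ∧
      (∀ p, p <+: W → -(c p.prod) ≤ (m : ℝ) * c d) ∧ l = d ^ m * t * (d ^ m)⁻¹ := by
    intro l hl
    obtain ⟨t, htL', rfl⟩ := List.mem_map.mp hl
    have htT : t ∈ T ∨ t⁻¹ ∈ T := hL1' t htL'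
    have htker : t ∈ f.ker := by
      rcases htT with h | h
      · exact hTker t h
      · exact (inv_mem_iff).mp (hTker t⁻¹ h)
    have hct : c t = 0 := by
      show χ (f t) = 0
      rw [MonoidHom.mem_ker.mp htker]
      exact char_one hχ
    exact ⟨t, w t, hct, hw1 t, hw2 t, hdip t htT, rfl⟩
  have hcg : 0 ≤ c g := by show 0 ≤ χ (f g); rw [hgfy]; exact hy
  have hfin := ker_path hc S hdS hd m L hmem g hcg
  rw [hLprod] at hfin
  have : g * (g⁻¹ * y) = y := by group
  rw [this] at hfin
  exact hpg.trans hfin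

lemma backward_conn (f : G →* Γ) (hf : Function.Surjective f) {T : Finset G}
    (hT : Subgroup.closure (T : Set G) = f.ker) {χ : Γ → ℝ}
    (hconn : ∀ S : Finset G, Subgroup.closure (S : Set G) = ⊤ →
      ∀ x y : G, 0 ≤ χ (f x) → 0 ≤ χ (f y) →
        ReflTransGen (Step (fun g => χ (f g)) S) x y)
    (S' : Finset Γ) (hS' : Subgroup.closure (S' : Set Γ) = ⊤) (x y : Γ)
    (hx : 0 ≤ χ x) (hy : 0 ≤ χ y) :
    ReflTransGen (Step χ S') x y := by
  classical
  choose sec hsec using hf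
  set S : Finset G := S'.image sec ∪ T with hSdef
  have hTS : f.ker ≤ Subgroup.closure (S : Set G) := by
    rw [← hT]
    apply Subgroup.closure_mono
    intro a ha
    simp only [hSdef, Finset.coe_union, Set.mem_union]
    exact Or.inr ha
  have hS : Subgroup.closure (S : Set G) = ⊤ := by
    have hmap : Subgroup.map f (Subgroup.closure (S : Set G)) = ⊤ := by
      rw [MonoidHom.map_closure, eq_top_iff, ← hS']
      apply Subgroup.closure_mono
      intro a ha
      refine ⟨sec a, ?_, hsec a⟩
      simp only [hSdef, Finset.coe_union, Set.mem_union, Finset.coe_image]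
      exact Or.inl (Set.mem_image_of_mem sec ha)
    have hcm := Subgroup.comap_map_eq f (Subgroup.closure (S : Set G))
    rw [hmap, Subgroup.comap_top, sup_eq_left.mpr hTS] at hcm
    exact hcm.symm
  have hp := hconn S hS (sec x) (sec y) (by rw [hsec x]; exact hx) (by rw [hsec y]; exact hy)
  have hproj : ∀ b : G, ReflTransGen (Step (fun g => χ (f g)) S) (sec x) b →
      ReflTransGen (Step χ S') x (f b) := by
    intro b hb
    induction hb with
    | refl => rw [hsec x]
    | tail hab hstep ih =>
      obtain ⟨h1, h2, s, hsS, hcase⟩ := hstep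
      rcases Finset.mem_union.mp hsS with hs | hs
      · obtain ⟨s', hs', rfl⟩ := Finset.mem_image.mp hs
        refine ih.tail ⟨h1, h2, s', hs', ?_⟩
        rcases hcase with h | h
        · exact Or.inl (by rw [h, map_mul, hsec])
        · exact Or.inr (by rw [h, map_mul, hsec])
      · have hs1 : f s = 1 := by
          have : s ∈ f.ker := hT ▸ Subgroup.subset_closure hs
          exact MonoidHom.mem_ker.mp this
        rcases hcase with h | h
        · rw [h, map_mul, hs1, mul_one]; exact ih
        · have heq : f _ = f _ := congrArg f h
          rw [map_mul, hs1, mul_one] at heq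
          rw [← heq]; exact ih
  have := hproj (sec y) hp
  rwa [hsec y] at this

lemma fg_of_ker_of_map (f : G →* Γ) (H : Subgroup G)
    (hker : f.ker ≤ H) (h1 : f.ker.FG) (h2 : (H.map f).FG) : H.FG := by
  classical
  obtain ⟨T, hT⟩ := h1
  obtain ⟨U, hU⟩ := h2
  have hlift : ∀ u : Γ, ∃ g : G, u ∈ H.map f → g ∈ H ∧ f g = u := by
    intro u
    by_cases h : u ∈ H.map f
    · obtain ⟨g, hg, hfg⟩ := h
      exact ⟨g, fun _ => ⟨hg, hfg⟩⟩
    · exact ⟨1, fun hh => absurd hh h⟩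
  choose ℓ hℓ using hlift
  refine ⟨T ∪ U.image ℓ, le_antisymm ?_ ?_⟩
  · rw [Subgroup.closure_le]
    intro a ha
    rcases Finset.mem_union.mp ha with h | h
    · exact hker (hT ▸ Subgroup.subset_closure h)
    · obtain ⟨u, hu, rfl⟩ := Finset.mem_image.mp h
      exact (hℓ u (hU ▸ Subgroup.subset_closure hu)).1
  · intro h hh
    have hkH' : f.ker ≤ Subgroup.closure ((T ∪ U.image ℓ : Finset G) : Set G) := by
      rw [← hT]
      apply Subgroup.closure_mono
      exact_mod_cast Finset.coe_subset.mpr Finset.subset_union_left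
    have hfh : f h ∈ Subgroup.map f (Subgroup.closure ((T ∪ U.image ℓ : Finset G) : Set G)) := by
      have hmem : f h ∈ H.map f := ⟨h, hh, rfl⟩
      rw [← hU] at hmem
      have hUle : Subgroup.closure (U : Set Γ) ≤
          Subgroup.map f (Subgroup.closure ((T ∪ U.image ℓ : Finset G) : Set G)) := by
        rw [Subgroup.closure_le]
        intro u hu
        refine ⟨ℓ u, Subgroup.subset_closure ?_, (hℓ u (hU ▸ Subgroup.subset_closure hu)).2⟩
        exact_mod_cast Finset.mem_union_right _ (Finset.mem_image_of_mem ℓ hu)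
      exact hUle hmem
    obtain ⟨h', hh', hfh'⟩ := hfh
    have hkk : h'⁻¹ * h ∈ f.ker := by
      rw [MonoidHom.mem_ker, map_mul, map_inv, hfh', inv_mul_cancel]
    have := mul_mem hh' (hkH' hkk)
    rwa [mul_inv_cancel_left] at this

end Main

/-- let `f : G → Γ` be an epimorphism of a finitely generated group `G`
with finitely generated kernel. A nonzero character `χ` of `Γ` satisfies
`[χ] ∈ Σ¹(Γ)` iff `[χ ∘ f] ∈ Σ¹(G)`. In particular, if `Γ` algebraically fibers,
then so does `G`. -/
theorem stmt18 {G Γ : Type*} [Group G] [Group Γ] (hG : Group.FG G)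
    (f : G →* Γ) (hf : Function.Surjective f) (hker : f.ker.FG) :
    (∀ χ : Γ → ℝ, IsChar χ → χ ≠ (fun _ => 0) →
      (InSigma1 χ ↔ InSigma1 (χ ∘ f))) ∧
    ((∃ ψ : Γ →* Multiplicative ℤ, Function.Surjective ψ ∧ ψ.ker.FG) →
      ∃ φ : G →* Multiplicative ℤ, Function.Surjective φ ∧ φ.ker.FG) := by
  classical
  obtain ⟨T, hT⟩ := id hker
  constructor
  · intro χ hχ hχne
    have hcfne : (fun g => χ (f g)) ≠ (fun _ => 0) := by
      obtain ⟨γ, hγ⟩ := Function.ne_iff.mp hχne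
      obtain ⟨g, rfl⟩ := hf γ
      exact Function.ne_iff.mpr ⟨g, hγ⟩
    constructor
    · rintro ⟨-, -, hconn⟩
      refine ⟨fun a b => by
          show χ (f (a * b)) = χ (f a) + χ (f b)
          rw [map_mul]; exact hχ _ _, hcfne, ?_⟩
      intro S hS x y hx hy
      exact forward_conn f hf hT hχ hcfne hconn S hS x y hx hy
    · rintro ⟨-, -, hconn⟩
      exact ⟨hχ, hχne, fun S' hS' x y hx hy =>
        backward_conn f hf hT hconn S' hS' x y hx hy⟩
  · rintro ⟨ψ, hψs, hψk⟩
    refine ⟨ψ.comp f, hψs.comp hf, ?_⟩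
    have hker_eq : (ψ.comp f).ker = ψ.ker.comap f := (MonoidHom.comap_ker ψ f).symm
    rw [hker_eq]
    have hle : f.ker ≤ ψ.ker.comap f := by
      intro x hx
      have hx1 : f x = 1 := MonoidHom.mem_ker.mp hx
      exact Subgroup.mem_comap.mpr (by rw [hx1]; exact one_mem _)
    have hmap : (ψ.ker.comap f).map f = ψ.ker :=
      Subgroup.map_comap_eq_self_of_surjective hf _
    exact fg_of_ker_of_map f _ hle hker (hmap.symm ▸ hψk)
end

section
/- Let G be a finitely generated group and χ: G → ℤ an epimorphism. Then ker χ is finitely generated if and only if both [χ] and [−χ] lie in the BNS invariant Σ¹(G). -/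
namespace Stmt19

variable {G : Type*} [Group G]

/-- integer value of the character -/
def zv (χ : G →* Multiplicative ℤ) (g : G) : ℤ := Multiplicative.toAdd (χ g)

@[simp] lemma zv_mul (χ : G →* Multiplicative ℤ) (a b : G) :
    zv χ (a * b) = zv χ a + zv χ b := by simp [zv]

@[simp] lemma zv_one (χ : G →* Multiplicative ℤ) : zv χ 1 = 0 := by simp [zv]

@[simp] lemma zv_inv (χ : G →* Multiplicative ℤ) (a : G) : zv χ a⁻¹ = - zv χ a := by simp [zv]

@[simp] lemma zv_zpow (χ : G →* Multiplicative ℤ) (t : G) (n : ℤ) :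
    zv χ (t ^ n) = n * zv χ t := by simp [zv, smul_eq_mul]

@[simp] lemma zv_pow (χ : G →* Multiplicative ℤ) (t : G) (n : ℕ) :
    zv χ (t ^ n) = n * zv χ t := by simp [zv, smul_eq_mul]

lemma zv_mem_ker {χ : G →* Multiplicative ℤ} {a : G} (h : zv χ a = 0) : a ∈ χ.ker := by
  rw [MonoidHom.mem_ker]
  have : Multiplicative.toAdd (χ a) = Multiplicative.toAdd (1 : Multiplicative ℤ) := by
    simpa [zv] using h
  exact Multiplicative.toAdd.injective this

lemma zv_eq_zero_of_mem_ker {χ : G →* Multiplicative ℤ} {a : G} (h : a ∈ χ.ker) :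
    zv χ a = 0 := by
  rw [MonoidHom.mem_ker] at h
  simp [zv, h]

/-- the edge/connectivity relation, integer form -/
def RelZ (χ : G →* Multiplicative ℤ) (S : Finset G) (a b : G) : Prop :=
  0 ≤ zv χ a ∧ 0 ≤ zv χ b ∧ ∃ s ∈ S, b = a * s ∨ a = b * s

lemma relZ_symm {χ : G →* Multiplicative ℤ} {S : Finset G} : Symmetric (RelZ χ S) := by
  rintro a b ⟨ha, hb, s, hs, h⟩
  exact ⟨hb, ha, s, hs, h.symm⟩

/-- every element has a word in `S ∪ S⁻¹` -/
lemma exists_word {S : Finset G} (hS : Subgroup.closure (S : Set G) = ⊤) (g : G) :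
    ∃ L : List G, (∀ a ∈ L, a ∈ S ∨ a⁻¹ ∈ S) ∧ L.prod = g := by
  have hg : g ∈ Submonoid.closure ((S : Set G) ∪ (S : Set G)⁻¹) := by
    rw [← Subgroup.closure_toSubmonoid, hS]
    trivial
  obtain ⟨L, hL, hLp⟩ := Submonoid.exists_list_of_mem_closure hg
  refine ⟨L, fun a ha => ?_, hLp⟩
  rcases hL a ha with h | h
  · exact Or.inl h
  · exact Or.inr (by simpa using h)

/-- dips of a word are bounded -/
lemma exists_dip (χ : G →* Multiplicative ℤ) (L : List G) :
    ∃ c : ℤ, 0 ≤ c ∧ ∀ k : ℕ, -c ≤ zv χ (L.take k).prod := by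
  induction L with
  | nil => exact ⟨0, le_refl 0, fun k => by simp⟩
  | cons a L ih =>
    obtain ⟨c, hc0, hc⟩ := ih
    refine ⟨c + |zv χ a|, by positivity, fun k => ?_⟩
    cases k with
    | zero =>
      have := abs_nonneg (zv χ a)
      simp only [List.take_zero, List.prod_nil, zv_one]
      linarith
    | succ k =>
      have : ((a :: L).take (k+1)).prod = a * (L.take k).prod := by simp
      rw [this, zv_mul]
      have h1 := hc k
      have h2 : -|zv χ a| ≤ zv χ a := neg_abs_le _
      linarith


/-- spelling a word whose prefixes stay nonnegative gives a path -/
lemma spell (χ : G →* Multiplicative ℤ) (S : Finset G) :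
    ∀ (L : List G), (∀ a ∈ L, a ∈ S ∨ a⁻¹ ∈ S) → ∀ v : G,
      (∀ k : ℕ, 0 ≤ zv χ (v * (L.take k).prod)) →
      Relation.ReflTransGen (RelZ χ S) v (v * L.prod) := by
  intro L
  induction L with
  | nil => intro _ v _; simpa using Relation.ReflTransGen.refl
  | cons a L ih =>
    intro hL v hpre
    have hv : 0 ≤ zv χ v := by simpa using hpre 0
    have hva : 0 ≤ zv χ (v * a) := by simpa using hpre 1
    have hstep : RelZ χ S v (v * a) := by
      refine ⟨hv, hva, ?_⟩
      rcases hL a (by simp) with h | h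
      · exact ⟨a, h, Or.inl rfl⟩
      · exact ⟨a⁻¹, h, Or.inr (by group)⟩
    have htail : Relation.ReflTransGen (RelZ χ S) (v * a) ((v * a) * L.prod) := by
      refine ih (fun b hb => hL b (by simp [hb])) (v * a) (fun k => ?_)
      have := hpre (k + 1)
      simpa [mul_assoc] using this
    have : (v * a) * L.prod = v * (a :: L).prod := by simp [mul_assoc]
    rw [this] at htail
    exact Relation.ReflTransGen.head hstep htail

/-- climbing with a positive-value generator -/
lemma climb (χ : G →* Multiplicative ℤ) (S : Finset G) {g₁ : G}
    (hp : 0 < zv χ g₁) (hstep : ∀ a : G, ∃ s ∈ S, a * g₁ = a * s ∨ a = (a * g₁) * s)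
    (v : G) (hv : 0 ≤ zv χ v) (K : ℕ) :
    Relation.ReflTransGen (RelZ χ S) v (v * g₁ ^ K) := by
  induction K with
  | zero => simpa using Relation.ReflTransGen.refl
  | succ K ih =>
    have hlev : 0 ≤ zv χ (v * g₁ ^ K) := by
      rw [zv_mul, zv_pow]
      have : (0:ℤ) ≤ (K : ℤ) * zv χ g₁ := by positivity
      linarith
    have hlev' : 0 ≤ zv χ (v * g₁ ^ K * g₁) := by
      rw [zv_mul]
      linarith
    have hrel : RelZ χ S (v * g₁ ^ K) (v * g₁ ^ K * g₁) := by
      obtain ⟨s, hs, h⟩ := hstep (v * g₁ ^ K)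
      exact ⟨hlev, hlev', s, hs, h⟩
    have : v * g₁ ^ K * g₁ = v * g₁ ^ (K + 1) := by rw [pow_succ, ← mul_assoc]
    rw [this] at hrel
    exact Relation.ReflTransGen.tail ih hrel


lemma finset_bound (T : Finset G) (d : G → ℤ) : ∃ c : ℤ, 0 ≤ c ∧ ∀ a ∈ T, d a ≤ c := by
  classical
  induction T using Finset.induction_on with
  | empty => exact ⟨0, le_refl 0, by simp⟩
  | @insert a T' _ ih =>
    obtain ⟨c, hc0, hc⟩ := ih
    refine ⟨max c (d a), le_trans hc0 (le_max_left _ _), fun b hb => ?_⟩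
    rcases Finset.mem_insert.mp hb with rfl | hb
    · exact le_max_right _ _
    · exact le_trans (hc b hb) (le_max_left _ _)

/-- key lemma: multiplying by a kernel element is a path, provided we start high enough -/
lemma ker_path (χ : G →* Multiplicative ℤ) (S : Finset G)
    (hS : Subgroup.closure (S : Set G) = ⊤)
    (A : Finset G) (hA : Subgroup.closure (A : Set G) = χ.ker) :
    ∃ c : ℤ, 0 ≤ c ∧ ∀ n ∈ χ.ker, ∀ v : G, c ≤ zv χ v →
      Relation.ReflTransGen (RelZ χ S) v (v * n) := by
  classical
  -- chosen words and dip bounds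
  let L : G → List G := fun a => (exists_word hS a).choose
  have hLmem : ∀ a, ∀ b ∈ L a, b ∈ S ∨ b⁻¹ ∈ S := fun a => (exists_word hS a).choose_spec.1
  have hLprod : ∀ a, (L a).prod = a := fun a => (exists_word hS a).choose_spec.2
  let dip : G → ℤ := fun a => (exists_dip χ (L a)).choose
  have hdip : ∀ a, ∀ k : ℕ, -(dip a) ≤ zv χ ((L a).take k).prod :=
    fun a => (exists_dip χ (L a)).choose_spec.2
  obtain ⟨c, hc0, hc⟩ := finset_bound (A ∪ A.image (·⁻¹)) dip
  refine ⟨c, hc0, fun n hn v hv => ?_⟩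
  -- single-letter step
  have single : ∀ a : G, (a ∈ A ∨ a⁻¹ ∈ A) → ∀ v : G, c ≤ zv χ v →
      Relation.ReflTransGen (RelZ χ S) v (v * a) := by
    intro a ha v hv
    have hdc : dip a ≤ c := by
      refine hc a ?_
      rcases ha with h | h
      · exact Finset.mem_union_left _ h
      · exact Finset.mem_union_right _ (Finset.mem_image.mpr ⟨a⁻¹, h, by simp⟩)
    have := spell χ S (L a) (hLmem a) v (fun k => ?_)
    · rwa [hLprod a] at this
    · have h1 := hdip a k
      rw [zv_mul]
      linarith
  -- letters in kernel have value 0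
  have hker0 : ∀ a : G, (a ∈ A ∨ a⁻¹ ∈ A) → zv χ a = 0 := by
    intro a ha
    have hsub : (A : Set G) ⊆ χ.ker := by
      rw [← hA]; exact Subgroup.subset_closure
    rcases ha with h | h
    · exact zv_eq_zero_of_mem_ker (hsub h)
    · have := zv_eq_zero_of_mem_ker (hsub h)
      rw [zv_inv] at this
      linarith
  -- decompose n into letters from A ∪ A⁻¹
  have hn' : n ∈ Submonoid.closure ((A : Set G) ∪ (A : Set G)⁻¹) := by
    rw [← Subgroup.closure_toSubmonoid, hA]
    exact hn
  obtain ⟨M, hM, hMp⟩ := Submonoid.exists_list_of_mem_closure hn'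
  have hM' : ∀ a ∈ M, a ∈ A ∨ a⁻¹ ∈ A := by
    intro a ha
    rcases hM a ha with h | h
    · exact Or.inl h
    · exact Or.inr (by simpa using h)
  subst hMp
  clear hn hn' hM
  induction M generalizing v with
  | nil => simpa using Relation.ReflTransGen.refl
  | cons a M ih =>
    have ha := hM' a (by simp)
    have h1 : Relation.ReflTransGen (RelZ χ S) v (v * a) := single a ha v hv
    have hva : c ≤ zv χ (v * a) := by
      rw [zv_mul, hker0 a ha]
      linarith
    have h2 := ih (v * a) hva (fun b hb => hM' b (by simp [hb]))
    have : (v * a) * M.prod = v * (a :: M).prod := by simp [mul_assoc]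
    rw [this] at h2
    exact h1.trans h2


lemma one_connected (χ : G →* Multiplicative ℤ) (hχ : Function.Surjective χ)
    (hker : χ.ker.FG) (S : Finset G) (hS : Subgroup.closure (S : Set G) = ⊤)
    (x : G) (hx : 0 ≤ zv χ x) :
    Relation.ReflTransGen (RelZ χ S) 1 x := by
  classical
  obtain ⟨Aset, hA, hfin⟩ := (Subgroup.fg_iff _).mp hker
  obtain ⟨c_A, hcA0, hcA⟩ := ker_path χ S hS hfin.toFinset (by rwa [Set.Finite.coe_toFinset])
  -- a generator with nonzero value
  have hex : ∃ s ∈ S, zv χ s ≠ 0 := by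
    by_contra h
    push_neg at h
    have hsub : (S : Set G) ⊆ (χ.ker : Set G) := fun s hs => zv_mem_ker (h s hs)
    have htop : (⊤ : Subgroup G) ≤ χ.ker := hS ▸ (Subgroup.closure_le _).mpr hsub
    obtain ⟨t, ht⟩ := hχ (Multiplicative.ofAdd 1)
    have h0 : zv χ t = 0 := zv_eq_zero_of_mem_ker (htop trivial)
    rw [zv, ht] at h0
    simp at h0
  obtain ⟨s₀, hs₀S, hs₀⟩ := hex
  set g₁ : G := if 0 < zv χ s₀ then s₀ else s₀⁻¹ with hg₁
  have hp : 0 < zv χ g₁ := by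
    by_cases h : 0 < zv χ s₀
    · rwa [hg₁, if_pos h]
    · rw [hg₁, if_neg h, zv_inv]
      omega
  have hstep : ∀ a : G, ∃ s ∈ S, a * g₁ = a * s ∨ a = (a * g₁) * s := by
    intro a
    by_cases h : 0 < zv χ s₀
    · exact ⟨s₀, hs₀S, Or.inl (by rw [hg₁, if_pos h])⟩
    · exact ⟨s₀, hs₀S, Or.inr (by rw [hg₁, if_neg h]; group)⟩
  set p : ℤ := zv χ g₁ with hpdef
  set m : ℤ := zv χ x with hmdef
  set j : ℤ := m % p with hjdef
  set q : ℤ := m / p with hqdef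
  have hj0 : 0 ≤ j := Int.emod_nonneg m (ne_of_gt hp)
  have hq0 : 0 ≤ q := Int.ediv_nonneg hx (le_of_lt hp)
  have hmeq : p * q + j = m := Int.mul_ediv_add_emod m p
  -- representative of the residue
  obtain ⟨r, hr⟩ := hχ (Multiplicative.ofAdd j)
  have hrz : zv χ r = j := by rw [zv, hr]; simp
  obtain ⟨Lr, hLr, hLrp⟩ := exists_word hS r
  obtain ⟨c_r, hcr0, hcr⟩ := exists_dip χ Lr
  -- the height
  set K : ℕ := (max (max c_A c_r) q).toNat with hKdef
  set kz : ℤ := (K : ℤ) with hkzdef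
  have hkz : kz = max (max c_A c_r) q := by
    rw [hkzdef, hKdef, Int.toNat_of_nonneg]
    exact le_trans hcA0 (le_trans (le_max_left _ _) (le_max_left _ _))
  have hkz0 : 0 ≤ kz := by rw [hkz]; exact le_trans hcA0 (le_trans (le_max_left _ _) (le_max_left _ _))
  have hkzcA : c_A ≤ kz := by rw [hkz]; exact le_trans (le_max_left _ _) (le_max_left _ _)
  have hkzcr : c_r ≤ kz := by rw [hkz]; exact le_trans (le_max_right _ _) (le_max_left _ _)
  have hkzq : q ≤ kz := by rw [hkz]; exact le_max_right _ _
  have hp1 : 1 ≤ p := hp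
  have hkzp : kz ≤ kz * p := le_mul_of_one_le_right hkz0 hp1
  have lev1 : zv χ (g₁ ^ K) = kz * p := by rw [zv_pow]
  -- step 1 : climb to g₁ ^ K
  have h1 : Relation.ReflTransGen (RelZ χ S) 1 (g₁ ^ K) := by
    have := climb χ S hp hstep 1 (by simp) K
    simpa using this
  -- step 2 : spell r
  have h2 : Relation.ReflTransGen (RelZ χ S) (g₁ ^ K) (g₁ ^ K * r) := by
    have := spell χ S Lr hLr (g₁ ^ K) (fun k => ?_)
    · rwa [hLrp] at this
    · rw [zv_mul, lev1]
      have := hcr k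
      linarith
  -- step 3 : multiply by the kernel element
  set n'' : G := x * g₁ ^ (kz - q) * r⁻¹ * g₁ ^ (-kz) with hn''def
  set n₃ : G := (g₁ ^ K * r)⁻¹ * n'' * (g₁ ^ K * r) with hn₃def
  have hn₃ker : n₃ ∈ χ.ker := by
    apply zv_mem_ker
    have e1 : zv χ n₃ = zv χ n'' := by
      rw [hn₃def, zv_mul, zv_mul, zv_inv]
      ring
    rw [e1, hn''def, zv_mul, zv_mul, zv_mul, zv_zpow, zv_zpow, zv_inv, hrz]
    rw [← hmdef, ← hpdef]
    ring_nf
    nlinarith [hmeq]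
  have h3 : Relation.ReflTransGen (RelZ χ S) (g₁ ^ K * r) ((g₁ ^ K * r) * n₃) := by
    apply hcA n₃ hn₃ker
    rw [zv_mul, lev1, hrz]
    linarith
  have hend : (g₁ ^ K * r) * n₃ = x * g₁ ^ (kz - q) := by
    rw [hn₃def, hn''def, hkzdef]
    group
  rw [hend] at h3
  -- step 4 : descend from x * g₁ ^ (kz - q) to x
  have hE : g₁ ^ ((kz - q).toNat) = g₁ ^ (kz - q) := by
    rw [← zpow_natCast, Int.toNat_of_nonneg (by linarith)]
  have h4 : Relation.ReflTransGen (RelZ χ S) x (x * g₁ ^ (kz - q)) := by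
    have := climb χ S hp hstep x hx ((kz - q).toNat)
    rwa [hE] at this
  have h4' := (haveI : Std.Symm (RelZ χ S) := ⟨fun a b h => relZ_symm h⟩; Relation.ReflTransGen.symmetric.symm _ _ h4)
  exact ((h1.trans h2).trans h3).trans h4'

/-- positive direction : finitely generated kernel implies membership in Σ¹ -/
lemma inSigma1_of_kerFG (χ : G →* Multiplicative ℤ) (hχ : Function.Surjective χ)
    (hker : χ.ker.FG) :
    InSigma1 (fun g => ((Multiplicative.toAdd (χ g) : ℤ) : ℝ)) := by
  refine ⟨fun a b => ?_, ?_, fun S hS x y hx hy => ?_⟩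
  · show ((zv χ (a * b) : ℤ) : ℝ) = ((zv χ a : ℤ) : ℝ) + ((zv χ b : ℤ) : ℝ)
    rw [zv_mul]
    push_cast
    ring
  · intro h
    obtain ⟨t, ht⟩ := hχ (Multiplicative.ofAdd 1)
    have := congrFun h t
    rw [ht] at this
    simp at this
  · have hx2 : (0:ℝ) ≤ ((zv χ x : ℤ) : ℝ) := hx
    have hy2 : (0:ℝ) ≤ ((zv χ y : ℤ) : ℝ) := hy
    have hx' : 0 ≤ zv χ x := by exact_mod_cast hx2
    have hy' : 0 ≤ zv χ y := by exact_mod_cast hy2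
    have p1 := one_connected χ hχ hker S hS x hx'
    have p2 := one_connected χ hχ hker S hS y hy'
    have p1' := (haveI : Std.Symm (RelZ χ S) := ⟨fun a b h => relZ_symm h⟩; Relation.ReflTransGen.symmetric.symm _ _ p1)
    have := p1'.trans p2
    refine Relation.ReflTransGen.mono ?_ _ _ this
    rintro a b ⟨h1, h2, h3⟩
    exact ⟨Int.cast_nonneg_iff.mpr h1, Int.cast_nonneg_iff.mpr h2, h3⟩


/-- the basic kernel elements -/
def E (χ : G →* Multiplicative ℤ) (t : G) (x : G) : G := x * t ^ (-(zv χ x))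

lemma zv_E (χ : G →* Multiplicative ℤ) {t : G} (ht : zv χ t = 1) (x : G) :
    zv χ (E χ t x) = 0 := by
  simp [E, ht]

/-- from connectivity, the kernel is contained in the subgroup generated by
the positively-conjugated basic elements -/
lemma ker_le_closure_D (χ : G →* Multiplicative ℤ) {t : G} (ht : zv χ t = 1) (S : Finset G)
    (conn : ∀ n ∈ χ.ker, Relation.ReflTransGen (RelZ χ S) 1 n) :
    ∀ n ∈ χ.ker, n ∈ Subgroup.closure
      {g : G | ∃ x ∈ S, ∃ h : ℕ, g = t ^ (h:ℤ) * E χ t x * t ^ (-(h:ℤ))} := by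
  intro n hn
  set D : Set G := {g : G | ∃ x ∈ S, ∃ h : ℕ, g = t ^ (h:ℤ) * E χ t x * t ^ (-(h:ℤ))} with hD
  have key : ∀ v : G, Relation.ReflTransGen (RelZ χ S) 1 v →
      v * t ^ (-(zv χ v)) ∈ Subgroup.closure D := by
    intro v hv
    induction hv with
    | refl => simpa using Subgroup.one_mem _
    | @tail b c hab step ih =>
      obtain ⟨hb, hc, s, hsS, hcase⟩ := step
      rcases hcase with rfl | hbc
      · -- c = b * s
        have hgen : t ^ (zv χ b) * E χ t s * t ^ (-(zv χ b)) ∈ D := by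
          refine ⟨s, hsS, (zv χ b).toNat, ?_⟩
          rw [Int.toNat_of_nonneg hb]
        have heq : (b * s) * t ^ (-(zv χ (b * s))) =
            (b * t ^ (-(zv χ b))) * (t ^ (zv χ b) * E χ t s * t ^ (-(zv χ b))) := by
          rw [zv_mul, E]
          group
        rw [heq]
        exact Subgroup.mul_mem _ ih (Subgroup.subset_closure hgen)
      · -- b = c * s
        have hgen : t ^ (zv χ c) * E χ t s * t ^ (-(zv χ c)) ∈ D := by
          refine ⟨s, hsS, (zv χ c).toNat, ?_⟩
          rw [Int.toNat_of_nonneg hc]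
        have heq : c * t ^ (-(zv χ c)) =
            (b * t ^ (-(zv χ b))) * (t ^ (zv χ c) * E χ t s * t ^ (-(zv χ c)))⁻¹ := by
          rw [hbc, zv_mul, E]
          group
        rw [heq]
        exact Subgroup.mul_mem _ ih (Subgroup.inv_mem _ (Subgroup.subset_closure hgen))
  have := key n (conn n hn)
  rwa [zv_eq_zero_of_mem_ker hn, neg_zero, zpow_zero, mul_one] at this

/-- final algebraic step : the two closure descriptions force the kernel to be
finitely generated -/
lemma ker_fg_of_two (χ : G →* Multiplicative ℤ) {t : G} (ht : zv χ t = 1) (S : Finset G)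
    (hpos : ∀ n ∈ χ.ker, n ∈ Subgroup.closure
      {g : G | ∃ x ∈ S, ∃ h : ℕ, g = t ^ (h:ℤ) * E χ t x * t ^ (-(h:ℤ))})
    (hneg : ∀ n ∈ χ.ker, n ∈ Subgroup.closure
      {g : G | ∃ x ∈ S, ∃ h : ℕ, g = t ^ (-(h:ℤ)) * E χ t x * t ^ (h:ℤ)}) :
    χ.ker.FG := by
  classical
  set Dk : ℕ → Set G :=
    fun k => {g : G | ∃ x ∈ S, ∃ h : ℕ, h ≤ k ∧ g = t ^ (h:ℤ) * E χ t x * t ^ (-(h:ℤ))} with hDk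
  set P : ℕ → Subgroup G := fun k => Subgroup.closure (Dk k) with hP
  have hPmono : Monotone P := by
    intro k l hkl
    apply Subgroup.closure_mono
    rintro g ⟨x, hx, h, hh, rfl⟩
    exact ⟨x, hx, h, le_trans hh hkl, rfl⟩
  have hgenker : ∀ (a : ℤ) (x : G), t ^ a * E χ t x * t ^ (-a) ∈ χ.ker := by
    intro a x
    apply zv_mem_ker
    rw [zv_mul, zv_mul, zv_zpow, zv_zpow, zv_E χ ht, ht]
    ring
  have hPker : ∀ k, P k ≤ χ.ker := by
    intro k
    rw [hP]
    apply (Subgroup.closure_le _).mpr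
    rintro g ⟨x, hx, h, hh, rfl⟩
    exact hgenker _ _
  -- every kernel element is in some P k
  have hsup : ∀ g ∈ χ.ker, ∃ k, g ∈ P k := by
    intro g hg
    have h1 : g ∈ ⨆ k, P k := by
      have h2 : Subgroup.closure
          {g : G | ∃ x ∈ S, ∃ h : ℕ, g = t ^ (h:ℤ) * E χ t x * t ^ (-(h:ℤ))} ≤ ⨆ k, P k := by
        apply (Subgroup.closure_le _).mpr
        rintro g ⟨x, hx, h, rfl⟩
        have : t ^ (h:ℤ) * E χ t x * t ^ (-(h:ℤ)) ∈ P h :=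
          Subgroup.subset_closure ⟨x, hx, h, le_refl h, rfl⟩
        exact (le_iSup P h) this
      exact h2 (hpos g hg)
    exact (Subgroup.mem_iSup_of_directed hPmono.directed_le).mp h1
  -- uniform level for the conjugated generators
  have hconjgen : ∀ x : G, ∃ k, x ∈ S → t⁻¹ * E χ t x * t ∈ P k := by
    intro x
    by_cases hx : x ∈ S
    · have hker : t⁻¹ * E χ t x * t ∈ χ.ker := by
        have := hgenker (-1) x
        simpa using this
      obtain ⟨k, hk⟩ := hsup _ hker
      exact ⟨k, fun _ => hk⟩
    · exact ⟨0, fun h => absurd h hx⟩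
  choose κ hκ using hconjgen
  set k₀ : ℕ := S.sup κ with hk₀
  have hκk₀ : ∀ x ∈ S, t⁻¹ * E χ t x * t ∈ P k₀ := by
    intro x hx
    exact hPmono (Finset.le_sup hx) (hκ x hx)
  -- conjugation stability
  have hconj : ∀ g ∈ P k₀, t⁻¹ * g * t ∈ P k₀ := by
    intro g hg
    induction hg using Subgroup.closure_induction with
    | mem g hgD =>
      obtain ⟨x, hx, h, hh, rfl⟩ := hgD
      cases h with
      | zero =>
        have heq : t⁻¹ * (t ^ ((0:ℕ):ℤ) * E χ t x * t ^ (-((0:ℕ):ℤ))) * t = t⁻¹ * E χ t x * t := by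
          norm_num
        rw [heq]
        exact hκk₀ x hx
      | succ h' =>
        have heq : t⁻¹ * (t ^ ((h'+1:ℕ):ℤ) * E χ t x * t ^ (-((h'+1:ℕ):ℤ))) * t =
            t ^ ((h':ℕ):ℤ) * E χ t x * t ^ (-((h':ℕ):ℤ)) := by
          push_cast
          group
        rw [heq]
        exact Subgroup.subset_closure ⟨x, hx, h', by omega, rfl⟩
    | one =>
      have : t⁻¹ * 1 * t = 1 := by group
      rw [this]
      exact Subgroup.one_mem _
    | mul a b _ _ ha hb =>
      have : t⁻¹ * (a * b) * t = (t⁻¹ * a * t) * (t⁻¹ * b * t) := by group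
      rw [this]
      exact Subgroup.mul_mem _ ha hb
    | inv a _ ha =>
      have : t⁻¹ * a⁻¹ * t = (t⁻¹ * a * t)⁻¹ := by group
      rw [this]
      exact Subgroup.inv_mem _ ha
  -- all negative conjugates lie in P k₀
  have hiter : ∀ (jn : ℕ), ∀ x ∈ S, t ^ (-(jn:ℤ)) * E χ t x * t ^ (jn:ℤ) ∈ P k₀ := by
    intro jn
    induction jn with
    | zero =>
      intro x hx
      have heq : t ^ (-((0:ℕ):ℤ)) * E χ t x * t ^ ((0:ℕ):ℤ) =
          t ^ ((0:ℕ):ℤ) * E χ t x * t ^ (-((0:ℕ):ℤ)) := by norm_num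
      rw [heq]
      exact Subgroup.subset_closure ⟨x, hx, 0, le_refl 0 |>.trans (Nat.zero_le k₀), rfl⟩
    | succ jn ih =>
      intro x hx
      have heq : t ^ (-((jn+1:ℕ):ℤ)) * E χ t x * t ^ ((jn+1:ℕ):ℤ) =
          t⁻¹ * (t ^ (-(jn:ℤ)) * E χ t x * t ^ ((jn:ℕ):ℤ)) * t := by
        push_cast
        group
      rw [heq]
      exact hconj _ (ih x hx)
  -- conclude : the kernel equals P k₀
  have hker_eq : χ.ker = P k₀ := by
    apply le_antisymm
    · intro n hn
      have h1 := hneg n hn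
      have h2 : Subgroup.closure
          {g : G | ∃ x ∈ S, ∃ h : ℕ, g = t ^ (-(h:ℤ)) * E χ t x * t ^ (h:ℤ)} ≤ P k₀ := by
        apply (Subgroup.closure_le _).mpr
        rintro g ⟨x, hx, h, rfl⟩
        exact hiter h x hx
      exact h2 h1
    · exact hPker k₀
  rw [hker_eq]
  refine (Subgroup.fg_iff _).mpr ⟨Dk k₀, rfl, ?_⟩
  have himg : Dk k₀ ⊆ (fun q : G × ℕ => t ^ ((q.2:ℕ):ℤ) * E χ t q.1 * t ^ (-((q.2:ℕ):ℤ))) ''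
      ((S : Set G) ×ˢ (Set.Iic k₀)) := by
    rintro g ⟨x, hx, h, hh, rfl⟩
    exact ⟨(x, h), ⟨hx, hh⟩, rfl⟩
  exact Set.Finite.subset (Set.Finite.image _ ((S.finite_toSet).prod (Set.finite_Iic k₀))) himg


lemma zv_hominv (χ : G →* Multiplicative ℤ) (x : G) : zv χ⁻¹ x = - zv χ x := by
  simp [zv, MonoidHom.inv_apply]

lemma ker_hominv (χ : G →* Multiplicative ℤ) : (χ⁻¹).ker = χ.ker := by
  ext g
  simp [MonoidHom.mem_ker, MonoidHom.inv_apply, inv_eq_one]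

lemma surj_hominv {χ : G →* Multiplicative ℤ} (hχ : Function.Surjective χ) :
    Function.Surjective (χ⁻¹ : G →* Multiplicative ℤ) := by
  intro z
  obtain ⟨g, hg⟩ := hχ z⁻¹
  exact ⟨g, by simp [MonoidHom.inv_apply, hg]⟩

end Stmt19

/-- BNS fibration criterion: for a finitely generated group `G` and an
epimorphism `χ : G → ℤ`, the kernel of `χ` is finitely generated iff both `[χ]` and
`[−χ]` lie in `Σ¹(G)`. -/


theorem stmt19 {G : Type*} [Group G] (hG : Group.FG G)
    (χ : G →* Multiplicative ℤ) (hχ : Function.Surjective χ) :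
    χ.ker.FG ↔
      (InSigma1 (fun g => ((Multiplicative.toAdd (χ g) : ℤ) : ℝ)) ∧
        InSigma1 (fun g => -((Multiplicative.toAdd (χ g) : ℤ) : ℝ))) := by
  classical
  open Stmt19 in
  constructor
  · intro hker
    constructor
    · exact inSigma1_of_kerFG χ hχ hker
    · have hker' : (χ⁻¹ : G →* Multiplicative ℤ).ker.FG := by
        rw [ker_hominv]; exact hker
      have h := inSigma1_of_kerFG (χ⁻¹ : G →* Multiplicative ℤ) (surj_hominv hχ) hker'
      have hfun : (fun g => ((Multiplicative.toAdd ((χ⁻¹ : G →* Multiplicative ℤ) g) : ℤ) : ℝ)) =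
          (fun g => -((Multiplicative.toAdd (χ g) : ℤ) : ℝ)) := by
        funext g
        rw [MonoidHom.inv_apply]
        push_cast [toAdd_inv]
        ring
      rwa [hfun] at h
  · rintro ⟨hpos, hneg⟩
    obtain ⟨Sset, hSc, hSfin⟩ := Group.fg_iff.mp hG
    set S : Finset G := hSfin.toFinset with hSdef
    have hS : Subgroup.closure (S : Set G) = ⊤ := by
      rw [hSdef, Set.Finite.coe_toFinset]
      exact hSc
    obtain ⟨t, ht'⟩ := hχ (Multiplicative.ofAdd 1)
    have ht : zv χ t = 1 := by rw [zv, ht']; simp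
    -- positive connectivity in integer form
    have connp : ∀ n ∈ χ.ker, Relation.ReflTransGen (RelZ χ S) 1 n := by
      intro n hn
      have h1 : (0:ℝ) ≤ ((Multiplicative.toAdd (χ (1:G)) : ℤ) : ℝ) := by simp
      have h2 : (0:ℝ) ≤ ((Multiplicative.toAdd (χ n) : ℤ) : ℝ) := by
        rw [MonoidHom.mem_ker.mp hn]; simp
      have := hpos.2.2 S hS 1 n h1 h2
      refine Relation.ReflTransGen.mono ?_ _ _ this
      rintro a b ⟨ha, hb, hc⟩
      exact ⟨Int.cast_nonneg_iff.mp ha, Int.cast_nonneg_iff.mp hb, hc⟩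
    have hD1 := ker_le_closure_D χ ht S connp
    -- negative side
    have ht2 : zv (χ⁻¹ : G →* Multiplicative ℤ) t⁻¹ = 1 := by
      rw [zv_hominv, zv_inv, ht]; ring
    have connm : ∀ n ∈ (χ⁻¹ : G →* Multiplicative ℤ).ker,
        Relation.ReflTransGen (RelZ (χ⁻¹ : G →* Multiplicative ℤ) S) 1 n := by
      intro n hn
      have h1 : (0:ℝ) ≤ -((Multiplicative.toAdd (χ (1:G)) : ℤ) : ℝ) := by simp
      have h2 : (0:ℝ) ≤ -((Multiplicative.toAdd (χ n) : ℤ) : ℝ) := by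
        rw [ker_hominv] at hn
        rw [MonoidHom.mem_ker.mp hn]; simp
      have := hneg.2.2 S hS 1 n h1 h2
      refine Relation.ReflTransGen.mono ?_ _ _ this
      rintro a b ⟨ha, hb, hc⟩
      refine ⟨?_, ?_, hc⟩
      · rw [zv_hominv]
        have ha' : (0:ℝ) ≤ -((Multiplicative.toAdd (χ a) : ℤ) : ℝ) := ha
        have h3 : (Multiplicative.toAdd (χ a) : ℤ) ≤ 0 := by
          have : ((Multiplicative.toAdd (χ a) : ℤ) : ℝ) ≤ 0 := by linarith
          exact_mod_cast this
        show (0:ℤ) ≤ -(Multiplicative.toAdd (χ a) : ℤ)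
        omega
      · rw [zv_hominv]
        have hb' : (0:ℝ) ≤ -((Multiplicative.toAdd (χ b) : ℤ) : ℝ) := hb
        have h3 : (Multiplicative.toAdd (χ b) : ℤ) ≤ 0 := by
          have : ((Multiplicative.toAdd (χ b) : ℤ) : ℝ) ≤ 0 := by linarith
          exact_mod_cast this
        show (0:ℤ) ≤ -(Multiplicative.toAdd (χ b) : ℤ)
        omega
    have hD2 := ker_le_closure_D (χ⁻¹ : G →* Multiplicative ℤ) ht2 S connm
    -- convert the negative description
    have hsets : {g : G | ∃ x ∈ S, ∃ h : ℕ,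
          g = t⁻¹ ^ (h:ℤ) * Stmt19.E (χ⁻¹ : G →* Multiplicative ℤ) t⁻¹ x * t⁻¹ ^ (-(h:ℤ))} =
        {g : G | ∃ x ∈ S, ∃ h : ℕ, g = t ^ (-(h:ℤ)) * Stmt19.E χ t x * t ^ (h:ℤ)} := by
      have hE : ∀ x : G, Stmt19.E (χ⁻¹ : G →* Multiplicative ℤ) t⁻¹ x = Stmt19.E χ t x := by
        intro x
        rw [Stmt19.E, Stmt19.E, zv_hominv]
        group
      ext g
      constructor
      · rintro ⟨x, hx, h, rfl⟩
        refine ⟨x, hx, h, ?_⟩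
        rw [hE]
        group
      · rintro ⟨x, hx, h, rfl⟩
        refine ⟨x, hx, h, ?_⟩
        rw [hE]
        group
    have hD2' : ∀ n ∈ χ.ker, n ∈ Subgroup.closure
        {g : G | ∃ x ∈ S, ∃ h : ℕ, g = t ^ (-(h:ℤ)) * Stmt19.E χ t x * t ^ (h:ℤ)} := by
      intro n hn
      rw [← hsets]
      exact hD2 n (by rwa [ker_hominv])
    exact ker_fg_of_two χ ht S hD1 hD2'
end
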